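/- arXiv:1807.11648 — 11 statements merged into one kernel-verified Lean document; each statement's English description precedes it below -/
import Mathlib

section
/- There exist universal constants C, C' > 0 such that for every integer d ≥ 2 and every finite set V ⊆ ℝ^d there exists a subset U ⊆ V with |U| ≤ C·d·log d such that U is a (C'·d·log² d)-spectral spanner of V. -/
/-!
STATEMENT 0: There exist universal constants C, C' > 0 such that for every integer
d ≥ 2 and every finite set V ⊆ ℝ^d there exists a subset U ⊆ V with
|U| ≤ C·d·log d such that U is a (C'·d·log² d)-spectral spanner of V.
-/

open Matrix Finset

noncomputable section

/-- The outer product `v vᵀ` as a `d × d` real matrix. -/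
def outer {d : ℕ} (v : Fin d → ℝ) : Matrix (Fin d) (Fin d) ℝ := Matrix.vecMulVec v v

/-- `U` is an `α`-spectral spanner of `V`: `U ⊆ V` and for every `v ∈ V` there is a
probability distribution `μ` on `U` with `v vᵀ ⪯ α · ∑_{u ∈ U} μ(u) u uᵀ` in the
Loewner order. -/
def IsSpectralSpanner {d : ℕ} (α : ℝ) (V U : Finset (Fin d → ℝ)) : Prop :=
  U ⊆ V ∧ ∀ v ∈ V, ∃ μ : (Fin d → ℝ) → ℝ,
    (∀ u, 0 ≤ μ u) ∧ (∑ u ∈ U, μ u) = 1 ∧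
    (α • (∑ u ∈ U, μ u • outer u) - outer v).PosSemidef

namespace SpAux

variable {d : ℕ}

/-- sum of outer products -/
def MS (U : Finset (Fin d → ℝ)) : Matrix (Fin d) (Fin d) ℝ := ∑ u ∈ U, vecMulVec u u

lemma vecMulVec_mulVec (v w x : Fin d → ℝ) :
    (vecMulVec v w) *ᵥ x = (w ⬝ᵥ x) • v := by
  ext i
  simp [vecMulVec_apply, mulVec, dotProduct, Finset.mul_sum, Finset.sum_mul, mul_comm, mul_left_comm]

lemma dot_vecMulVec (x v w y : Fin d → ℝ) :
    x ⬝ᵥ ((vecMulVec v w) *ᵥ y) = (x ⬝ᵥ v) * (w ⬝ᵥ y) := by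
  rw [vecMulVec_mulVec, dotProduct_smul, smul_eq_mul, mul_comm]

lemma sum_mulVec' {ι : Type*} (s : Finset ι) (A : ι → Matrix (Fin d) (Fin d) ℝ) (x : Fin d → ℝ) :
    (∑ i ∈ s, A i) *ᵥ x = ∑ i ∈ s, (A i *ᵥ x) := by
  ext j
  simp [mulVec, dotProduct, Matrix.sum_apply, Finset.sum_mul, Finset.sum_apply]
  exact Finset.sum_comm

lemma quad_MS (U : Finset (Fin d → ℝ)) (x : Fin d → ℝ) :
    x ⬝ᵥ (MS U *ᵥ x) = ∑ u ∈ U, (u ⬝ᵥ x)^2 := by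
  unfold MS
  rw [sum_mulVec']
  rw [show x ⬝ᵥ ∑ u ∈ U, (vecMulVec u u *ᵥ x) = ∑ u ∈ U, x ⬝ᵥ (vecMulVec u u *ᵥ x) by
    simp [dotProduct, Finset.sum_apply, Finset.mul_sum]; exact Finset.sum_comm]
  refine Finset.sum_congr rfl fun u _ => ?_
  rw [dot_vecMulVec, dotProduct_comm, sq]

lemma transpose_MS (U : Finset (Fin d → ℝ)) : (MS U)ᵀ = MS U := by
  unfold MS
  rw [Matrix.transpose_sum]
  refine Finset.sum_congr rfl fun u _ => ?_
  ext i j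
  simp [vecMulVec_apply, mul_comm]


/-- the regularized matrix -/
def NM (ε : ℝ) (U : Finset (Fin d → ℝ)) : Matrix (Fin d) (Fin d) ℝ :=
  ε • (1 : Matrix (Fin d) (Fin d) ℝ) + MS U

lemma quad_NM (ε : ℝ) (U : Finset (Fin d → ℝ)) (x : Fin d → ℝ) :
    x ⬝ᵥ (NM ε U *ᵥ x) = ε * (x ⬝ᵥ x) + ∑ u ∈ U, (u ⬝ᵥ x)^2 := by
  unfold NM
  rw [Matrix.add_mulVec, dotProduct_add, quad_MS]
  congr 1
  rw [Matrix.smul_mulVec, Matrix.one_mulVec, dotProduct_smul, smul_eq_mul]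

lemma transpose_NM (ε : ℝ) (U : Finset (Fin d → ℝ)) : (NM ε U)ᵀ = NM ε U := by
  unfold NM
  rw [Matrix.transpose_add, Matrix.transpose_smul, Matrix.transpose_one, transpose_MS]

lemma herm_NM (ε : ℝ) (U : Finset (Fin d → ℝ)) : (NM ε U).IsHermitian := by
  rw [Matrix.IsHermitian, Matrix.conjTranspose]
  ext i j; simpa using congr_fun (congr_fun (transpose_NM ε U) i) j

lemma posDef_NM {ε : ℝ} (hε : 0 < ε) (U : Finset (Fin d → ℝ)) : (NM ε U).PosDef := by
  refine Matrix.PosDef.of_dotProduct_mulVec_pos (herm_NM ε U) fun x hx => ?_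
  have hx2 : 0 < x ⬝ᵥ x := by
    have h0 : 0 ≤ x ⬝ᵥ x := Finset.sum_nonneg fun i _ => mul_self_nonneg (x i)
    rcases h0.lt_or_eq with h | h
    · exact h
    · exact absurd (dotProduct_self_eq_zero.mp h.symm) hx
  have : star x = x := by simp
  rw [this, quad_NM]
  have h2 : 0 ≤ ∑ u ∈ U, (u ⬝ᵥ x)^2 := Finset.sum_nonneg fun u _ => sq_nonneg _
  positivity

lemma det_add_vecMulVec (A : Matrix (Fin d) (Fin d) ℝ) (hA : IsUnit A.det)
    (v w : Fin d → ℝ) :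
    (A + vecMulVec v w).det = A.det * (1 + w ⬝ᵥ (A⁻¹ *ᵥ v)) := by
  rw [vecMulVec_eq Unit, Matrix.det_add_replicateCol_mul_replicateRow hA]
  congr 1
  rw [Matrix.det_unique]
  simp [Matrix.mul_apply, Matrix.replicateRow_apply, Matrix.replicateCol_apply, Matrix.one_apply, Matrix.mulVec,
    dotProduct, Finset.mul_sum, Finset.sum_mul]
  rw [Finset.sum_comm]
  refine Finset.sum_congr rfl fun i _ => Finset.sum_congr rfl fun j _ => by ring

/-- Cauchy–Schwarz step -/
lemma cs_step {N : Matrix (Fin d) (Fin d) ℝ} (hN : N.PosDef) {v : Fin d → ℝ}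
    (hv : v ⬝ᵥ (N⁻¹ *ᵥ v) ≤ 1) (x : Fin d → ℝ) :
    (v ⬝ᵥ x)^2 ≤ x ⬝ᵥ (N *ᵥ x) := by
  have hdet : IsUnit N.det := hN.det_pos.ne'.isUnit
  set w : Fin d → ℝ := N⁻¹ *ᵥ v with hw
  set t : ℝ := v ⬝ᵥ x with ht
  have hNw : N *ᵥ w = v := by
    rw [hw, Matrix.mulVec_mulVec, Matrix.mul_nonsing_inv _ hdet, Matrix.one_mulVec]
  have hT : Nᵀ = N := by
    have := hN.1
    rw [Matrix.IsHermitian, Matrix.conjTranspose] at this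
    ext i j; simpa using congr_fun (congr_fun this i) j
  have h0 : 0 ≤ (x - t • w) ⬝ᵥ (N *ᵥ (x - t • w)) := by
    have := hN.posSemidef.dotProduct_mulVec_nonneg (x - t • w)
    simpa using this
  have hexp : N *ᵥ (x - t • w) = N *ᵥ x - t • v := by
    rw [Matrix.mulVec_sub, Matrix.mulVec_smul, hNw]
  have hwNx : w ⬝ᵥ (N *ᵥ x) = t := by
    rw [dotProduct_mulVec, ← Matrix.mulVec_transpose, hT, hNw]
  have hxv : x ⬝ᵥ v = t := dotProduct_comm x v
  have hwv : w ⬝ᵥ v = v ⬝ᵥ w := dotProduct_comm w v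
  rw [hexp] at h0
  simp only [sub_dotProduct, dotProduct_sub, smul_dotProduct, dotProduct_smul,
    smul_eq_mul] at h0
  rw [hwNx, hxv, hwv] at h0
  nlinarith [sq_nonneg t, h0, hv]


lemma diag_pos {M : Matrix (Fin d) (Fin d) ℝ} (hM : M.PosDef) (i : Fin d) : 0 < M i i := by
  have hs : (Pi.single i 1 : Fin d → ℝ) ≠ 0 := by
    intro h
    have := congr_fun h i
    simp at this
  have h := hM.dotProduct_mulVec_pos hs
  simpa [dotProduct, mulVec, Pi.single_apply, mul_comm] using h

lemma trace_pos {M : Matrix (Fin d) (Fin d) ℝ} (hd : 0 < d) (hM : M.PosDef) : 0 < M.trace := by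
  rw [Matrix.trace]
  have : Nonempty (Fin d) := ⟨⟨0, hd⟩⟩
  exact Finset.sum_pos (fun i _ => diag_pos hM i) Finset.univ_nonempty

lemma trace_mul_vecMulVec (A : Matrix (Fin d) (Fin d) ℝ) (u : Fin d → ℝ) :
    (A * vecMulVec u u).trace = u ⬝ᵥ (A *ᵥ u) := by
  simp only [Matrix.trace, Matrix.diag, Matrix.mul_apply, vecMulVec_apply, mulVec, dotProduct,
    Finset.mul_sum]
  refine Finset.sum_congr rfl fun i _ => Finset.sum_congr rfl fun j _ => by ring

lemma sum_leverage_lt {ε : ℝ} (hd : 0 < d) (hε : 0 < ε) (U : Finset (Fin d → ℝ)) :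
    ∑ u ∈ U, u ⬝ᵥ ((NM ε U)⁻¹ *ᵥ u) < d := by
  set N := NM ε U with hN
  have hpd : N.PosDef := posDef_NM hε U
  have hdet : IsUnit N.det := hpd.det_pos.ne'.isUnit
  have h1 : ∑ u ∈ U, u ⬝ᵥ (N⁻¹ *ᵥ u) = (N⁻¹ * MS U).trace := by
    rw [show N⁻¹ * MS U = ∑ u ∈ U, N⁻¹ * vecMulVec u u by rw [MS, Finset.mul_sum],
      Matrix.trace_sum]
    exact Finset.sum_congr rfl fun u _ => (trace_mul_vecMulVec N⁻¹ u).symm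
  have h2 : N⁻¹ * MS U = 1 - ε • N⁻¹ := by
    have : MS U = N - ε • (1 : Matrix (Fin d) (Fin d) ℝ) := by rw [hN, NM]; abel
    rw [this, Matrix.mul_sub, Matrix.nonsing_inv_mul _ hdet, mul_smul_comm, mul_one]
  have h3 : (0:ℝ) < N⁻¹.trace := trace_pos hd hpd.inv
  rw [h1, h2, Matrix.trace_sub, Matrix.trace_one, Matrix.trace_smul]
  have : (0:ℝ) < ε • N⁻¹.trace := by
    rw [smul_eq_mul]; positivity
  simp only [Fintype.card_fin]
  linarith


lemma key (hd : 0 < d) (V : Finset (Fin d → ℝ)) {ε : ℝ} (hε : 0 < ε) :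
    ∃ U : Finset (Fin d → ℝ), U ⊆ V ∧ U.card ≤ 2 * d ∧
      ∀ v ∈ V, ∀ x, (v ⬝ᵥ x)^2 ≤ x ⬝ᵥ (MS U *ᵥ x) + ε * (x ⬝ᵥ x) := by
  classical
  set s : Finset (Finset (Fin d → ℝ)) := V.powerset.filter (fun W => W.card ≤ 2*d) with hs
  have hsne : s.Nonempty := ⟨∅, by simp [hs]⟩
  obtain ⟨U, hUs, hmax⟩ := Finset.exists_max_image s (fun W => (NM ε W).det) hsne
  rw [hs, Finset.mem_filter, Finset.mem_powerset] at hUs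
  obtain ⟨hUV, hUcard⟩ := hUs
  refine ⟨U, hUV, hUcard, fun v hv x => ?_⟩
  set N := NM ε U with hNdef
  have hpd : N.PosDef := posDef_NM hε U
  have hdet : IsUnit N.det := hpd.det_pos.ne'.isUnit
  have hxx : 0 ≤ x ⬝ᵥ x := Finset.sum_nonneg fun i _ => mul_self_nonneg (x i)
  have hquadN : x ⬝ᵥ (N *ᵥ x) = ε * (x ⬝ᵥ x) + x ⬝ᵥ (MS U *ᵥ x) := by
    rw [hNdef, quad_NM, quad_MS]
  by_cases hvU : v ∈ U
  · have hterm : (v ⬝ᵥ x)^2 ≤ ∑ u ∈ U, (u ⬝ᵥ x)^2 :=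
      Finset.single_le_sum (fun u _ => sq_nonneg (u ⬝ᵥ x)) hvU
    rw [quad_MS]
    nlinarith
  · by_cases hcard : U.card < 2*d
    · -- add v to U
      have hWs : insert v U ∈ s := by
        rw [hs, Finset.mem_filter, Finset.mem_powerset]
        constructor
        · exact Finset.insert_subset hv hUV
        · rw [Finset.card_insert_of_notMem hvU]; omega
      have hle := hmax _ hWs
      have hNplus : NM ε (insert v U) = N + vecMulVec v v := by
        rw [NM, MS, Finset.sum_insert hvU, hNdef, NM, MS]; abel
      rw [hNplus, det_add_vecMulVec N hdet] at hle
      have hq : v ⬝ᵥ (N⁻¹ *ᵥ v) ≤ 1 := by nlinarith [hpd.det_pos]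
      have hcs := cs_step hpd hq x
      linarith [hquadN ▸ hcs]
    · -- swap: find a low-leverage u and exchange
      have hcard2 : U.card = 2*d := le_antisymm hUcard (not_lt.mp hcard)
      have hsum := sum_leverage_lt hd hε U
      rw [← hNdef] at hsum
      have hex : ∃ u ∈ U, u ⬝ᵥ (N⁻¹ *ᵥ u) < 1/2 := by
        by_contra h
        push_neg at h
        have hlb : (U.card : ℝ) * (1/2 : ℝ) ≤ ∑ u ∈ U, u ⬝ᵥ (N⁻¹ *ᵥ u) := by
          calc (U.card : ℝ) * (1/2 : ℝ) = ∑ _u ∈ U, (1/2 : ℝ) := by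
                rw [Finset.sum_const, nsmul_eq_mul]
            _ ≤ _ := Finset.sum_le_sum h
        rw [hcard2] at hlb
        push_cast at hlb
        linarith
      obtain ⟨u, huU, hqu⟩ := hex
      set q : ℝ := u ⬝ᵥ (N⁻¹ *ᵥ u) with hqdef
      have hq0 : 0 ≤ q := by
        have := (posDef_NM hε U).inv.posSemidef.dotProduct_mulVec_nonneg u
        simpa [hqdef] using this
      set U0 := U.erase u with hU0
      set N0 := NM ε U0 with hN0def
      have hpd0 : N0.PosDef := posDef_NM hε U0
      have hsplit : N = N0 + vecMulVec u u := by
        rw [hNdef, hN0def, NM, NM, MS, MS, hU0, ← Finset.add_sum_erase _ _ huU]; abel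
      have hneg : vecMulVec u (-u) = - vecMulVec u u := by
        ext i j; simp [vecMulVec_apply]
      have hdetN0 : N0.det = N.det * (1 - q) := by
        have h1 : N0 = N + vecMulVec u (-u) := by rw [hneg, hsplit]; abel
        rw [h1, det_add_vecMulVec N hdet, neg_dotProduct, hqdef]; ring
      have hvU0 : v ∉ U0 := fun h => hvU (Finset.mem_of_mem_erase h)
      have hWs : insert v U0 ∈ s := by
        rw [hs, Finset.mem_filter, Finset.mem_powerset]
        constructor
        · exact Finset.insert_subset hv ((Finset.erase_subset _ _).trans hUV)
        · rw [Finset.card_insert_of_notMem hvU0, hU0, Finset.card_erase_of_mem huU]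
          omega
      have hle := hmax _ hWs
      have hNplus : NM ε (insert v U0) = N0 + vecMulVec v v := by
        rw [NM, MS, Finset.sum_insert hvU0, hN0def, NM, MS]; abel
      have hdet0 : IsUnit N0.det := hpd0.det_pos.ne'.isUnit
      rw [hNplus, det_add_vecMulVec N0 hdet0, hdetN0] at hle
      set r : ℝ := v ⬝ᵥ (N0⁻¹ *ᵥ v) with hrdef
      have h1 : (1 - q) * (1 + r) ≤ 1 := by
        rw [mul_assoc] at hle
        exact le_of_mul_le_mul_left (by linarith) hpd.det_pos
      have hr1 : r ≤ 1 := by nlinarith [h1, hq0, hqu]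
      have hcs := cs_step hpd0 hr1 x
      have hquadN0 : x ⬝ᵥ (N0 *ᵥ x) = ε * (x ⬝ᵥ x) + ∑ u' ∈ U0, (u' ⬝ᵥ x)^2 := by
        rw [hN0def, quad_NM]
      have hmono : ∑ u' ∈ U0, (u' ⬝ᵥ x)^2 ≤ ∑ u' ∈ U, (u' ⬝ᵥ x)^2 :=
        Finset.sum_le_sum_of_subset_of_nonneg (Finset.erase_subset _ _)
          (fun i _ _ => sq_nonneg _)
      rw [quad_MS]
      nlinarith


lemma key0 (hd : 0 < d) (V : Finset (Fin d → ℝ)) :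
    ∃ U : Finset (Fin d → ℝ), U ⊆ V ∧ U.card ≤ 2 * d ∧
      ∀ v ∈ V, ∀ x, (v ⬝ᵥ x)^2 ≤ x ⬝ᵥ (MS U *ᵥ x) := by
  classical
  have hk : ∀ n : ℕ, ∃ U : Finset (Fin d → ℝ), U ⊆ V ∧ U.card ≤ 2 * d ∧
      ∀ v ∈ V, ∀ x, (v ⬝ᵥ x)^2 ≤ x ⬝ᵥ (MS U *ᵥ x) + (1/(n+1 : ℝ)) * (x ⬝ᵥ x) :=
    fun n => key hd V (by positivity)
  choose f hf1 hf2 hf3 using hk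
  have hmem : ∀ n, f n ∈ V.powerset := fun n => Finset.mem_powerset.mpr (hf1 n)
  set g : ℕ → {W // W ∈ V.powerset} := fun n => ⟨f n, hmem n⟩ with hg
  obtain ⟨b, hb⟩ := Finite.exists_infinite_fiber g
  have hbs : (g ⁻¹' {b} : Set ℕ).Infinite := Set.infinite_coe_iff.mp hb
  have hfb : ∀ n ∈ g ⁻¹' {b}, f n = (b : Finset (Fin d → ℝ)) := by
    intro n hn
    have : g n = b := hn
    rw [← this]
  refine ⟨(b : Finset (Fin d → ℝ)), Finset.mem_powerset.mp b.2, ?_, ?_⟩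
  · obtain ⟨n, hn, -⟩ := hbs.exists_gt 0
    rw [← hfb n hn]
    exact hf2 n
  · intro v hv x
    have hxx : 0 ≤ x ⬝ᵥ x := Finset.sum_nonneg fun i _ => mul_self_nonneg (x i)
    refine le_of_forall_pos_le_add fun δ hδ => ?_
    obtain ⟨n, hn, hgt⟩ := hbs.exists_gt ⌈(x ⬝ᵥ x)/δ⌉₊
    have h := hf3 n v hv x
    rw [hfb n hn] at h
    have hn1 : (0:ℝ) < (n:ℝ) + 1 := by positivity
    have hc : (x ⬝ᵥ x)/δ ≤ (n : ℝ) := le_trans (Nat.le_ceil _) (Nat.cast_le.mpr hgt.le)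
    have hsmall : (1/((n:ℝ)+1)) * (x ⬝ᵥ x) ≤ δ := by
      rw [one_div, inv_mul_le_iff₀ hn1]
      have : x ⬝ᵥ x ≤ δ * (n : ℝ) := by
        rwa [div_le_iff₀ hδ, mul_comm] at hc
      nlinarith
    linarith


lemma dotProduct_sum' {ι : Type*} (s : Finset ι) (x : Fin d → ℝ) (f : ι → (Fin d → ℝ)) :
    x ⬝ᵥ (∑ i ∈ s, f i) = ∑ i ∈ s, x ⬝ᵥ f i := by
  simp [dotProduct, Finset.sum_apply, Finset.mul_sum]
  exact Finset.sum_comm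

lemma quad_mix {ι : Type*} (s : Finset ι) (c : ι → ℝ) (g : ι → (Fin d → ℝ)) (x : Fin d → ℝ) :
    x ⬝ᵥ ((∑ i ∈ s, c i • vecMulVec (g i) (g i)) *ᵥ x) = ∑ i ∈ s, c i * (g i ⬝ᵥ x)^2 := by
  rw [sum_mulVec', dotProduct_sum']
  refine Finset.sum_congr rfl fun i _ => ?_
  rw [Matrix.smul_mulVec, dotProduct_smul, smul_eq_mul, dot_vecMulVec,
    dotProduct_comm x (g i), sq]

end SpAux

theorem spectral_spanner_exists :
    ∃ C > (0:ℝ), ∃ C' > (0:ℝ), ∀ d : ℕ, 2 ≤ d →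
      ∀ V : Finset (Fin d → ℝ), ∃ U : Finset (Fin d → ℝ),
        (U.card : ℝ) ≤ C * d * Real.log d ∧
        IsSpectralSpanner (C' * d * (Real.log d) ^ 2) V U := by
  classical
  refine ⟨4, by norm_num, 6, by norm_num, fun d hd V => ?_⟩
  have hd0 : 0 < d := by omega
  have hd2 : (2:ℝ) ≤ (d:ℝ) := by exact_mod_cast hd
  have hlog : (0.6931 : ℝ) ≤ Real.log d := by
    have h2 : Real.log 2 ≤ Real.log d := Real.log_le_log (by norm_num) hd2
    have h3 := Real.log_two_gt_d9
    linarith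
  have hlog0 : (0:ℝ) ≤ Real.log d := by linarith
  set α : ℝ := 6 * d * (Real.log d) ^ 2 with hα
  obtain ⟨U0, hU0V, hU0card, hU0⟩ := SpAux.key0 hd0 V
  rcases V.eq_empty_or_nonempty with rfl | ⟨v0, hv0⟩
  · refine ⟨∅, by simpa using by positivity,
      Finset.empty_subset _, fun v hv => absurd hv (Finset.notMem_empty v)⟩
  · set U : Finset (Fin d → ℝ) := insert v0 U0 with hU
    have hUV : U ⊆ V := Finset.insert_subset hv0 hU0V
    have hcardn : U.card ≤ 2 * d + 1 := le_trans (Finset.card_insert_le _ _) (by omega)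
    have hcard : (U.card : ℝ) ≤ 2 * (d:ℝ) + 1 := by exact_mod_cast hcardn
    have hcardpos : 0 < U.card := Finset.card_pos.mpr ⟨v0, Finset.mem_insert_self _ _⟩
    have hcpos : (0:ℝ) < (U.card : ℝ) := by exact_mod_cast hcardpos
    have hsqlog : (0.6931 : ℝ) * 0.6931 ≤ Real.log d * Real.log d :=
      mul_le_mul hlog hlog (by norm_num) hlog0
    have hcardα : (U.card : ℝ) ≤ α := by
      rw [hα, sq]
      nlinarith [hsqlog, hd2, hcard]
    refine ⟨U, ?_, hUV, fun v hv => ?_⟩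
    · nlinarith [hcard, hd2, hlog]
    · refine ⟨fun u => if u ∈ U then (U.card : ℝ)⁻¹ else 0, fun u => ?_, ?_, ?_⟩
      · dsimp only
        split
        · positivity
        · exact le_refl 0
      · rw [Finset.sum_congr rfl (fun u hu => if_pos hu), Finset.sum_const, nsmul_eq_mul,
          mul_inv_cancel₀ hcpos.ne']
      · -- positive semidefiniteness
        have hμsum : (∑ u ∈ U, (if u ∈ U then (U.card : ℝ)⁻¹ else 0) • outer u)
            = ∑ u ∈ U, (U.card : ℝ)⁻¹ • outer u :=
          Finset.sum_congr rfl (fun u hu => by rw [if_pos hu])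
        set A : Matrix (Fin d) (Fin d) ℝ :=
          α • (∑ u ∈ U, (if u ∈ U then (U.card : ℝ)⁻¹ else 0) • outer u) - outer v with hA
        have houter : ∀ w : Fin d → ℝ, (outer w)ᵀ = outer w := fun w => by
          ext i j; simp [outer, Matrix.vecMulVec_apply, mul_comm]
        have hAT : Aᵀ = A := by
          rw [hA, Matrix.transpose_sub, Matrix.transpose_smul, Matrix.transpose_sum, houter]
          congr 1
          congr 1
          exact Finset.sum_congr rfl (fun u _ => by rw [Matrix.transpose_smul, houter])
        refine Matrix.PosSemidef.of_dotProduct_mulVec_nonneg ?_ ?_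
        · rw [Matrix.IsHermitian, Matrix.conjTranspose]
          ext i j; simpa using congr_fun (congr_fun hAT i) j
        · intro x
          have hstar : star x = x := by simp
          rw [hstar]
          have hquad : x ⬝ᵥ (A *ᵥ x)
              = α * ((U.card : ℝ)⁻¹ * ∑ u ∈ U, (u ⬝ᵥ x)^2) - (v ⬝ᵥ x)^2 := by
            rw [hA, hμsum, Matrix.sub_mulVec, dotProduct_sub, Matrix.smul_mulVec,
              dotProduct_smul, smul_eq_mul]
            congr 1
            · congr 1
              rw [show (∑ u ∈ U, (U.card : ℝ)⁻¹ • outer u)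
                  = ∑ u ∈ U, (U.card : ℝ)⁻¹ • vecMulVec u u from rfl, SpAux.quad_mix,
                ← Finset.mul_sum]
            · rw [show outer v = vecMulVec v v from rfl, SpAux.dot_vecMulVec,
                dotProduct_comm x v, sq]
          rw [hquad]
          have hS0 : (0:ℝ) ≤ ∑ u ∈ U, (u ⬝ᵥ x)^2 :=
            Finset.sum_nonneg fun u _ => sq_nonneg _
          have hvS : (v ⬝ᵥ x)^2 ≤ ∑ u ∈ U, (u ⬝ᵥ x)^2 := by
            have h1 := hU0 v hv x
            rw [SpAux.quad_MS] at h1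
            refine le_trans h1 (Finset.sum_le_sum_of_subset_of_nonneg ?_
              (fun i _ _ => sq_nonneg _))
            exact Finset.subset_insert _ _
          have hα1 : (1:ℝ) ≤ α / (U.card : ℝ) := (one_le_div hcpos).mpr hcardα
          have hmul := mul_le_mul_of_nonneg_right hα1 hS0
          rw [one_mul] at hmul
          have heq : α / (U.card : ℝ) * ∑ u ∈ U, (u ⬝ᵥ x)^2
              = α * ((U.card : ℝ)⁻¹ * ∑ u ∈ U, (u ⬝ᵥ x)^2) := by
            rw [div_eq_mul_inv]; ring
          rw [heq] at hmul
          linarith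
end
end

section
/- Let d ≥ 1 be an integer, let 0 < ε < 1, and let V ⊆ {−1,1}^d be a finite set of ±1 vectors such that ⟨u,v⟩² ≤ d^{1+ε}/2 for all distinct u, v ∈ V. Then every d^{1−ε}-spectral spanner U of V satisfies U = V; that is, a d^{1−ε}-spectral spanner of V must contain every vector of V. -/
/-!
STATEMENT 2: Let d ≥ 1, 0 < ε < 1, and let V ⊆ {−1,1}^d be a finite set of ±1
vectors with ⟨u,v⟩² ≤ d^{1+ε}/2 for all distinct u, v ∈ V. Then every
d^{1−ε}-spectral spanner U of V satisfies U = V.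
-/

open Matrix Finset

noncomputable section

lemma outer_quad {d : ℕ} (u x : Fin d → ℝ) : x ⬝ᵥ (outer u *ᵥ x) = (u ⬝ᵥ x)^2 := by
  simp only [outer, dotProduct, mulVec, vecMulVec_apply, sq, Finset.sum_mul, Finset.mul_sum]
  exact Finset.sum_congr rfl fun i _ => Finset.sum_congr rfl fun j _ => by ring

theorem spanner_of_nearly_orthogonal_pm_one_vectors_is_everything
    (d : ℕ) (hd : 1 ≤ d) (ε : ℝ) (hε0 : 0 < ε) (hε1 : ε < 1)
    (V : Finset (Fin d → ℝ))
    (hpm : ∀ v ∈ V, ∀ i, v i = 1 ∨ v i = -1)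
    (hip : ∀ u ∈ V, ∀ v ∈ V, u ≠ v → (u ⬝ᵥ v) ^ 2 ≤ (d:ℝ) ^ ((1:ℝ) + ε) / 2)
    (U : Finset (Fin d → ℝ))
    (hU : IsSpectralSpanner ((d:ℝ) ^ ((1:ℝ) - ε)) V U) :
    U = V := by
  set α : ℝ := (d:ℝ) ^ ((1:ℝ) - ε) with hα
  have hdpos : (0:ℝ) < d := by exact_mod_cast hd
  have hαpos : 0 < α := Real.rpow_pos_of_pos hdpos _
  apply Finset.Subset.antisymm hU.1
  intro v hv
  by_contra hvU
  obtain ⟨μ, hμ0, hμ1, hpsd⟩ := hU.2 v hv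
  have hq := hpsd.dotProduct_mulVec_nonneg v
  have hstar : star v = v := rfl
  rw [hstar] at hq
  have hdp : ∀ (s : Finset (Fin d → ℝ)) (f : (Fin d → ℝ) → Fin d → ℝ),
      v ⬝ᵥ (∑ u ∈ s, f u) = ∑ u ∈ s, v ⬝ᵥ f u := by
    intro s f
    simp only [dotProduct, Finset.sum_apply, Finset.mul_sum]
    exact Finset.sum_comm
  have hsum : (∑ u ∈ U, μ u • outer u) *ᵥ v = ∑ u ∈ U, μ u • (outer u *ᵥ v) := by
    rw [show (∑ u ∈ U, μ u • outer u) *ᵥ v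
        = (Matrix.mulVec.addMonoidHomLeft v) (∑ u ∈ U, μ u • outer u) from rfl, map_sum]
    exact Finset.sum_congr rfl fun u _ => Matrix.smul_mulVec (μ u) (outer u) v
  have hq2 : (v ⬝ᵥ v)^2 ≤ α * ∑ u ∈ U, μ u * (u ⬝ᵥ v)^2 := by
    have : v ⬝ᵥ ((α • (∑ u ∈ U, μ u • outer u) - outer v) *ᵥ v)
        = α * (∑ u ∈ U, μ u * (u ⬝ᵥ v)^2) - (v ⬝ᵥ v)^2 := by
      rw [Matrix.sub_mulVec, dotProduct_sub, Matrix.smul_mulVec, dotProduct_smul,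
        hsum, hdp, outer_quad]
      simp only [smul_eq_mul]
      congr 1
      congr 1
      exact Finset.sum_congr rfl fun u _ => by rw [dotProduct_smul, outer_quad]; rfl
    rw [this] at hq
    linarith
  -- v ⬝ᵥ v = d
  have hvv : v ⬝ᵥ v = (d:ℝ) := by
    have : ∀ i, v i * v i = 1 := fun i => by rcases hpm v hv i with h | h <;> rw [h] <;> norm_num
    simp [dotProduct, this]
  -- bound the sum
  have hbound : ∑ u ∈ U, μ u * (u ⬝ᵥ v)^2 ≤ (d:ℝ) ^ ((1:ℝ) + ε) / 2 := by
    calc ∑ u ∈ U, μ u * (u ⬝ᵥ v)^2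
        ≤ ∑ u ∈ U, μ u * ((d:ℝ) ^ ((1:ℝ) + ε) / 2) := by
          refine Finset.sum_le_sum fun u hu => ?_
          refine mul_le_mul_of_nonneg_left ?_ (hμ0 u)
          exact hip u (hU.1 hu) v hv (fun h => hvU (h ▸ hu))
      _ = (d:ℝ) ^ ((1:ℝ) + ε) / 2 := by rw [← Finset.sum_mul, hμ1, one_mul]
  have hαd : α * ((d:ℝ) ^ ((1:ℝ) + ε) / 2) = (d:ℝ)^2 / 2 := by
    rw [hα, ← mul_div_assoc, ← Real.rpow_add hdpos,
      show ((1:ℝ) - ε + (1 + ε)) = ((2:ℕ):ℝ) by push_cast; ring, Real.rpow_natCast]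
  have hfinal : (d:ℝ)^2 ≤ (d:ℝ)^2 / 2 := by
    calc (d:ℝ)^2 = (v ⬝ᵥ v)^2 := by rw [hvv]
      _ ≤ α * ∑ u ∈ U, μ u * (u ⬝ᵥ v)^2 := hq2
      _ ≤ α * ((d:ℝ) ^ ((1:ℝ) + ε) / 2) := by
          exact mul_le_mul_of_nonneg_left hbound hαpos.le
      _ = (d:ℝ)^2 / 2 := hαd
  nlinarith [sq_nonneg ((d:ℝ))]
end
end

section
/- For every integer d ≥ 1 and every real 0 < ε < 1, there exists a set V ⊆ {−1,1}^d of ±1 vectors with |V| ≥ ⌊e^{d^ε/8}/2⌋ such that for all distinct u, v ∈ V one has |⟨u,v⟩| ≤ √(d^{1+ε}/2). -/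
/-!
STATEMENT 3: For every integer d ≥ 1 and every real 0 < ε < 1, there exists a set
V ⊆ {−1,1}^d of ±1 vectors with |V| ≥ ⌊e^{d^ε/8}/2⌋ such that for all distinct
u, v ∈ V one has |⟨u,v⟩| ≤ √(d^{1+ε}/2).
-/

open Finset Matrix

noncomputable def toV (d : ℕ) (b : Fin d → Bool) : Fin d → ℝ := fun i => if b i then 1 else -1

lemma mgf_eq (d : ℕ) (v : Fin d → ℝ) (hv : ∀ i, v i = 1 ∨ v i = -1) (l : ℝ) :
    ∑ b : Fin d → Bool, Real.exp (l * (toV d b ⬝ᵥ v)) = (2 * Real.cosh l) ^ d := by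
  have h1 : ∀ b : Fin d → Bool, Real.exp (l * (toV d b ⬝ᵥ v))
      = ∏ i, (fun i (x : Bool) => Real.exp (l * ((if x then (1:ℝ) else -1) * v i))) i (b i) := by
    intro b
    rw [← Real.exp_sum]
    congr 1
    rw [dotProduct, Finset.mul_sum]
    simp [toV]
  simp_rw [h1]
  rw [← Fintype.prod_sum (fun i (x : Bool) => Real.exp (l * ((if x then (1:ℝ) else -1) * v i)))]
  have h2 : ∀ i : Fin d, ∑ j : Bool, Real.exp (l * ((if j then (1:ℝ) else -1) * v i)) = 2 * Real.cosh l := by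
    intro i
    rcases hv i with h | h <;> simp [h, Fintype.sum_bool, Real.cosh_eq] <;> ring
  simp_rw [h2]
  simp

lemma tail_one_side (d : ℕ) (v : Fin d → ℝ) (hv : ∀ i, v i = 1 ∨ v i = -1)
    (t l : ℝ) (hl : 0 ≤ l) :
    ((Finset.univ.filter fun b : Fin d → Bool => t ≤ toV d b ⬝ᵥ v).card : ℝ)
      ≤ 2 ^ d * Real.exp ((d : ℝ) * l ^ 2 / 2 - l * t) := by
  set S := Finset.univ.filter fun b : Fin d → Bool => t ≤ toV d b ⬝ᵥ v with hS
  have key : (S.card : ℝ) * Real.exp (l * t) ≤ (2 * Real.cosh l) ^ d := by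
    rw [← mgf_eq d v hv l]
    calc (S.card : ℝ) * Real.exp (l * t) = ∑ _b ∈ S, Real.exp (l * t) := by
          rw [Finset.sum_const, nsmul_eq_mul]
      _ ≤ ∑ b ∈ S, Real.exp (l * (toV d b ⬝ᵥ v)) := by
          apply Finset.sum_le_sum
          intro b hb
          have hbt : t ≤ toV d b ⬝ᵥ v := (Finset.mem_filter.mp hb).2
          exact Real.exp_le_exp.mpr (mul_le_mul_of_nonneg_left hbt hl)
      _ ≤ ∑ b : Fin d → Bool, Real.exp (l * (toV d b ⬝ᵥ v)) := by
          apply Finset.sum_le_sum_of_subset_of_nonneg (Finset.filter_subset _ _)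
          intro b _ _; positivity
  have key2 : (2 * Real.cosh l) ^ d ≤ 2 ^ d * Real.exp ((d : ℝ) * l ^ 2 / 2) := by
    have h1 : (2 * Real.cosh l) ^ d ≤ (2 * Real.exp (l ^ 2 / 2)) ^ d := by
      apply pow_le_pow_left₀ (by positivity)
      have := Real.cosh_le_exp_half_sq l
      linarith
    calc (2 * Real.cosh l) ^ d ≤ (2 * Real.exp (l ^ 2 / 2)) ^ d := h1
      _ = 2 ^ d * Real.exp ((d : ℝ) * l ^ 2 / 2) := by
          rw [mul_pow, ← Real.exp_nat_mul]; ring_nf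
  have hpos : (0:ℝ) < Real.exp (l * t) := Real.exp_pos _
  rw [← mul_le_mul_iff_of_pos_right hpos]
  calc (S.card : ℝ) * Real.exp (l * t) ≤ 2 ^ d * Real.exp ((d : ℝ) * l ^ 2 / 2) :=
        le_trans key key2
    _ = 2 ^ d * Real.exp ((d : ℝ) * l ^ 2 / 2 - l * t) * Real.exp (l * t) := by
        rw [mul_assoc, ← Real.exp_add]; ring_nf

lemma tail_two_side (d : ℕ) (v : Fin d → ℝ) (hv : ∀ i, v i = 1 ∨ v i = -1)
    (t l : ℝ) (hl : 0 ≤ l) :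
    ((Finset.univ.filter fun b : Fin d → Bool => t < |toV d b ⬝ᵥ v|).card : ℝ)
      ≤ 2 * (2 ^ d * Real.exp ((d : ℝ) * l ^ 2 / 2 - l * t)) := by
  have hsub : (Finset.univ.filter fun b : Fin d → Bool => t < |toV d b ⬝ᵥ v|)
      ⊆ (Finset.univ.filter fun b : Fin d → Bool => t ≤ toV d b ⬝ᵥ v)
        ∪ (Finset.univ.filter fun b : Fin d → Bool => t ≤ toV d b ⬝ᵥ (-v)) := by
    intro b hb
    have hb' : t < |toV d b ⬝ᵥ v| := (Finset.mem_filter.mp hb).2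
    rw [Finset.mem_union, Finset.mem_filter, Finset.mem_filter]
    rcases abs_cases (toV d b ⬝ᵥ v) with ⟨he, _⟩ | ⟨he, _⟩
    · left; exact ⟨Finset.mem_univ _, by rw [← he]; exact le_of_lt hb'⟩
    · right
      refine ⟨Finset.mem_univ _, ?_⟩
      rw [dotProduct_neg, ← he]
      exact le_of_lt hb'
  have hcard := Finset.card_le_card hsub
  have hcard2 := le_trans hcard (Finset.card_union_le _ _)
  have h1 := tail_one_side d v hv t l hl
  have h2 := tail_one_side d (-v) (fun i => by rcases hv i with h | h <;> simp [h]) t l hl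
  have : ((Finset.univ.filter fun b : Fin d → Bool => t < |toV d b ⬝ᵥ v|).card : ℝ)
      ≤ ((Finset.univ.filter fun b : Fin d → Bool => t ≤ toV d b ⬝ᵥ v).card : ℝ)
        + ((Finset.univ.filter fun b : Fin d → Bool => t ≤ toV d b ⬝ᵥ (-v)).card : ℝ) := by
    exact_mod_cast hcard2
  linarith

lemma toV_pm (d : ℕ) (b : Fin d → Bool) (i : Fin d) : toV d b i = 1 ∨ toV d b i = -1 := by
  unfold toV; cases b i <;> simp

lemma toV_inj (d : ℕ) : Function.Injective (toV d) := by
  intro b c h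
  funext i
  have := congrFun h i
  unfold toV at this
  cases hb : b i <;> cases hc : c i <;> simp [hb, hc] at this ⊢ <;> norm_num at this

lemma toV_self_dot (d : ℕ) (b : Fin d → Bool) : toV d b ⬝ᵥ toV d b = d := by
  rw [dotProduct]
  have h : ∀ i : Fin d, toV d b i * toV d b i = 1 := by
    intro i; rcases toV_pm d b i with h | h <;> rw [h] <;> norm_num
  simp_rw [h]
  simp

theorem exists_large_nearly_orthogonal_pm_one_family
    (d : ℕ) (hd : 1 ≤ d) (ε : ℝ) (hε0 : 0 < ε) (hε1 : ε < 1) :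
    ∃ V : Finset (Fin d → ℝ),
      (∀ v ∈ V, ∀ i, v i = 1 ∨ v i = -1) ∧
      ⌊Real.exp ((d:ℝ) ^ ε / 8) / 2⌋₊ ≤ V.card ∧
      ∀ u ∈ V, ∀ v ∈ V, u ≠ v →
        |(u ⬝ᵥ v)| ≤ Real.sqrt ((d:ℝ) ^ ((1:ℝ) + ε) / 2) := by
  have hd0 : (0:ℝ) < d := by exact_mod_cast hd
  have hd1 : (1:ℝ) ≤ d := by exact_mod_cast hd
  set t : ℝ := Real.sqrt ((d:ℝ) ^ ((1:ℝ) + ε) / 2) with ht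
  set N : ℕ := ⌊Real.exp ((d:ℝ) ^ ε / 8) / 2⌋₊ with hN
  set E : ℝ := Real.exp ((d:ℝ) ^ ε / 8) with hE
  have hrpow_pos : (0:ℝ) < (d:ℝ) ^ ε := Real.rpow_pos_of_pos hd0 ε
  have hsplit : (d:ℝ) ^ ((1:ℝ) + ε) = d * (d:ℝ) ^ ε := by
    rw [Real.rpow_add hd0, Real.rpow_one]
  have ht0 : 0 ≤ t := Real.sqrt_nonneg _
  have ht2 : t ^ 2 = (d:ℝ) ^ ((1:ℝ) + ε) / 2 := by
    rw [ht, Real.sq_sqrt (by positivity)]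
  -- t < d
  have htd : t < d := by
    have h1 : (d:ℝ) ^ ((1:ℝ) + ε) / 2 < (d:ℝ) ^ 2 := by
      have : (d:ℝ) ^ ε ≤ (d:ℝ) ^ (1:ℝ) := Real.rpow_le_rpow_of_exponent_le hd1 (le_of_lt hε1)
      rw [Real.rpow_one] at this
      rw [hsplit]
      nlinarith
    calc t = Real.sqrt ((d:ℝ) ^ ((1:ℝ) + ε) / 2) := ht
      _ < Real.sqrt ((d:ℝ) ^ 2) := Real.sqrt_lt_sqrt (by positivity) h1
      _ = d := Real.sqrt_sq (le_of_lt hd0)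
  -- the exponent computation with l = t / d
  set l : ℝ := t / d with hl
  have hl0 : 0 ≤ l := by positivity
  have hexp_eq : (d:ℝ) * l ^ 2 / 2 - l * t = -((d:ℝ) ^ ε / 4) := by
    have hd0' : (d:ℝ) ≠ 0 := ne_of_gt hd0
    have htt : t ^ 2 = (d:ℝ) * (d:ℝ) ^ ε / 2 := by rw [ht2, hsplit]
    rw [hl]
    field_simp
    linear_combination (-4) * htt
  set M : ℝ := 2 * (2 ^ d * Real.exp (-((d:ℝ) ^ ε / 4))) with hM
  have hM0 : 0 < M := by positivity
  have hbad_bound : ∀ c : Fin d → Bool,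
      ((Finset.univ.filter fun b : Fin d → Bool => t < |toV d b ⬝ᵥ toV d c|).card : ℝ) ≤ M := by
    intro c
    have := tail_two_side d (toV d c) (toV_pm d c) t l hl0
    rwa [hexp_eq] at this
  -- greedy construction
  have main : ∀ n : ℕ, n ≤ N → ∃ B : Finset (Fin d → Bool), B.card = n ∧
      ∀ b ∈ B, ∀ c ∈ B, b ≠ c → |toV d b ⬝ᵥ toV d c| ≤ t := by
    intro n
    induction n with
    | zero => exact fun _ => ⟨∅, by simp⟩
    | succ n ih =>
      intro hn
      obtain ⟨B, hBcard, hBgood⟩ := ih (le_trans (Nat.le_succ n) hn)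
      set bad : Finset (Fin d → Bool) :=
        B.biUnion (fun c => Finset.univ.filter fun b => t < |toV d b ⬝ᵥ toV d c|) with hbad
      have hbadcard : (bad.card : ℝ) ≤ n * M := by
        have h1 : bad.card ≤ ∑ c ∈ B, (Finset.univ.filter
            fun b : Fin d → Bool => t < |toV d b ⬝ᵥ toV d c|).card := Finset.card_biUnion_le
        have h2 : ((∑ c ∈ B, (Finset.univ.filter
            fun b : Fin d → Bool => t < |toV d b ⬝ᵥ toV d c|).card : ℕ) : ℝ) ≤ B.card * M := by
          push_cast
          calc (∑ c ∈ B, ((Finset.univ.filter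
              fun b : Fin d → Bool => t < |toV d b ⬝ᵥ toV d c|).card : ℝ))
              ≤ ∑ _c ∈ B, M := Finset.sum_le_sum fun c _ => hbad_bound c
            _ = B.card * M := by rw [Finset.sum_const, nsmul_eq_mul]
        calc (bad.card : ℝ) ≤ _ := by exact_mod_cast h1
          _ ≤ B.card * M := h2
          _ = n * M := by rw [hBcard]
      have hnE : (n : ℝ) < E / 2 := by
        have h1 : (n : ℝ) + 1 ≤ N := by exact_mod_cast hn
        have h2 : (N : ℝ) ≤ E / 2 := Nat.floor_le (by positivity)
        linarith
      have hcardlt : (bad.card : ℝ) < 2 ^ d := by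
        have h3 : (n : ℝ) * M < (E / 2) * M := by
          apply mul_lt_mul_of_pos_right hnE hM0
        have h4 : (E / 2) * M = 2 ^ d * Real.exp (-((d:ℝ) ^ ε / 8)) := by
          rw [hE, hM]
          rw [show -((d:ℝ) ^ ε / 8) = (d:ℝ) ^ ε / 8 + -((d:ℝ) ^ ε / 4) by ring, Real.exp_add]
          ring
        have h5 : Real.exp (-((d:ℝ) ^ ε / 8)) ≤ 1 := Real.exp_le_one_iff.mpr (by linarith)
        have h6 : (2:ℝ) ^ d * Real.exp (-((d:ℝ) ^ ε / 8)) ≤ 2 ^ d := by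
          nlinarith [pow_pos (show (0:ℝ) < 2 by norm_num) d]
        linarith
      have hne : bad ≠ Finset.univ := by
        intro h
        rw [h, Finset.card_univ] at hcardlt
        have hcu : Fintype.card (Fin d → Bool) = 2 ^ d := by simp
        rw [hcu] at hcardlt
        push_cast at hcardlt
        exact lt_irrefl _ hcardlt
      obtain ⟨b, hb⟩ : ∃ b, b ∉ bad := by
        by_contra h
        push_neg at h
        exact hne (Finset.eq_univ_iff_forall.mpr h)
      have hbB : b ∉ B := by
        intro hbB
        apply hb
        rw [hbad, Finset.mem_biUnion]
        refine ⟨b, hbB, Finset.mem_filter.mpr ⟨Finset.mem_univ _, ?_⟩⟩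
        rw [toV_self_dot]
        rw [abs_of_nonneg (le_of_lt hd0)]
        exact htd
      have hbgood : ∀ c ∈ B, |toV d b ⬝ᵥ toV d c| ≤ t := by
        intro c hc
        by_contra h
        push_neg at h
        apply hb
        rw [hbad, Finset.mem_biUnion]
        exact ⟨c, hc, Finset.mem_filter.mpr ⟨Finset.mem_univ _, h⟩⟩
      refine ⟨insert b B, by rw [Finset.card_insert_of_notMem hbB, hBcard], ?_⟩
      intro x hx y hy hxy
      rcases Finset.mem_insert.mp hx with hx | hx <;>
        rcases Finset.mem_insert.mp hy with hy | hy
      · exact absurd (hx.trans hy.symm) hxy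
      · rw [hx]; exact hbgood y hy
      · rw [hy, dotProduct_comm]
        exact hbgood x hx
      · exact hBgood x hx y hy hxy
  obtain ⟨B, hBcard, hBgood⟩ := main N le_rfl
  refine ⟨B.image (toV d), ?_, ?_, ?_⟩
  · intro v hv i
    obtain ⟨b, _, rfl⟩ := Finset.mem_image.mp hv
    exact toV_pm d b i
  · rw [Finset.card_image_of_injective _ (toV_inj d), hBcard]
  · intro u hu v hv huv
    obtain ⟨b, hb, rfl⟩ := Finset.mem_image.mp hu
    obtain ⟨c, hc, rfl⟩ := Finset.mem_image.mp hv
    exact hBgood b hb c hc (fun h => huv (by rw [h]))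
end

section
/- Let A, B ∈ ℝ^{d×d} be symmetric matrices and let 1 ≤ k ≤ d be an integer. Then A ⪯_k B if and only if Σ_{i=k}^{d} λ_i(B−A) ≥ 0, where λ_1(B−A) ≥ λ_2(B−A) ≥ … ≥ λ_d(B−A) are the eigenvalues of the symmetric matrix B−A listed in decreasing order. -/
/-!
STATEMENT 4: Let A, B ∈ ℝ^{d×d} be symmetric and 1 ≤ k ≤ d. Then A ⪯_k B if and
only if Σ_{i=k}^{d} λ_i(B−A) ≥ 0, where λ_1 ≥ … ≥ λ_d are the eigenvalues of the
symmetric matrix B−A in decreasing order.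
-/

open Matrix Finset

noncomputable section

/-- The Frobenius (trace) inner product of two real matrices. -/
def frob {d : ℕ} (A B : Matrix (Fin d) (Fin d) ℝ) : ℝ := ∑ i, ∑ j, A i j * B i j

/-- `A ⪯_k B` : `⟨A, Π⟩ ≤ ⟨B, Π⟩` for every orthogonal projection matrix `Π`
(symmetric and idempotent) of rank `d - k + 1`. -/
def PrecK {d : ℕ} (k : ℕ) (A B : Matrix (Fin d) (Fin d) ℝ) : Prop :=
  ∀ P : Matrix (Fin d) (Fin d) ℝ, P.IsHermitian → P * P = P → P.rank = d - k + 1 →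
    frob A P ≤ frob B P

namespace PrecKAux

variable {d : ℕ}

lemma frob_sub (A B P : Matrix (Fin d) (Fin d) ℝ) :
    frob (B - A) P = frob B P - frob A P := by
  simp [frob, Matrix.sub_apply, sub_mul, Finset.sum_sub_distrib]

lemma frob_eq_trace (C P : Matrix (Fin d) (Fin d) ℝ) (hP : P.IsHermitian) :
    frob C P = (C * P).trace := by
  have hsym : ∀ i j, P j i = P i j := fun i j => by
    have := hP.apply i j
    simpa using this
  simp only [frob, Matrix.trace, Matrix.diag, Matrix.mul_apply]
  refine Finset.sum_congr rfl fun i _ => Finset.sum_congr rfl fun j _ => ?_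
  rw [hsym i j]

lemma trace_diagonal_mul (v : Fin d → ℝ) (Q : Matrix (Fin d) (Fin d) ℝ) :
    (diagonal v * Q).trace = ∑ i, v i * Q i i := by
  simp [Matrix.trace, Matrix.diag, Matrix.mul_apply, Matrix.diagonal_apply,
    ite_mul, Finset.sum_ite_eq]

/-- cardinality of the index set `{i : k-1 ≤ i}`. -/
lemma card_S (k : ℕ) (hk1 : 1 ≤ k) (hkd : k ≤ d) :
    (Finset.univ.filter (fun i : Fin d => k - 1 ≤ (i : ℕ))).card = d - k + 1 := by
  have hkd' : k - 1 < d := by omega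
  have : Finset.univ.filter (fun i : Fin d => k - 1 ≤ (i : ℕ))
      = Finset.Ici (⟨k - 1, hkd'⟩ : Fin d) := by
    ext i
    simp [Fin.le_def]
  rw [this, Fin.card_Ici]
  simp only [Fin.val_mk]
  omega

/-- The rearrangement lower bound. -/
lemma sum_filter_le_sum_mul (k : ℕ) (hk1 : 1 ≤ k) (hkd : k ≤ d)
    (lam q : Fin d → ℝ) (hanti : Antitone lam)
    (hq0 : ∀ i, 0 ≤ q i) (hq1 : ∀ i, q i ≤ 1)
    (hqs : ∑ i, q i = ((d - k + 1 : ℕ) : ℝ)) :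
    ∑ i ∈ Finset.univ.filter (fun i : Fin d => k - 1 ≤ (i : ℕ)), lam i
      ≤ ∑ i, lam i * q i := by
  have hkd' : k - 1 < d := by omega
  set m : Fin d := ⟨k - 1, hkd'⟩ with hm
  set t : ℝ := lam m with ht
  set p : Fin d → Prop := fun i => k - 1 ≤ (i : ℕ) with hp
  have hsplit :
      ∑ i ∈ Finset.univ.filter p, lam i * q i
        + ∑ i ∈ Finset.univ.filter (fun i => ¬ p i), lam i * q i
      = ∑ i, lam i * q i :=
    Finset.sum_filter_add_sum_filter_not _ _ _
  have hqsplit :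
      ∑ i ∈ Finset.univ.filter p, q i
        + ∑ i ∈ Finset.univ.filter (fun i => ¬ p i), q i
      = ∑ i, q i :=
    Finset.sum_filter_add_sum_filter_not _ _ _
  have hcard : (Finset.univ.filter p).card = d - k + 1 := card_S k hk1 hkd
  have hB1 : ∑ i ∈ Finset.univ.filter (fun i => ¬ p i), t * q i
      ≤ ∑ i ∈ Finset.univ.filter (fun i => ¬ p i), lam i * q i := by
    refine Finset.sum_le_sum fun i hi => ?_
    have hi' : ¬ (k - 1 ≤ (i : ℕ)) := by
      simpa [hp] using (Finset.mem_filter.mp hi).2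
    have him : i ≤ m := by
      rw [Fin.le_def]; simp only [hm]; omega
    exact mul_le_mul_of_nonneg_right (hanti him) (hq0 i)
  have hB2 : ∑ i ∈ Finset.univ.filter p, (lam i - t + t * q i)
      ≤ ∑ i ∈ Finset.univ.filter p, lam i * q i := by
    refine Finset.sum_le_sum fun i hi => ?_
    have hi' : k - 1 ≤ (i : ℕ) := by simpa [hp] using (Finset.mem_filter.mp hi).2
    have him : m ≤ i := by rw [Fin.le_def]; simpa [hm] using hi'
    have hle : lam i ≤ t := hanti him
    nlinarith [hq1 i, hq0 i]
  have hexp : ∑ i ∈ Finset.univ.filter p, (lam i - t + t * q i)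
      = (∑ i ∈ Finset.univ.filter p, lam i)
        - ((Finset.univ.filter p).card : ℝ) * t
        + t * ∑ i ∈ Finset.univ.filter p, q i := by
    rw [Finset.sum_add_distrib, Finset.sum_sub_distrib, Finset.sum_const, ← Finset.mul_sum]
    simp [nsmul_eq_mul]
  have hcardR : ((Finset.univ.filter p).card : ℝ) = ((d - k + 1 : ℕ) : ℝ) := by
    exact_mod_cast congrArg (Nat.cast : ℕ → ℝ) hcard
  have hmul : ∑ i ∈ Finset.univ.filter (fun i => ¬ p i), t * q i
      = t * ∑ i ∈ Finset.univ.filter (fun i => ¬ p i), q i := by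
    rw [Finset.mul_sum]
  have hqt := hqsplit
  rw [hqs] at hqt
  calc ∑ i ∈ Finset.univ.filter p, lam i
      = (∑ i ∈ Finset.univ.filter p, lam i)
        - ((Finset.univ.filter p).card : ℝ) * t
        + t * ∑ i ∈ Finset.univ.filter p, q i
        + t * ∑ i ∈ Finset.univ.filter (fun i => ¬ p i), q i := by
        rw [hcardR]; linear_combination (-t) * hqt
    _ ≤ ∑ i ∈ Finset.univ.filter p, lam i * q i
        + ∑ i ∈ Finset.univ.filter (fun i => ¬ p i), lam i * q i := by
        rw [← hexp, ← hmul]; exact add_le_add hB2 hB1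
    _ = ∑ i, lam i * q i := hsplit

/-- For a Hermitian idempotent real matrix, the trace equals the rank. -/
lemma trace_eq_rank (P : Matrix (Fin d) (Fin d) ℝ) (hP : P.IsHermitian)
    (hP2 : P * P = P) : P.trace = (P.rank : ℝ) := by
  classical
  set W : Matrix (Fin d) (Fin d) ℝ := (hP.eigenvectorUnitary : Matrix (Fin d) (Fin d) ℝ)
    with hW
  have hW1 : W * star W = 1 := Matrix.mem_unitaryGroup_iff.mp hP.eigenvectorUnitary.2
  have hW2 : star W * W = 1 := Matrix.mem_unitaryGroup_iff'.mp hP.eigenvectorUnitary.2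
  set ν : Fin d → ℝ := hP.eigenvalues with hν
  have hspec : P = W * diagonal ν * star W := by
    have := hP.spectral_theorem
    simpa [RCLike.ofReal_real_eq_id, Function.id_comp] using this
  have cancel : ∀ X Y : Matrix (Fin d) (Fin d) ℝ,
      W * X * star W = W * Y * star W → X = Y := by
    intro X Y h
    have h2 := congrArg (fun M => star W * M * W) h
    have e1 : ∀ Z : Matrix (Fin d) (Fin d) ℝ,
        star W * (W * Z * star W) * W = (star W * W) * Z * (star W * W) := by
      intro Z; noncomm_ring
    rw [e1 X, e1 Y, hW2, one_mul, mul_one, one_mul, mul_one] at h2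
    exact h2
  have hD : diagonal ν * diagonal ν = diagonal ν := by
    apply cancel
    have key : (W * diagonal ν * star W) * (W * diagonal ν * star W)
        = W * (diagonal ν * (star W * W) * diagonal ν) * star W := by noncomm_ring
    rw [hW2, Matrix.mul_one] at key
    rw [← key, ← hspec, hP2, hspec]
  have hν01 : ∀ i, ν i * ν i = ν i := by
    rw [Matrix.diagonal_mul_diagonal] at hD
    have := Matrix.diagonal_injective hD
    intro i
    exact congrFun this i
  have htr : P.trace = ∑ i, ν i := by
    rw [hspec, Matrix.trace_mul_comm, ← Matrix.mul_assoc, hW2, one_mul,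
      Matrix.trace_diagonal]
  have hrank : P.rank = (Finset.univ.filter (fun i => ν i ≠ 0)).card := by
    rw [hP.rank_eq_card_non_zero_eigs, Fintype.card_subtype]
  have hsum : ∑ i, ν i
      = (((Finset.univ.filter (fun i => ν i ≠ 0)).card : ℕ) : ℝ) := by
    rw [← Finset.sum_boole]
    refine Finset.sum_congr rfl fun i _ => ?_
    by_cases h : ν i = 0
    · simp [h]
    · have h1 : ν i = 1 := by
        have h2 := hν01 i
        have : ν i * ν i = ν i * 1 := by rw [mul_one]; exact h2
        exact mul_left_cancel₀ h this
      simp [h, h1]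
  rw [htr, hsum, hrank]

end PrecKAux

open PrecKAux in
/-- `lam` lists the eigenvalues of `B - A` in decreasing order
(`lam ⟨0,_⟩` is λ_1, …, `lam ⟨d-1,_⟩` is λ_d); the sum `Σ_{i=k}^{d} λ_i`
is over the (1-indexed) indices `i ∈ {k, …, d}`, i.e. 0-indexed positions
with `k - 1 ≤ position`. -/
theorem precK_iff_sum_smallest_eigenvalues_nonneg
    {d : ℕ} (k : ℕ) (hk1 : 1 ≤ k) (hkd : k ≤ d)
    (A B : Matrix (Fin d) (Fin d) ℝ)
    (hA : A.IsHermitian) (hB : B.IsHermitian)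
    (hBA : (B - A).IsHermitian)
    (lam : Fin d → ℝ) (hanti : Antitone lam)
    (e : Equiv.Perm (Fin d)) (hlam : ∀ i, lam i = hBA.eigenvalues (e i)) :
    PrecK k A B ↔ 0 ≤ ∑ i ∈ Finset.univ.filter (fun i : Fin d => k - 1 ≤ (i:ℕ)), lam i := by
  classical
  set C : Matrix (Fin d) (Fin d) ℝ := B - A with hC
  set V : Matrix (Fin d) (Fin d) ℝ := (hBA.eigenvectorUnitary : Matrix (Fin d) (Fin d) ℝ)
    with hV
  have hV1 : V * star V = 1 := Matrix.mem_unitaryGroup_iff.mp hBA.eigenvectorUnitary.2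
  have hV2 : star V * V = 1 := Matrix.mem_unitaryGroup_iff'.mp hBA.eigenvectorUnitary.2
  set μ : Fin d → ℝ := hBA.eigenvalues with hμ
  have hspec : C = V * diagonal μ * star V := by
    have := hBA.spectral_theorem
    simpa [RCLike.ofReal_real_eq_id, Function.id_comp] using this
  -- frobenius against any Hermitian P, via the diagonalization
  have key : ∀ P : Matrix (Fin d) (Fin d) ℝ, P.IsHermitian →
      frob C P = ∑ i, μ i * (star V * P * V) i i := by
    intro P hP
    rw [frob_eq_trace C P hP, hspec]
    have h1 : V * diagonal μ * star V * P = V * (diagonal μ * (star V * P)) := by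
      noncomm_ring
    rw [h1, Matrix.trace_mul_comm]
    have h2 : diagonal μ * (star V * P) * V = diagonal μ * (star V * P * V) := by
      noncomm_ring
    rw [h2, trace_diagonal_mul]
  constructor
  · -- forward: construct the projection onto the d-k+1 smallest eigenvalues
    intro hPrec
    set χ : Fin d → ℝ := fun i => if k - 1 ≤ ((e.symm i : Fin d) : ℕ) then 1 else 0 with hχ
    set P0 : Matrix (Fin d) (Fin d) ℝ := V * diagonal χ * star V with hP0
    have hχstar : star χ = χ := by
      funext i; simp
    have hχidem : ∀ i, χ i * χ i = χ i := by
      intro i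
      by_cases h : k - 1 ≤ ((e.symm i : Fin d) : ℕ)
      · simp only [hχ]; rw [if_pos h]; norm_num
      · simp only [hχ]; rw [if_neg h]; norm_num
    have hχχ : diagonal χ * diagonal χ = diagonal χ := by
      rw [Matrix.diagonal_mul_diagonal]
      exact congrArg diagonal (funext fun i => hχidem i)
    have hP0H : P0.IsHermitian := by
      show P0ᴴ = P0
      rw [hP0]
      rw [Matrix.conjTranspose_mul, Matrix.conjTranspose_mul,
        Matrix.diagonal_conjTranspose, hχstar]
      simp [Matrix.star_eq_conjTranspose, Matrix.mul_assoc]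
    have hP0idem : P0 * P0 = P0 := by
      have key2 : (V * diagonal χ * star V) * (V * diagonal χ * star V)
          = V * (diagonal χ * (star V * V) * diagonal χ) * star V := by noncomm_ring
      rw [hV2, Matrix.mul_one] at key2
      rw [hP0, key2, hχχ]
    have hdetV : IsUnit V.det := by
      apply IsUnit.of_mul_eq_one (a := V.det) (star V).det
      rw [← Matrix.det_mul, hV1, Matrix.det_one]
    have hdetVs : IsUnit (star V).det := by
      apply IsUnit.of_mul_eq_one (a := (star V).det) V.det
      rw [← Matrix.det_mul, hV2, Matrix.det_one]
    have hP0rank : P0.rank = d - k + 1 := by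
      rw [hP0, Matrix.rank_mul_eq_left_of_isUnit_det (star V) (V * diagonal χ) hdetVs,
        Matrix.rank_mul_eq_right_of_isUnit_det V (diagonal χ) hdetV,
        Matrix.rank_diagonal, Fintype.card_subtype]
      have himg : Finset.univ.filter (fun i => χ i ≠ 0)
          = (Finset.univ.filter (fun j : Fin d => k - 1 ≤ (j : ℕ))).image e := by
        ext i
        simp only [Finset.mem_filter, Finset.mem_univ, true_and, Finset.mem_image, hχ]
        constructor
        · intro h
          refine ⟨e.symm i, ?_, e.apply_symm_apply i⟩
          by_contra hcon
          rw [if_neg hcon] at h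
          exact h rfl
        · rintro ⟨j, hj, rfl⟩
          simp only [Equiv.symm_apply_apply]
          rw [if_pos hj]
          norm_num
      rw [himg, Finset.card_image_of_injective _ e.injective, card_S k hk1 hkd]
    have hle := hPrec P0 hP0H hP0idem hP0rank
    have h0 : 0 ≤ frob C P0 := by
      have := frob_sub A B P0
      rw [← hC] at this
      linarith
    have hQ0 : star V * P0 * V = diagonal χ := by
      have : star V * (V * diagonal χ * star V) * V
          = (star V * V) * diagonal χ * (star V * V) := by noncomm_ring
      rw [hP0, this, hV2, one_mul, mul_one]
    have hfrob : frob C P0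
        = ∑ i ∈ Finset.univ.filter (fun i : Fin d => k - 1 ≤ (i : ℕ)), lam i := by
      rw [key P0 hP0H, hQ0]
      have h3 : ∀ i, μ i * χ i = if k - 1 ≤ ((e.symm i : Fin d) : ℕ) then μ i else 0 := by
        intro i
        simp only [hχ, mul_ite, mul_one, mul_zero]
      simp only [Matrix.diagonal_apply_eq]
      rw [Finset.sum_congr rfl (fun i _ => h3 i)]
      rw [← Equiv.sum_comp e (fun i => if k - 1 ≤ ((e.symm i : Fin d) : ℕ) then μ i else 0)]
      simp only [Equiv.symm_apply_apply]
      rw [Finset.sum_filter]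
      exact Finset.sum_congr rfl fun j _ => by rw [hlam j]
    rw [← hfrob]; exact h0
  · -- backward direction
    intro h0 P hPH hP2 hPrank
    have hfs := frob_sub A B P
    rw [← hC] at hfs
    suffices h : 0 ≤ frob C P by linarith
    set Q : Matrix (Fin d) (Fin d) ℝ := star V * P * V with hQ
    have hQH : Q.IsHermitian := by
      show Qᴴ = Q
      rw [hQ, Matrix.conjTranspose_mul, Matrix.conjTranspose_mul, hPH.eq]
      simp [Matrix.star_eq_conjTranspose, Matrix.mul_assoc]
    have hQ2 : Q * Q = Q := by
      have key2 : (star V * P * V) * (star V * P * V)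
          = star V * (P * (V * star V) * P) * V := by noncomm_ring
      rw [hV1, Matrix.mul_one] at key2
      rw [hQ, key2, hP2]
    have hsymQ : ∀ i j, Q j i = Q i j := fun i j => by
      have := hQH.apply i j
      simpa using this
    have hii : ∀ i, Q i i = ∑ j, Q i j ^ 2 := by
      intro i
      conv_lhs => rw [← hQ2]
      rw [Matrix.mul_apply]
      exact Finset.sum_congr rfl fun j _ => by rw [hsymQ i j]; ring
    have hq0 : ∀ i, 0 ≤ Q i i := fun i => by
      rw [hii i]; exact Finset.sum_nonneg fun j _ => sq_nonneg _
    have hqsq : ∀ i, Q i i ^ 2 ≤ Q i i := fun i => by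
      conv_rhs => rw [hii i]
      exact Finset.single_le_sum (f := fun j => Q i j ^ 2)
        (fun j _ => sq_nonneg _) (Finset.mem_univ i)
    have hq1 : ∀ i, Q i i ≤ 1 := fun i => by nlinarith [hqsq i, hq0 i]
    have hqsum : ∑ i, Q i i = ((d - k + 1 : ℕ) : ℝ) := by
      have h1 : ∑ i, Q i i = Q.trace := rfl
      have h2 : Q.trace = P.trace := by
        rw [hQ, Matrix.trace_mul_cycle, hV1, one_mul]
      rw [h1, h2, trace_eq_rank P hPH hP2, hPrank]
    have hsum1 : frob C P = ∑ j, lam j * Q (e j) (e j) := by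
      rw [key P hPH, ← hQ]
      rw [← Equiv.sum_comp e (fun i => μ i * Q i i)]
      exact Finset.sum_congr rfl fun j _ => by rw [← hlam j]
    have hsum2 : ∑ j, Q (e j) (e j) = ((d - k + 1 : ℕ) : ℝ) := by
      rw [Equiv.sum_comp e (fun i => Q i i)]
      exact hqsum
    have hmain := sum_filter_le_sum_mul k hk1 hkd lam (fun j => Q (e j) (e j))
      hanti (fun j => hq0 (e j)) (fun j => hq1 (e j)) hsum2
    rw [hsum1]
    calc (0:ℝ) ≤ ∑ i ∈ Finset.univ.filter (fun i : Fin d => k - 1 ≤ (i:ℕ)), lam i := h0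
      _ ≤ ∑ j, lam j * Q (e j) (e j) := hmain
end
end

section
/- Let s ≥ 2 be an integer and let L ∈ ℝ^{s×s} be a lower triangular matrix (L_{i,j} = 0 for j > i) with L_{i,i} = 1 for all 1 ≤ i ≤ s and |L_{i,j}| ≤ 1 for all 1 ≤ j ≤ i ≤ s. Then for every integer k with 2 ≤ k < s/2 one has σ_k(L) ≥ ((k−1)/s²)^{(k−1)/s}. -/
/-!
STATEMENT 7: Let s ≥ 2 and let L ∈ ℝ^{s×s} be lower triangular (L_{i,j} = 0 for
j > i) with L_{i,i} = 1 and |L_{i,j}| ≤ 1 for j ≤ i. Then for every integer k with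
2 ≤ k < s/2, σ_k(L) ≥ ((k−1)/s²)^{(k−1)/s}.

The singular values σ_1 ≥ … ≥ σ_s ≥ 0 of `L` are encoded as a nonnegative
antitone family `σ` whose squares enumerate (via a permutation) the eigenvalues of
the symmetric matrix `Lᴴ * L = Lᵀ L`.  The 1-indexed `σ_k` is `σ ⟨k-1, _⟩`.
-/

open Matrix Finset

noncomputable section

theorem singular_value_lower_bound_of_lower_triangular
    (s : ℕ) (hs : 2 ≤ s) (L : Matrix (Fin s) (Fin s) ℝ)
    (hlow : ∀ i j : Fin s, i < j → L i j = 0)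
    (hdiag : ∀ i, L i i = 1)
    (hbnd : ∀ i j : Fin s, j ≤ i → |L i j| ≤ 1)
    (σ : Fin s → ℝ) (hσ0 : ∀ i, 0 ≤ σ i) (hσanti : Antitone σ)
    (e : Equiv.Perm (Fin s))
    (hσ : ∀ i, (σ i) ^ 2 = (Matrix.isHermitian_conjTranspose_mul_self L).eigenvalues (e i))
    (k : ℕ) (hk2 : 2 ≤ k) (hks : 2 * k < s) :
    ((k - 1 : ℝ) / (s:ℝ) ^ 2) ^ (((k:ℝ) - 1) / (s:ℝ)) ≤ σ ⟨k - 1, by omega⟩ := by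
  have hA := Matrix.isHermitian_conjTranspose_mul_self L
  set t := k - 1 with ht
  have hts : t < s := by omega
  have ht1 : 1 ≤ t := by omega
  have hspos : (0:ℝ) < s := by positivity
  have htpos : (0:ℝ) < t := by exact_mod_cast ht1
  set m := s - t with hm
  have hm1 : 1 ≤ m := by omega
  have hmR : (t:ℝ) + m = s := by
    have : t + m = s := by omega
    exact_mod_cast this
  have htm : (t:ℝ) ≤ m := by
    have : 2 * t ≤ s := by omega
    have h2 : (2*t:ℕ) ≤ (s:ℕ) := this
    have := (Nat.cast_le (α := ℝ)).mpr h2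
    push_cast at this
    linarith [hmR]
  -- determinant of L
  have hdet : L.det = 1 := by
    have hbt : Lᵀ.BlockTriangular id := fun i j hij => hlow j i hij
    rw [← Matrix.det_transpose, Matrix.det_of_upperTriangular hbt]
    simp [Matrix.transpose_apply, hdiag]
  -- product of eigenvalues = 1
  have hprodμ : ∏ i, hA.eigenvalues i = 1 := by
    have h1 := hA.det_eq_prod_eigenvalues
    rw [Matrix.det_mul, Matrix.det_conjTranspose, hdet] at h1
    have : (1:ℝ) = ∏ i, hA.eigenvalues i := by simpa using h1
    exact this.symm
  -- trace = sum of eigenvalues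
  have htrμ : (Lᴴ * L).trace = ∑ i, hA.eigenvalues i := by
    simpa using hA.trace_eq_sum_eigenvalues
  -- trace bound
  have hentry : ∀ i j : Fin s, L i j * L i j ≤ 1 := by
    intro i j
    rcases le_or_gt j i with h | h
    · have h1 := hbnd i j h
      nlinarith [abs_nonneg (L i j), sq_abs (L i j), sq_nonneg (L i j)]
    · rw [hlow i j h]; norm_num
  have htr_le : (Lᴴ * L).trace ≤ (s:ℝ)^2 := by
    calc (Lᴴ * L).trace = ∑ j, ∑ i, L i j * L i j := by
          simp [Matrix.trace, Matrix.mul_apply, Matrix.diag, Matrix.conjTranspose_apply,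
            star_trivial]
      _ ≤ ∑ _j : Fin s, ∑ _i : Fin s, (1:ℝ) := by
          refine Finset.sum_le_sum fun j _ => Finset.sum_le_sum fun i _ => hentry i j
      _ = (s:ℝ)^2 := by simp [sq]
  -- facts about σ
  have hsum : ∑ i, (σ i)^2 ≤ (s:ℝ)^2 := by
    calc ∑ i, (σ i)^2 = ∑ i, hA.eigenvalues (e i) := by simp [hσ]
      _ = ∑ i, hA.eigenvalues i := Equiv.sum_comp e _
      _ = (Lᴴ * L).trace := htrμ.symm
      _ ≤ _ := htr_le
  have hprod : ∏ i, (σ i)^2 = 1 := by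
    calc ∏ i, (σ i)^2 = ∏ i, hA.eigenvalues (e i) := by simp [hσ]
      _ = ∏ i, hA.eigenvalues i := Equiv.prod_comp e _
      _ = 1 := hprodμ
  -- the filter set
  set F : Finset (Fin s) := univ.filter (fun i : Fin s => (i:ℕ) < t) with hF
  have hcardF : F.card = t := by
    rw [hF, Finset.card_filter, Fin.sum_univ_eq_sum_range (fun i => if i < t then 1 else 0),
      ← Finset.card_filter]
    have hr : (Finset.range s).filter (· < t) = Finset.range t := by
      ext x; simp; omega
    rw [hr, Finset.card_range]
  have hcardFc : Fᶜ.card = m := by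
    rw [Finset.card_compl, hcardF]; simp [hm]
  set c := σ ⟨t, hts⟩ with hc
  have hc0 : 0 ≤ c := hσ0 _
  set P := ∏ i ∈ F, (σ i)^2 with hP
  set Q := ∏ i ∈ Fᶜ, (σ i)^2 with hQdef
  have hP0 : 0 ≤ P := Finset.prod_nonneg fun i _ => sq_nonneg _
  have hQ0 : 0 ≤ Q := Finset.prod_nonneg fun i _ => sq_nonneg _
  have hPQ : P * Q = 1 := by
    rw [hP, hQdef, Finset.prod_mul_prod_compl]; exact hprod
  have hQle : Q ≤ c ^ (2*m) := by
    calc Q ≤ ∏ _i ∈ Fᶜ, c^2 := by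
          refine Finset.prod_le_prod (fun i _ => sq_nonneg _) (fun i hi => ?_)
          have hit : (⟨t, hts⟩ : Fin s) ≤ i := by
            simp only [hF, Finset.mem_compl, Finset.mem_filter, Finset.mem_univ, true_and,
              not_lt] at hi
            exact hi
          exact pow_le_pow_left₀ (hσ0 i) (hσanti hit) 2
      _ = (c^2) ^ (Fᶜ.card) := Finset.prod_const _
      _ = c ^ (2*m) := by rw [hcardFc, ← pow_mul]
  -- AM-GM
  have htne : (t:ℝ) ≠ 0 := ne_of_gt htpos
  have hw : ∑ _i ∈ F, (1/(t:ℝ)) = 1 := by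
    rw [Finset.sum_const, hcardF, nsmul_eq_mul]; field_simp
  have hgm := Real.geom_mean_le_arith_mean_weighted F (fun _ => 1/(t:ℝ)) (fun i => (σ i)^2)
      (fun i _ => by positivity) hw (fun i _ => sq_nonneg _)
  have hP1 : P ^ ((1:ℝ)/t) ≤ (s:ℝ)^2 / t := by
    rw [hP, ← Real.finset_prod_rpow F _ (fun i _ => sq_nonneg _) _]
    refine hgm.trans ?_
    have hsub : ∑ i ∈ F, (σ i)^2 ≤ (s:ℝ)^2 :=
      le_trans (Finset.sum_le_sum_of_subset_of_nonneg (Finset.subset_univ F)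
        (fun i _ _ => sq_nonneg _)) hsum
    calc ∑ i ∈ F, (1/(t:ℝ)) * (σ i)^2 = (1/(t:ℝ)) * ∑ i ∈ F, (σ i)^2 := by
          rw [Finset.mul_sum]
      _ ≤ (1/(t:ℝ)) * (s:ℝ)^2 := by
          refine mul_le_mul_of_nonneg_left hsub (by positivity)
      _ = (s:ℝ)^2 / t := by ring
  set D := (s:ℝ)^2 / t with hD
  have hD0 : 0 < D := by positivity
  have hPle : P ≤ D ^ t := by
    have h2 : (P ^ ((1:ℝ)/t)) ^ t ≤ D ^ t := pow_le_pow_left₀ (by positivity) hP1 t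
    rwa [← Real.rpow_natCast (P ^ ((1:ℝ)/t)) t, ← Real.rpow_mul hP0, one_div,
      inv_mul_cancel₀ htne, Real.rpow_one] at h2
  set B := (t:ℝ) / (s:ℝ)^2 with hB
  have hB0 : 0 < B := by positivity
  have hB1 : B ≤ 1 := by
    rw [hB, div_le_one (by positivity)]
    nlinarith [hmR, htm, (Nat.one_le_cast (α := ℝ)).mpr hm1]
  have hBD : B = D⁻¹ := by rw [hB, hD, inv_div]
  have hPpos : 0 < P := by
    rcases hP0.lt_or_eq with h | h
    · exact h
    · exfalso; rw [← h, zero_mul] at hPQ; norm_num at hPQ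
  have hkey : B ^ t ≤ c ^ (2*m) := by
    have hQeq : Q = P⁻¹ := eq_inv_of_mul_eq_one_left (by rw [mul_comm]; exact hPQ)
    have : (D ^ t)⁻¹ ≤ P⁻¹ := by
      exact inv_anti₀ hPpos hPle
    calc B ^ t = (D ^ t)⁻¹ := by rw [hBD, inv_pow]
      _ ≤ P⁻¹ := this
      _ = Q := hQeq.symm
      _ ≤ c ^ (2*m) := hQle
  -- final rpow manipulations
  have hmpos : (0:ℝ) < m := by exact_mod_cast hm1
  have hstep1 : B ^ (((t:ℕ):ℝ) / (s:ℝ)) ≤ B ^ ((t:ℝ) / (2*(m:ℝ))) := by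
    refine Real.rpow_le_rpow_of_exponent_ge hB0 hB1 ?_
    rw [div_le_div_iff₀ (by positivity) hspos]
    have hs2m : (s:ℝ) ≤ 2*m := by linarith
    exact mul_le_mul_of_nonneg_left hs2m htpos.le
  have hstep2 : B ^ ((t:ℝ) / (2*(m:ℝ))) ≤ c := by
    refine le_of_pow_le_pow_left₀ (n := 2*m) (by omega) hc0 ?_
    have hx : (B ^ ((t:ℝ) / (2*(m:ℝ)))) ^ (2*m) = B ^ (t:ℕ) := by
      rw [← Real.rpow_natCast (B ^ ((t:ℝ) / (2*(m:ℝ)))) (2*m), ← Real.rpow_mul hB0.le]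
      rw [show (((2*m:ℕ):ℝ)) = 2*(m:ℝ) by push_cast; ring]
      rw [div_mul_cancel₀ _ (by positivity : 2*(m:ℝ) ≠ 0), Real.rpow_natCast]
    rw [hx]
    exact hkey
  have hcast : ((t:ℕ):ℝ) = (k:ℝ) - 1 := by
    rw [ht, Nat.cast_sub (by omega)]; norm_num
  rw [← hcast]
  exact hstep1.trans hstep2
end
end

section
/- Let V ⊆ ℝ^d be a finite set, let U ⊆ V be nonempty, and let α > 0. Suppose that for every v ∈ V and every x ∈ ℝ^d one has ⟨v,x⟩² ≤ α · max_{u∈U} ⟨u,x⟩² (i.e., U is a weak α-spectral spanner of V). Then U is an α-spectral spanner of V: for every v ∈ V there exists a probability distribution μ_v on U (weights μ_v : U → [0,1] with Σ_{u∈U} μ_v(u) = 1) such that v vᵀ ⪯ α · Σ_{u∈U} μ_v(u) u uᵀ in the Loewner order. -/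
/-!
STATEMENT 8: Let V ⊆ ℝ^d be finite, U ⊆ V nonempty, α > 0. Suppose for every v ∈ V
and x ∈ ℝ^d one has ⟨v,x⟩² ≤ α · max_{u∈U} ⟨u,x⟩² (U is a weak α-spectral spanner
of V). Then U is an α-spectral spanner of V: for every v ∈ V there is a probability
distribution μ_v on U with v vᵀ ⪯ α · Σ_{u∈U} μ_v(u) u uᵀ in the Loewner order.
-/

open Matrix Finset

noncomputable section

/-- "Outer product" of two vectors as a plain function on pairs. -/
def ot {d : ℕ} (a b : Fin d → ℝ) : (Fin d × Fin d) → ℝ := fun p => a p.1 * b p.2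

/-- The set of functions on pairs whose associated quadratic form is nonnegative. -/
def PSDset (d : ℕ) : Set ((Fin d × Fin d) → ℝ) :=
  {y | ∀ x : Fin d → ℝ, 0 ≤ ∑ p : Fin d × Fin d, x p.1 * x p.2 * y p}

lemma ot_expand_left {d : ℕ} (a b : Fin d → ℝ) :
    ot a b = ∑ j, a j • ot (Pi.single j 1) b := by
  funext p
  rw [Finset.sum_apply,
    show (∑ j, (a j • ot (Pi.single j 1) b) p)
      = ∑ j, (if p.1 = j then a j * b p.2 else 0) from
    Finset.sum_congr rfl fun j _ => by
      simp only [Pi.smul_apply, smul_eq_mul, ot, Pi.single_apply]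
      split <;> simp, Finset.sum_ite_eq]
  simp [ot]

lemma ot_expand_right {d : ℕ} (a b : Fin d → ℝ) :
    ot a b = ∑ j, b j • ot a (Pi.single j 1) := by
  funext p
  rw [Finset.sum_apply,
    show (∑ j, (b j • ot a (Pi.single j 1)) p)
      = ∑ j, (if p.2 = j then a p.1 * b j else 0) from
    Finset.sum_congr rfl fun j _ => by
      simp only [Pi.smul_apply, smul_eq_mul, ot, Pi.single_apply]
      split <;> simp <;> ring, Finset.sum_ite_eq]
  simp [ot]

lemma ot_add_left {d : ℕ} (a a' b : Fin d → ℝ) :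
    ot (a + a') b = ot a b + ot a' b := by
  funext p; simp [ot, add_mul]

lemma ot_add_right {d : ℕ} (a b b' : Fin d → ℝ) :
    ot a (b + b') = ot a b + ot a b' := by
  funext p; simp [ot, mul_add]

lemma ot_smul_left {d : ℕ} (c : ℝ) (a b : Fin d → ℝ) :
    ot (c • a) b = c • ot a b := by
  funext p; simp [ot]; ring

lemma ot_smul_right {d : ℕ} (c : ℝ) (a b : Fin d → ℝ) :
    ot a (c • b) = c • ot a b := by
  funext p; simp [ot]; ring

lemma PSDset_convex (d : ℕ) : Convex ℝ (PSDset d) := by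
  intro y hy z hz a b ha hb hab x
  have key : (∑ p : Fin d × Fin d, x p.1 * x p.2 * (a • y + b • z) p)
      = a * ∑ p : Fin d × Fin d, x p.1 * x p.2 * y p
        + b * ∑ p : Fin d × Fin d, x p.1 * x p.2 * z p := by
    rw [Finset.mul_sum, Finset.mul_sum, ← Finset.sum_add_distrib]
    refine Finset.sum_congr rfl fun p _ => ?_
    simp only [Pi.add_apply, Pi.smul_apply, smul_eq_mul]
    ring
  show (0:ℝ) ≤ _
  rw [key]
  exact add_nonneg (mul_nonneg ha (hy x)) (mul_nonneg hb (hz x))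

lemma PSDset_closed (d : ℕ) : IsClosed (PSDset d) := by
  have : PSDset d = ⋂ x : Fin d → ℝ,
      {y : (Fin d × Fin d) → ℝ | 0 ≤ ∑ p : Fin d × Fin d, x p.1 * x p.2 * y p} := by
    ext y; simp only [PSDset, Set.mem_iInter, Set.mem_setOf_eq]
  rw [this]
  refine isClosed_iInter fun x => isClosed_le continuous_const ?_
  exact continuous_finset_sum _ fun p _ => continuous_const.mul (continuous_apply p)

lemma PSDset_smul {d : ℕ} (c : ℝ) (hc : 0 ≤ c) {y : (Fin d × Fin d) → ℝ}
    (hy : y ∈ PSDset d) : c • y ∈ PSDset d := by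
  intro x
  have key : (∑ p : Fin d × Fin d, x p.1 * x p.2 * (c • y) p)
      = c * ∑ p : Fin d × Fin d, x p.1 * x p.2 * y p := by
    rw [Finset.mul_sum]
    refine Finset.sum_congr rfl fun p _ => ?_
    simp only [Pi.smul_apply, smul_eq_mul]; ring
  show (0:ℝ) ≤ _
  rw [key]
  exact mul_nonneg hc (hy x)

lemma PSDset_zero (d : ℕ) : (0 : (Fin d × Fin d) → ℝ) ∈ PSDset d := by
  intro x; simp [PSDset]

lemma PSDset_ot_self {d : ℕ} (x : Fin d → ℝ) : ot x x ∈ PSDset d := by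
  intro z
  have key : (∑ p : Fin d × Fin d, z p.1 * z p.2 * ot x x p)
      = (∑ i, z i * x i) * (∑ j, z j * x j) := by
    rw [Finset.sum_mul_sum, Fintype.sum_prod_type]
    exact Finset.sum_congr rfl fun i _ => Finset.sum_congr rfl fun j _ => by
      simp only [ot]; ring
  show (0:ℝ) ≤ _
  rw [key]
  exact mul_self_nonneg _

theorem weak_spanner_is_strong_spanner
    {d : ℕ} (V U : Finset (Fin d → ℝ)) (hUV : U ⊆ V) (hUne : U.Nonempty)
    (α : ℝ) (hα : 0 < α)
    (hweak : ∀ v ∈ V, ∀ x : Fin d → ℝ,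
      (v ⬝ᵥ x) ^ 2 ≤ α * U.sup' hUne (fun u => (u ⬝ᵥ x) ^ 2)) :
    ∀ v ∈ V, ∃ μ : (Fin d → ℝ) → ℝ,
      (∀ u, 0 ≤ μ u) ∧ (∑ u ∈ U, μ u) = 1 ∧
      (α • (∑ u ∈ U, μ u • outer u) - outer v).PosSemidef := by
  classical
  intro v hv
  by_contra hcon
  push_neg at hcon
  -- the linear map from weights to the matrix-like function
  let φ : ({u // u ∈ U} → ℝ) →ₗ[ℝ] ((Fin d × Fin d) → ℝ) :=
    { toFun := fun w => ∑ i : {u // u ∈ U}, w i • (α • ot i.1 i.1 - ot v v)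
      map_add' := by
        intro w w'
        simp only [Pi.add_apply, add_smul, Finset.sum_add_distrib]
      map_smul' := by
        intro c w
        simp only [Pi.smul_apply, smul_eq_mul, RingHom.id_apply, ← smul_smul, Finset.smul_sum] }
  have hφ : ∀ w, φ w = ∑ i : {u // u ∈ U}, w i • (α • ot i.1 i.1 - ot v v) := fun _ => rfl
  have hCconv : Convex ℝ (φ '' (stdSimplex ℝ {u // u ∈ U})) :=
    (convex_stdSimplex ℝ _).linear_image φ
  have hCcomp : IsCompact (φ '' (stdSimplex ℝ {u // u ∈ U})) := by
    apply (isCompact_stdSimplex _ _).image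
    apply continuous_finset_sum
    intro i _
    exact ((continuous_apply i).smul continuous_const)
  -- Disjointness: a point of C in P would give the desired distribution
  have hdisj : Disjoint (φ '' (stdSimplex ℝ {u // u ∈ U})) (PSDset d) := by
    rw [Set.disjoint_left]
    rintro y ⟨w, hw, rfl⟩ hyP
    set μ : (Fin d → ℝ) → ℝ := fun u => if h : u ∈ U then w ⟨u, h⟩ else 0 with hμ
    have hμU : ∀ i : {u // u ∈ U}, μ i.1 = w i := by
      intro i
      simp only [hμ, dif_pos i.2]
    have hμ0 : ∀ u, 0 ≤ μ u := by
      intro u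
      by_cases h : u ∈ U
      · rw [hμ]; simpa only [dif_pos h] using hw.1 _
      · simp [hμ, dif_neg h]
    have hμsum : (∑ u ∈ U, μ u) = 1 := by
      rw [← Finset.sum_coe_sort U μ,
        show (∑ i : {u // u ∈ U}, μ i.1) = ∑ i : {u // u ∈ U}, w i from
          Finset.sum_congr rfl fun i _ => hμU i]
      exact hw.2
    refine hcon μ hμ0 hμsum ?_
    -- entries of the matrix agree with φ w
    have hentry : ∀ p : Fin d × Fin d,
        (α • (∑ u ∈ U, μ u • outer u) - outer v) p.1 p.2 = φ w p := by
      intro p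
      have hL : (α • (∑ u ∈ U, μ u • outer u) - outer v) p.1 p.2
          = α * (∑ u ∈ U, μ u * (u p.1 * u p.2)) - v p.1 * v p.2 := by
        simp only [Matrix.sub_apply, Matrix.smul_apply, Matrix.sum_apply, outer,
          Matrix.vecMulVec_apply, smul_eq_mul]
      have hR : φ w p = (∑ i : {u // u ∈ U}, w i * (α * (i.1 p.1 * i.1 p.2)))
          - (∑ i : {u // u ∈ U}, w i) * (v p.1 * v p.2) := by
        rw [hφ, Finset.sum_apply, Finset.sum_mul, ← Finset.sum_sub_distrib]
        refine Finset.sum_congr rfl fun i _ => ?_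
        simp only [Pi.smul_apply, Pi.sub_apply, smul_eq_mul, ot]
        ring
      rw [hL, hR, hw.2,
        show (∑ u ∈ U, μ u * (u p.1 * u p.2))
          = ∑ i : {u // u ∈ U}, w i * (i.1 p.1 * i.1 p.2) by
          rw [← Finset.sum_coe_sort U (fun u => μ u * (u p.1 * u p.2))]
          exact Finset.sum_congr rfl fun i _ => by rw [hμU i],
        Finset.mul_sum,
        show (∑ i : {u // u ∈ U}, α * (w i * (i.1 p.1 * i.1 p.2)))
          = ∑ i : {u // u ∈ U}, w i * (α * (i.1 p.1 * i.1 p.2)) from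
          Finset.sum_congr rfl fun i _ => by ring]
      ring
    have hsym : ∀ i j : Fin d, (α • (∑ u ∈ U, μ u • outer u) - outer v) i j
        = (α • (∑ u ∈ U, μ u • outer u) - outer v) j i := by
      intro i j
      simp only [Matrix.sub_apply, Matrix.smul_apply, Matrix.sum_apply, outer,
        Matrix.vecMulVec_apply, smul_eq_mul]
      rw [show (∑ u ∈ U, μ u * (u i * u j)) = ∑ u ∈ U, μ u * (u j * u i) from
        Finset.sum_congr rfl fun u _ => by ring, mul_comm (v i) (v j)]
    rw [Matrix.posSemidef_iff_dotProduct_mulVec]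
    constructor
    · -- Hermitian
      ext i j
      rw [Matrix.conjTranspose_apply, star_trivial]
      exact hsym j i
    · intro z
      have h := hyP z
      rw [Fintype.sum_prod_type] at h
      have heq : star z ⬝ᵥ ((α • (∑ u ∈ U, μ u • outer u) - outer v) *ᵥ z)
          = ∑ i, ∑ j, z (i, j).1 * z (i, j).2 * φ w (i, j) := by
        rw [show star z = z from funext fun i => star_trivial _, dotProduct]
        refine Finset.sum_congr rfl fun i _ => ?_
        rw [show ((α • (∑ u ∈ U, μ u • outer u) - outer v) *ᵥ z) i
            = ∑ j, (α • (∑ u ∈ U, μ u • outer u) - outer v) i j * z j from by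
          simp [Matrix.mulVec, dotProduct], Finset.mul_sum]
        refine Finset.sum_congr rfl fun j _ => ?_
        rw [← hentry (i, j)]
        ring
      rw [heq]
      exact h
  -- separation
  obtain ⟨f, s, t, hfs, hst, hft⟩ :=
    geometric_hahn_banach_compact_closed hCconv hCcomp (PSDset_convex d) (PSDset_closed d) hdisj
  have ht0 : t < 0 := by simpa using hft 0 (PSDset_zero d)
  have hfP : ∀ y ∈ PSDset d, 0 ≤ f y := by
    intro y hy
    by_contra hneg
    push_neg at hneg
    have hc : (0:ℝ) ≤ (t - 1) / f y := by
      exact div_nonneg_iff.mpr (Or.inr ⟨by linarith, hneg.le⟩)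
    have := hft _ (PSDset_smul _ hc hy)
    rw [_root_.map_smul, smul_eq_mul, div_mul_cancel₀ _ (ne_of_lt hneg)] at this
    linarith
  -- the bilinear form
  set B : (Fin d → ℝ) → (Fin d → ℝ) → ℝ := fun a b => f (ot a b) with hB
  have hBxx : ∀ x : Fin d → ℝ, 0 ≤ B x x := fun x => hfP _ (PSDset_ot_self x)
  -- bilinearity facts
  have hBexp1 : ∀ a b : Fin d → ℝ, B a b = ∑ j, a j * B (Pi.single j 1) b := by
    intro a b
    show f (ot a b) = _
    rw [ot_expand_left a b, _root_.map_sum]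
    exact Finset.sum_congr rfl fun j _ => by rw [_root_.map_smul, smul_eq_mul]
  have hBexp2 : ∀ a b : Fin d → ℝ, B a b = ∑ j, b j * B a (Pi.single j 1) := by
    intro a b
    show f (ot a b) = _
    rw [ot_expand_right a b, _root_.map_sum]
    exact Finset.sum_congr rfl fun j _ => by rw [_root_.map_smul, smul_eq_mul]
  have hBaddl : ∀ a a' b : Fin d → ℝ, B (a + a') b = B a b + B a' b := by
    intro a a' b; show f _ = f _ + f _; rw [ot_add_left, _root_.map_add]
  have hBaddr : ∀ a b b' : Fin d → ℝ, B a (b + b') = B a b + B a b' := by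
    intro a b b'; show f _ = f _ + f _; rw [ot_add_right, _root_.map_add]
  have hBsmull : ∀ (c : ℝ) (a b : Fin d → ℝ), B (c • a) b = c * B a b := by
    intro c a b; show f _ = c * f _; rw [ot_smul_left, _root_.map_smul, smul_eq_mul]
  have hBsmulr : ∀ (c : ℝ) (a b : Fin d → ℝ), B a (c • b) = c * B a b := by
    intro c a b; show f _ = c * f _; rw [ot_smul_right, _root_.map_smul, smul_eq_mul]
  -- strict separation on point masses
  have hkey : ∀ u ∈ U, α * B u u < B v v := by
    intro u hu
    have hmem : (α • ot u u - ot v v) ∈ φ '' (stdSimplex ℝ {u // u ∈ U}) := by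
      refine ⟨Pi.single ⟨u, hu⟩ 1, single_mem_stdSimplex ℝ _, ?_⟩
      rw [hφ, Finset.sum_eq_single (⟨u, hu⟩ : {u // u ∈ U})]
      · simp
      · intro i _ hne; rw [Pi.single_apply, if_neg hne, zero_smul]
      · intro h; exact absurd (Finset.mem_univ _) h
    have h1 := hfs _ hmem
    have h2 : f (α • ot u u - ot v v) = α * B u u - B v v := by
      rw [_root_.map_sub, _root_.map_smul, smul_eq_mul]
    rw [h2] at h1
    linarith
  -- Cauchy–Schwarz for the symmetrized form
  have hCS : ∀ a b : Fin d → ℝ, (B a b + B b a) ^ 2 ≤ 4 * (B a a * B b b) := by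
    intro a b
    have hq : ∀ c : ℝ, 0 ≤ B a a * (c * c) + (B a b + B b a) * c + B b b := by
      intro c
      have h := hBxx (c • a + b)
      simp only [hBaddl, hBaddr, hBsmull, hBsmulr] at h
      nlinarith [h]
    have h := discrim_le_zero hq
    rw [discrim] at h
    nlinarith [h]
  -- the killer vector
  set x : Fin d → ℝ := fun j => B (Pi.single j 1) v + B v (Pi.single j 1) with hx
  have hdot : ∀ a : Fin d → ℝ, a ⬝ᵥ x = B a v + B v a := by
    intro a
    rw [dotProduct, hBexp1 a v, hBexp2 v a, ← Finset.sum_add_distrib]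
    refine Finset.sum_congr rfl fun j _ => ?_
    rw [hx]
    ring
  obtain ⟨u0, hu0U, hsup⟩ := Finset.exists_mem_eq_sup' hUne (fun u => (u ⬝ᵥ x) ^ 2)
  have hweakx := hweak v hv x
  rw [hsup, hdot v, hdot u0] at hweakx
  have hβ : 0 ≤ B v v := hBxx v
  have hu0 : α * B u0 u0 < B v v := hkey u0 hu0U
  have hu0' : 0 ≤ B u0 u0 := hBxx u0
  have hβpos : 0 < B v v := lt_of_le_of_lt (by positivity) hu0
  have hcs := hCS u0 v
  nlinarith [mul_le_mul_of_nonneg_left hcs hα.le, mul_lt_mul_of_pos_right hu0 hβpos,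
    sq_nonneg (B u0 v + B v u0), hβpos]
end
end

section
/- Let V ⊆ ℝ^d be a finite nonempty set of vectors and let k, m be integers with 1 ≤ k < d and m > 2k. Then there exists a nonempty subset U ⊆ V with |U| ≤ m such that for every v ∈ V, writing w for the orthogonal projection of v onto the orthogonal complement of the linear span of U, one has w wᵀ ⪯_k 2·m^{2k/m} · (1/|U|)·Σ_{u∈U} u uᵀ. -/
/-!
STATEMENT 9: Let V ⊆ ℝ^d be finite nonempty, 1 ≤ k < d, m > 2k. Then there is a
nonempty U ⊆ V with |U| ≤ m such that for every v ∈ V, writing w for the orthogonal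
projection of v onto the orthogonal complement of the span of U (i.e. w is
orthogonal to span U and v − w ∈ span U), one has
w wᵀ ⪯_k 2·m^{2k/m} · (1/|U|)·Σ_{u∈U} u uᵀ.
-/

open Matrix Finset

noncomputable section

namespace S9


variable {d : ℕ}

lemma dot_nonneg (x : Fin d → ℝ) : 0 ≤ x ⬝ᵥ x :=
  Finset.sum_nonneg fun i _ => mul_self_nonneg _

lemma dot_sq_le (x y : Fin d → ℝ) : (x ⬝ᵥ y)^2 ≤ (x ⬝ᵥ x) * (y ⬝ᵥ y) := by
  simpa [dotProduct, sq] using Finset.sum_mul_sq_le_sq_mul_sq Finset.univ x y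

lemma frob_outer (w : Fin d → ℝ) (P : Matrix (Fin d) (Fin d) ℝ) :
    frob (outer w) P = w ⬝ᵥ (P *ᵥ w) := by
  simp only [frob, outer, Matrix.vecMulVec_apply, dotProduct, Matrix.mulVec,
    Finset.mul_sum]
  exact Finset.sum_congr rfl fun i _ => Finset.sum_congr rfl fun j _ => by ring

lemma frob_add (M N P : Matrix (Fin d) (Fin d) ℝ) :
    frob (M + N) P = frob M P + frob N P := by
  simp [frob, add_mul, Finset.sum_add_distrib]

lemma frob_smul (c : ℝ) (M P : Matrix (Fin d) (Fin d) ℝ) :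
    frob (c • M) P = c * frob M P := by
  simp [frob, Finset.mul_sum, mul_assoc]

lemma frob_sum {α : Type*} (s : Finset α) (f : α → Matrix (Fin d) (Fin d) ℝ)
    (P : Matrix (Fin d) (Fin d) ℝ) :
    frob (∑ a ∈ s, f a) P = ∑ a ∈ s, frob (f a) P := by
  classical
  induction s using Finset.induction with
  | empty => simp [frob]
  | insert _ _ h ih => rw [Finset.sum_insert h, frob_add, ih, Finset.sum_insert h]

lemma dot_span_zero (w : Fin d → ℝ) (s : Set (Fin d → ℝ)) (hw : ∀ u ∈ s, w ⬝ᵥ u = 0) :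
    ∀ x ∈ Submodule.span ℝ s, w ⬝ᵥ x = 0 := by
  intro x hx
  induction hx using Submodule.span_induction with
  | mem u hu => exact hw u hu
  | zero => simp
  | add a b _ _ ha hb => rw [dotProduct_add, ha, hb, add_zero]
  | smul c a _ ha => rw [dotProduct_smul, ha, smul_zero]

/-- Existence of the orthogonal projection onto the span of a finite tuple. -/
lemma exists_proj : ∀ (n : ℕ) (g : Fin n → (Fin d → ℝ)) (v : Fin d → ℝ),
    ∃ w : Fin d → ℝ, v - w ∈ Submodule.span ℝ (Set.range g) ∧ ∀ j, w ⬝ᵥ g j = 0 := by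
  intro n
  induction n with
  | zero =>
    intro g v
    exact ⟨v, by simp, fun j => j.elim0⟩
  | succ n ih =>
    intro g v
    obtain ⟨w₁, hw₁m, hw₁o⟩ := ih (g ∘ Fin.castSucc) v
    obtain ⟨z, hzm, hzo⟩ := ih (g ∘ Fin.castSucc) (g (Fin.last n))
    set c : ℝ := (w₁ ⬝ᵥ z) / (z ⬝ᵥ z) with hc
    have hsub : Submodule.span ℝ (Set.range (g ∘ Fin.castSucc)) ≤
        Submodule.span ℝ (Set.range g) :=
      Submodule.span_mono (Set.range_comp_subset_range _ _)
    have hz : z ∈ Submodule.span ℝ (Set.range g) := by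
      have h1 : g (Fin.last n) ∈ Submodule.span ℝ (Set.range g) :=
        Submodule.subset_span ⟨Fin.last n, rfl⟩
      have h2 : g (Fin.last n) - z ∈ Submodule.span ℝ (Set.range g) := hsub hzm
      have : z = g (Fin.last n) - (g (Fin.last n) - z) := by abel
      rw [this]; exact Submodule.sub_mem _ h1 h2
    refine ⟨w₁ - c • z, ?_, ?_⟩
    · have : v - (w₁ - c • z) = (v - w₁) + c • z := by abel
      rw [this]
      exact Submodule.add_mem _ (hsub hw₁m) (Submodule.smul_mem _ _ hz)
    · have hwspan : ∀ x ∈ Submodule.span ℝ (Set.range (g ∘ Fin.castSucc)),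
          (w₁ - c • z) ⬝ᵥ x = 0 := by
        apply dot_span_zero
        rintro u ⟨j', rfl⟩
        rw [sub_dotProduct, smul_dotProduct, hw₁o j', hzo j']
        simp
      intro j
      refine Fin.lastCases ?_ ?_ j
      · have hgl : g (Fin.last n) = z + (g (Fin.last n) - z) := by abel
        rw [hgl, dotProduct_add]
        have h2 : (w₁ - c • z) ⬝ᵥ (g (Fin.last n) - z) = 0 := hwspan _ hzm
        have h3 : (w₁ - c • z) ⬝ᵥ z = 0 := by
          rcases eq_or_ne (z ⬝ᵥ z) 0 with h0 | h0
          · have hz0 : z = 0 := dotProduct_self_eq_zero.mp h0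
            simp [hz0]
          · rw [sub_dotProduct, smul_dotProduct, hc, smul_eq_mul,
              div_mul_cancel₀ _ h0, sub_self]
        rw [h2, h3, add_zero]
      · intro j'
        exact hwspan (g (Fin.castSucc j'))
          (Submodule.subset_span ⟨j', rfl⟩)

/-- residual minimality -/
lemma residual_min (s : Set (Fin d → ℝ)) (v w x : Fin d → ℝ)
    (hvw : v - w ∈ Submodule.span ℝ s)
    (hw : ∀ u ∈ Submodule.span ℝ s, w ⬝ᵥ u = 0)
    (hx : x ∈ Submodule.span ℝ s) :
    w ⬝ᵥ w ≤ (v - x) ⬝ᵥ (v - x) := by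
  have hy : v - x = w + ((v - w) - x) := by abel
  have hmem : (v - w) - x ∈ Submodule.span ℝ s := Submodule.sub_mem _ hvw hx
  set y := (v - w) - x with hydef
  have h0 : w ⬝ᵥ y = 0 := hw y hmem
  have h0' : y ⬝ᵥ w = 0 := by rwa [dotProduct_comm]
  rw [hy, add_dotProduct, dotProduct_add, dotProduct_add, h0, h0']
  have := dot_nonneg y
  linarith



variable {d : ℕ}

lemma submatrix_one_det {n : ℕ} (i j : Fin (n+1)) :
    det ((1 : Matrix (Fin (n+1)) (Fin (n+1)) ℝ).submatrix i.succAbove j.succAbove)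
      = if i = j then 1 else 0 := by
  rcases eq_or_ne i j with rfl | hij
  · have h1 : (1 : Matrix (Fin (n+1)) (Fin (n+1)) ℝ).submatrix i.succAbove i.succAbove = 1 := by
      ext a b
      simp [Matrix.one_apply, Matrix.submatrix_apply,
        (Fin.succAbove_right_injective (p := i)).eq_iff]
    rw [h1, det_one, if_pos rfl]
  · obtain ⟨a₀, ha₀⟩ := Fin.exists_succAbove_eq (show j ≠ i from hij.symm)
    rw [if_neg hij]
    apply Matrix.det_eq_zero_of_row_eq_zero a₀
    intro b
    have hne : i.succAbove a₀ ≠ j.succAbove b := by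
      rw [ha₀]; exact (Fin.succAbove_ne j b).symm
    simp [Matrix.one_apply, hne]

lemma det_single_row {n : ℕ} (M : Matrix (Fin (n+1)) (Fin (n+1)) ℝ) (i : Fin (n+1)) (c : ℝ)
    (h : ∀ j, M i j = if j = i then c else 0) :
    det M = c * det (M.submatrix i.succAbove i.succAbove) := by
  rw [Matrix.det_succ_row M i, Finset.sum_eq_single i]
  · rw [h i, if_pos rfl]
    have he : ((-1 : ℝ)) ^ ((i : ℕ) + (i : ℕ)) = 1 := Even.neg_one_pow ⟨i, rfl⟩
    rw [he, one_mul]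
  · intro j _ hj
    rw [h j, if_neg hj, mul_zero, zero_mul]
  · intro hi; exact absurd (Finset.mem_univ i) hi

lemma det_updateRow_one {n : ℕ} (i : Fin (n+1)) (r : Fin (n+1) → ℝ) (hri : r i = 1) :
    det ((1 : Matrix (Fin (n+1)) (Fin (n+1)) ℝ).updateRow i r) = 1 := by
  have hsub : ∀ j : Fin (n+1),
      ((1 : Matrix (Fin (n+1)) (Fin (n+1)) ℝ).updateRow i r).submatrix i.succAbove j.succAbove
        = (1 : Matrix (Fin (n+1)) (Fin (n+1)) ℝ).submatrix i.succAbove j.succAbove := by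
    intro j; ext a b
    rw [Matrix.submatrix_apply, Matrix.updateRow_ne (Fin.succAbove_ne i a), Matrix.submatrix_apply]
  rw [Matrix.det_succ_row _ i, Finset.sum_eq_single i]
  · rw [hsub i, submatrix_one_det, if_pos rfl, Matrix.updateRow_self, hri]
    have he : ((-1 : ℝ)) ^ ((i : ℕ) + (i : ℕ)) = 1 := Even.neg_one_pow ⟨i, rfl⟩
    rw [he]; ring
  · intro j _ hj
    rw [hsub j, submatrix_one_det, if_neg (Ne.symm hj), mul_zero]
  · intro hi; exact absurd (Finset.mem_univ i) hi

lemma gram_apply {n : ℕ} (h : Fin n → Fin d → ℝ) (a b : Fin n) :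
    (Matrix.of h * (Matrix.of h)ᵀ) a b = h a ⬝ᵥ h b := by
  simp [Matrix.mul_apply, dotProduct]

/-- Master determinant identity: removing the orthogonal residual of row `i`. -/
lemma master {n : ℕ} (h : Fin (n+1) → Fin d → ℝ) (i : Fin (n+1)) (w : Fin d → ℝ)
    (hmem : h i - w ∈ Submodule.span ℝ (Set.range (h ∘ i.succAbove)))
    (horth : ∀ j, w ⬝ᵥ h (i.succAbove j) = 0) :
    det (Matrix.of h * (Matrix.of h)ᵀ) =
      (w ⬝ᵥ w) * det ((Matrix.of h * (Matrix.of h)ᵀ).submatrix i.succAbove i.succAbove) := by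
  classical
  obtain ⟨cs, hcs⟩ := (Submodule.mem_span_range_iff_exists_fun ℝ).mp hmem
  set r : Fin (n+1) → ℝ :=
    fun t => (if t = i then 1 else 0) - ∑ j, (if t = i.succAbove j then cs j else 0) with hr
  have hri : r i = 1 := by
    have hz : ∀ j : Fin n, (if i = i.succAbove j then cs j else 0) = 0 := by
      intro j; rw [if_neg (fun hh => (Fin.succAbove_ne i j) hh.symm)]
    simp [hr, hz]
  set E : Matrix (Fin (n+1)) (Fin (n+1)) ℝ := (1 : Matrix _ _ ℝ).updateRow i r with hE
  have hdetE : det E = 1 := det_updateRow_one i r hri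
  set h' : Fin (n+1) → Fin d → ℝ := Function.update h i w with hh'
  have hEh : E * Matrix.of h = Matrix.of h' := by
    ext a b
    rcases eq_or_ne a i with rfl | ha
    · rw [Matrix.mul_apply]
      have hrow : ∀ t, E a t = r t := fun t => by rw [hE, Matrix.updateRow_self]
      have expand : ∀ t : Fin (n+1), E a t * (Matrix.of h) t b
          = (if t = a then (1:ℝ) else 0) * h t b
            - ∑ j, (if t = a.succAbove j then cs j else 0) * h t b := by
        intro t; rw [hrow t, hr]
        simp only [Matrix.of_apply]
        rw [sub_mul, Finset.sum_mul]
      rw [Finset.sum_congr rfl fun t _ => expand t, Finset.sum_sub_distrib]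
      have e1 : ∑ t, (if t = a then (1:ℝ) else 0) * h t b = h a b := by
        simp
      have e2 : ∑ t, ∑ j, (if t = a.succAbove j then cs j else 0) * h t b
          = ∑ j, cs j * h (a.succAbove j) b := by
        rw [Finset.sum_comm]
        refine Finset.sum_congr rfl fun j _ => ?_
        simp
      have e3 : ∑ j, cs j * h (a.succAbove j) b = h a b - w b := by
        have hb := congrFun hcs b
        simpa [Finset.sum_apply, Pi.smul_apply, smul_eq_mul, Pi.sub_apply] using hb
      rw [e1, e2, e3]
      have : (Matrix.of h') a b = w b := by
        simp [hh', Matrix.of_apply, Function.update_self]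
      rw [this]; ring
    · rw [Matrix.mul_apply]
      have hrow : ∀ t, E a t = (1 : Matrix (Fin (n+1)) (Fin (n+1)) ℝ) a t :=
        fun t => by rw [hE, Matrix.updateRow_ne ha]
      simp only [hrow, Matrix.one_apply, Matrix.of_apply]
      have hupd : h' a = h a := Function.update_of_ne ha w h
      rw [hupd]
      simp [ite_mul]
  have hG' : Matrix.of h' * (Matrix.of h')ᵀ = E * (Matrix.of h * (Matrix.of h)ᵀ) * Eᵀ := by
    rw [← hEh, Matrix.transpose_mul]
    simp only [Matrix.mul_assoc]
  have hdet1 : det (Matrix.of h' * (Matrix.of h')ᵀ) = det (Matrix.of h * (Matrix.of h)ᵀ) := by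
    rw [hG', det_mul, det_mul, det_transpose, hdetE]; ring
  have hrowcond : ∀ j, (Matrix.of h' * (Matrix.of h')ᵀ) i j = if j = i then (w ⬝ᵥ w) else 0 := by
    intro j
    rw [gram_apply]
    rcases eq_or_ne j i with rfl | hj
    · rw [if_pos rfl]
      simp [hh', Function.update_self]
    · rw [if_neg hj]
      obtain ⟨j', hj'⟩ := Fin.exists_succAbove_eq hj
      have h1 : h' i = w := Function.update_self i w h
      have h2 : h' j = h j := Function.update_of_ne hj w h
      rw [h1, h2, ← hj']
      exact horth j'
  have hminor : (Matrix.of h' * (Matrix.of h')ᵀ).submatrix i.succAbove i.succAbove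
      = (Matrix.of h * (Matrix.of h)ᵀ).submatrix i.succAbove i.succAbove := by
    ext a b
    rw [Matrix.submatrix_apply, Matrix.submatrix_apply, gram_apply, gram_apply]
    rw [show h' (i.succAbove a) = h (i.succAbove a) from
          Function.update_of_ne (Fin.succAbove_ne i a) w h,
        show h' (i.succAbove b) = h (i.succAbove b) from
          Function.update_of_ne (Fin.succAbove_ne i b) w h]
  calc det (Matrix.of h * (Matrix.of h)ᵀ) = det (Matrix.of h' * (Matrix.of h')ᵀ) := hdet1.symm
    _ = (w ⬝ᵥ w) * det ((Matrix.of h' * (Matrix.of h')ᵀ).submatrix i.succAbove i.succAbove) :=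
        det_single_row _ i _ hrowcond
    _ = (w ⬝ᵥ w) * det ((Matrix.of h * (Matrix.of h)ᵀ).submatrix i.succAbove i.succAbove) := by
        rw [hminor]



lemma conjT {a b : Type*} (X : Matrix a b ℝ) : Xᴴ = Xᵀ := by
  ext i j; simp [Matrix.conjTranspose_apply]

lemma trace_mul_eq {a b : Type*} [Fintype a] [Fintype b] (M : Matrix a b ℝ) (N : Matrix b a ℝ) :
    Matrix.trace (M * N) = ∑ i, ∑ j, M i j * N j i := by
  simp [Matrix.trace, Matrix.diag, Matrix.mul_apply]

lemma trace_self_transpose_nonneg {a b : Type*} [Fintype a] [Fintype b] (X : Matrix a b ℝ) :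
    0 ≤ Matrix.trace (X * Xᵀ) := by
  rw [trace_mul_eq]
  refine Finset.sum_nonneg fun i _ => Finset.sum_nonneg fun j _ => ?_
  rw [Matrix.transpose_apply]
  exact mul_self_nonneg _

lemma trace_CS {a : Type*} [Fintype a] (Y Z : Matrix a a ℝ) :
    (Matrix.trace (Y * Z))^2 ≤ Matrix.trace (Y * Yᵀ) * Matrix.trace (Z * Zᵀ) := by
  have key := Finset.sum_mul_sq_le_sq_mul_sq (Finset.univ : Finset (a × a))
      (fun p => Y p.1 p.2) (fun p => Z p.2 p.1)
  have l1 : ∑ p : a × a, Y p.1 p.2 * Z p.2 p.1 = Matrix.trace (Y * Z) := by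
    rw [trace_mul_eq, Fintype.sum_prod_type]
  have l2 : ∑ p : a × a, (Y p.1 p.2)^2 = Matrix.trace (Y * Yᵀ) := by
    rw [trace_mul_eq, Fintype.sum_prod_type]
    exact Finset.sum_congr rfl fun i _ => Finset.sum_congr rfl fun j _ => by
      rw [Matrix.transpose_apply, sq]
  have l3 : ∑ p : a × a, (Z p.2 p.1)^2 = Matrix.trace (Z * Zᵀ) := by
    rw [trace_mul_eq, Fintype.sum_prod_type, Finset.sum_comm]
    exact Finset.sum_congr rfl fun i _ => Finset.sum_congr rfl fun j _ => by
      rw [Matrix.transpose_apply, sq]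
  rw [l1, l2, l3] at key
  exact key

lemma trace_idem {d : ℕ} (P : Matrix (Fin d) (Fin d) ℝ) (hP : P.IsHermitian) (hPP : P * P = P) :
    Matrix.trace P = (P.rank : ℝ) := by
  classical
  have heig : ∀ i, hP.eigenvalues i = 0 ∨ hP.eigenvalues i = 1 := by
    intro i
    have h1 := hP.mulVec_eigenvectorBasis i
    have h2 : P *ᵥ (P *ᵥ ⇑(hP.eigenvectorBasis i))
        = hP.eigenvalues i • (hP.eigenvalues i • ⇑(hP.eigenvectorBasis i)) := by
      rw [h1, Matrix.mulVec_smul, h1]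
    rw [Matrix.mulVec_mulVec, hPP, h1] at h2
    have hx : ⇑(hP.eigenvectorBasis i) ≠ 0 := by
      have hne := hP.eigenvectorBasis.orthonormal.ne_zero i
      intro hz
      apply hne
      ext j
      exact congrFun hz j
    have h3 : (hP.eigenvalues i - hP.eigenvalues i * hP.eigenvalues i) • ⇑(hP.eigenvectorBasis i)
        = 0 := by
      rw [sub_smul, mul_smul, ← h2, sub_self]
    rcases smul_eq_zero.mp h3 with h4 | h4
    · have : hP.eigenvalues i * (1 - hP.eigenvalues i) = 0 := by ring_nf; linarith [h4]
      rcases mul_eq_zero.mp this with h5 | h5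
      · exact Or.inl h5
      · right; linarith
    · exact absurd h4 hx
  have htr : Matrix.trace P = ∑ i, hP.eigenvalues i := by
    conv_lhs => rw [hP.spectral_theorem]
    rw [Unitary.conjStarAlgAut_apply, Matrix.trace_mul_comm, ← Matrix.mul_assoc]
    have hU : (star (hP.eigenvectorUnitary : Matrix (Fin d) (Fin d) ℝ))
        * (hP.eigenvectorUnitary : Matrix (Fin d) (Fin d) ℝ) = 1 :=
      Unitary.coe_star_mul_self hP.eigenvectorUnitary
    rw [hU, Matrix.one_mul, Matrix.trace_diagonal]
    simp [RCLike.ofReal_real_eq_id]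
  have hcard : P.rank = (Finset.univ.filter (fun i => hP.eigenvalues i ≠ 0)).card := by
    rw [hP.rank_eq_card_non_zero_eigs, Fintype.card_subtype]
  rw [htr, hcard]
  rw [Finset.card_filter]
  push_cast
  refine Finset.sum_congr rfl fun i _ => ?_
  rcases heig i with h0 | h1
  · simp [h0]
  · simp [h1]

lemma arith (k m : ℕ) (hk1 : 1 ≤ k) (hm : 2*k < m) :
    (m:ℝ)^2 ≤ 2 * (m:ℝ) ^ ((2*(k:ℝ))/(m:ℝ)) * ((m:ℝ) - k + 1)^2 := by
  have hk1' : (1:ℝ) ≤ (k:ℝ) := by exact_mod_cast hk1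
  have hm' : 2*(k:ℝ) + 1 ≤ (m:ℝ) := by exact_mod_cast hm
  have hm0 : (0:ℝ) < m := by linarith
  set x : ℝ := (2*(k:ℝ))/(m:ℝ) with hxdef
  have hx0 : 0 ≤ x := by positivity
  have hx1 : x ≤ 1 := by
    rw [hxdef, div_le_one hm0]; linarith
  have key : (m:ℝ) ^ (-x) ≤ 1 - x + x/m := by
    have he : (m:ℝ)^(-x) = Real.exp ((1-x) * 0 + x * (-Real.log m)) := by
      rw [Real.rpow_def_of_pos hm0]
      ring_nf
    have hconv := convexOn_exp.2 (Set.mem_univ (0:ℝ)) (Set.mem_univ (-Real.log m))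
      (by linarith : (0:ℝ) ≤ 1 - x) hx0 (by ring : (1-x) + x = 1)
    simp only [smul_eq_mul] at hconv
    rw [he]
    calc Real.exp ((1-x)*0 + x*(-Real.log m)) ≤ (1-x) * Real.exp 0 + x * Real.exp (-Real.log m) :=
          hconv
      _ = 1 - x + x/m := by
          rw [Real.exp_zero, Real.exp_neg, Real.exp_log hm0]
          ring
  have hmx : (0:ℝ) < (m:ℝ)^x := Real.rpow_pos_of_pos hm0 x
  have hsplit : (m:ℝ)^(-x) * (m:ℝ)^x = 1 := by
    rw [← Real.rpow_add hm0]; simp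
  have h1 : (m:ℝ)^2 * (m:ℝ)^(-x) ≤ (m:ℝ)^2 * (1 - x + x/m) :=
    mul_le_mul_of_nonneg_left key (by positivity)
  have h2 : (m:ℝ)^2 * (1 - x + x/m) = (m:ℝ)^2 - 2*k*m + 2*k := by
    rw [hxdef]; field_simp
  have h3 : (m:ℝ)^2 - 2*k*m + 2*k ≤ 2*((m:ℝ)-k+1)^2 := by nlinarith
  have h : (m:ℝ)^2 * (m:ℝ)^(-x) ≤ 2*((m:ℝ)-k+1)^2 := by linarith
  calc (m:ℝ)^2 = ((m:ℝ)^2 * (m:ℝ)^(-x)) * (m:ℝ)^x := by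
        rw [mul_assoc, hsplit, mul_one]
    _ ≤ (2*((m:ℝ)-k+1)^2) * (m:ℝ)^x := mul_le_mul_of_nonneg_right h (le_of_lt hmx)
    _ = 2 * (m:ℝ)^x * ((m:ℝ)-k+1)^2 := by ring


lemma dot_P_self {d : ℕ} (P : Matrix (Fin d) (Fin d) ℝ) (hsym : Pᵀ = P) (hPP : P * P = P)
    (w : Fin d → ℝ) : w ⬝ᵥ (P *ᵥ w) = (P *ᵥ w) ⬝ᵥ (P *ᵥ w) := by
  have h1 : (P *ᵥ w) ⬝ᵥ (P *ᵥ w) = ((P *ᵥ w) ᵥ* P) ⬝ᵥ w := Matrix.dotProduct_mulVec _ P w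
  have h2 : (P *ᵥ w) ᵥ* P = P *ᵥ w := by
    have e : (P *ᵥ w) ᵥ* P = (P *ᵥ w) ᵥ* (Pᵀ)ᵀ := by rw [Matrix.transpose_transpose]
    rw [e, Matrix.vecMul_transpose, hsym, Matrix.mulVec_mulVec, hPP]
  rw [h1, h2, dotProduct_comm]

lemma det_gram_nonneg {d n : ℕ} (h : Fin n → Fin d → ℝ) :
    0 ≤ det (Matrix.of h * (Matrix.of h)ᵀ) := by
  have hpsd : (Matrix.of h * (Matrix.of h)ᵀ).PosSemidef := by
    rw [← conjT]; exact Matrix.posSemidef_self_mul_conjTranspose _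
  rw [hpsd.1.det_eq_prod_eigenvalues]
  refine Finset.prod_nonneg fun i _ => ?_
  have := hpsd.eigenvalues_nonneg i
  simpa [RCLike.ofReal_real_eq_id] using this

/-- The easy (spanning) case. -/
lemma spanning_case {d : ℕ} (V U : Finset (Fin d → ℝ)) (k m : ℕ)
    (hspan : ∀ v ∈ V, v ∈ Submodule.span ℝ (U : Set (Fin d → ℝ))) :
    ∀ v ∈ V, ∀ w : Fin d → ℝ,
      v - w ∈ Submodule.span ℝ (U : Set (Fin d → ℝ)) →
      (∀ u ∈ Submodule.span ℝ (U : Set (Fin d → ℝ)), w ⬝ᵥ u = 0) →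
      PrecK k (outer w)
        ((2 * (m:ℝ) ^ ((2 * (k:ℝ)) / (m:ℝ)) * ((U.card : ℝ))⁻¹) • ∑ u ∈ U, outer u) := by
  intro v hv w hvw hworth P hPherm hPP hrank
  have hsym : Pᵀ = P := by rw [← conjT P]; exact hPherm
  have hwU : w ∈ Submodule.span ℝ (U : Set (Fin d → ℝ)) := by
    have h1 : w = v - (v - w) := by abel
    rw [h1]
    exact Submodule.sub_mem _ (hspan v hv) hvw
  have hw0 : w = 0 := dotProduct_self_eq_zero.mp (hworth w hwU)
  rw [frob_outer, frob_smul, frob_sum, hw0]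
  simp only [frob_outer]
  have hL : (0 : Fin d → ℝ) ⬝ᵥ (P *ᵥ (0 : Fin d → ℝ)) = 0 := by simp
  rw [hL]
  have hcoef : 0 ≤ 2 * (m:ℝ) ^ ((2 * (k:ℝ)) / (m:ℝ)) * ((U.card : ℝ))⁻¹ := by positivity
  refine mul_nonneg hcoef (Finset.sum_nonneg fun u _ => ?_)
  rw [dot_P_self P hsym hPP]
  exact dot_nonneg _

end S9

open S9

set_option maxHeartbeats 2000000 in
theorem greedy_volume_maximization_orthogonal_part
    {d : ℕ} (V : Finset (Fin d → ℝ)) (hV : V.Nonempty)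
    (k m : ℕ) (hk1 : 1 ≤ k) (hkd : k < d) (hm : 2 * k < m) :
    ∃ U : Finset (Fin d → ℝ), U ⊆ V ∧ U.Nonempty ∧ U.card ≤ m ∧
      ∀ v ∈ V, ∀ w : Fin d → ℝ,
        v - w ∈ Submodule.span ℝ (U : Set (Fin d → ℝ)) →
        (∀ u ∈ Submodule.span ℝ (U : Set (Fin d → ℝ)), w ⬝ᵥ u = 0) →
        PrecK k (outer w)
          ((2 * (m:ℝ) ^ ((2 * (k:ℝ)) / (m:ℝ)) * ((U.card : ℝ))⁻¹) • ∑ u ∈ U, outer u) := by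
  classical
  obtain ⟨v₀, hv₀⟩ := hV
  obtain ⟨m', rfl⟩ : ∃ m', m = m' + 1 := ⟨m - 1, by omega⟩
  obtain ⟨t, htV, htspan, htind⟩ := exists_linearIndependent ℝ (V : Set (Fin d → ℝ))
  have htfin : t.Finite := V.finite_toSet.subset htV
  by_cases hcard : htfin.toFinset.card ≤ m' + 1
  · -- easy case : a small spanning subset exists
    rcases htfin.toFinset.eq_empty_or_nonempty with he | hne
    · have ht0 : t = ∅ := by
        simpa using (Set.Finite.toFinset_eq_empty.mp he)
      refine ⟨{v₀}, Finset.singleton_subset_iff.mpr hv₀, ⟨v₀, Finset.mem_singleton_self _⟩,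
        by simp, spanning_case _ _ _ _ ?_⟩
      intro v hv
      have hv0 : v = (0 : Fin d → ℝ) := by
        have h1 : v ∈ Submodule.span ℝ (V : Set (Fin d → ℝ)) :=
          Submodule.subset_span (Finset.mem_coe.mpr hv)
        rw [← htspan, ht0, Submodule.span_empty, Submodule.mem_bot] at h1
        exact h1
      rw [hv0]
      exact Submodule.zero_mem _
    · refine ⟨htfin.toFinset, ?_, hne, hcard, spanning_case _ _ _ _ ?_⟩
      · intro x hx
        exact Finset.mem_coe.mp (htV (htfin.mem_toFinset.mp hx))
      · intro v hv
        have h1 : v ∈ Submodule.span ℝ (V : Set (Fin d → ℝ)) :=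
          Submodule.subset_span (Finset.mem_coe.mpr hv)
        rw [← htspan] at h1
        rwa [Set.Finite.coe_toFinset]
  · -- hard case
    push_neg at hcard
    -- an independent (m'+1)-tuple inside V
    obtain ⟨t', ht'sub, ht'card⟩ := Finset.exists_subset_card_eq (s := htfin.toFinset) (n := m'+1) hcard.le
    set e := t'.equivFinOfCardEq ht'card with he
    have hιmem : ∀ j : Fin (m'+1), ((e.symm j : (Fin d → ℝ))) ∈ t := by
      intro j
      exact htfin.mem_toFinset.mp (ht'sub (e.symm j).2)
    set ι : Fin (m'+1) → t := fun j => ⟨(e.symm j : (Fin d → ℝ)), hιmem j⟩ with hι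
    have hιinj : Function.Injective ι := by
      intro a b hab
      have h2 : ((ι a : (Fin d → ℝ))) = ((ι b : (Fin d → ℝ))) := congrArg Subtype.val hab
      exact e.symm.injective (Subtype.ext h2)
    set f₀ : Fin (m'+1) → (Fin d → ℝ) := fun j => ((ι j : (Fin d → ℝ))) with hf₀
    have hf₀ind : LinearIndependent ℝ f₀ := htind.comp ι hιinj
    have hf₀V : ∀ j, f₀ j ∈ V := fun j => Finset.mem_coe.mp (htV (ι j).2)
    -- positive definiteness of the Gram matrix of f₀
    have hpos : (Matrix.of f₀ * (Matrix.of f₀)ᵀ).PosDef := by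
      refine Matrix.PosDef.of_dotProduct_mulVec_pos ?_ ?_
      · rw [← conjT]; exact Matrix.isHermitian_mul_conjTranspose_self _
      · intro x hx
        have hstar : star x = x := by ext l; simp
        rw [hstar]
        have hmv : (Matrix.of f₀ * (Matrix.of f₀)ᵀ) *ᵥ x
            = Matrix.of f₀ *ᵥ ((Matrix.of f₀)ᵀ *ᵥ x) := by
          rw [Matrix.mulVec_mulVec]
        rw [hmv]
        rw [Matrix.dotProduct_mulVec, ← Matrix.mulVec_transpose]
        set y := (Matrix.of f₀)ᵀ *ᵥ x with hy
        have hy0 : y ≠ 0 := by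
          intro hy0
          apply hx
          have hsum : ∑ i, x i • f₀ i = 0 := by
            funext l
            have := congrFun hy0 l
            rw [hy] at this
            simpa [Matrix.mulVec, dotProduct, Matrix.transpose_apply, Finset.sum_apply,
              mul_comm] using this
          funext i
          exact Fintype.linearIndependent_iff.mp hf₀ind x hsum i
        have : 0 ≤ y ⬝ᵥ y := dot_nonneg y
        rcases this.lt_or_eq with hlt | heq
        · exact hlt
        · exact absurd (dotProduct_self_eq_zero.mp heq.symm) hy0
    -- maximize the Gram determinant over all tuples from V
    haveI : Nonempty {x // x ∈ V} := ⟨⟨v₀, hv₀⟩⟩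
    obtain ⟨g₀, -, hg₀max⟩ := Finset.exists_max_image
      (Finset.univ : Finset (Fin (m'+1) → {x // x ∈ V}))
      (fun g => det (Matrix.of (fun j => ((g j : Fin d → ℝ))) *
        (Matrix.of (fun j => ((g j : Fin d → ℝ))))ᵀ)) Finset.univ_nonempty
    set F : Fin (m'+1) → (Fin d → ℝ) := fun j => ((g₀ j : Fin d → ℝ)) with hF
    set Fm : Matrix (Fin (m'+1)) (Fin d) ℝ := Matrix.of F with hFm
    set G : Matrix (Fin (m'+1)) (Fin (m'+1)) ℝ := Fm * Fmᵀ with hG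
    set D : ℝ := det G with hD
    have hmax : ∀ g : Fin (m'+1) → {x // x ∈ V},
        det (Matrix.of (fun j => ((g j : Fin d → ℝ))) *
          (Matrix.of (fun j => ((g j : Fin d → ℝ))))ᵀ) ≤ D :=
      fun g => hg₀max g (Finset.mem_univ g)
    have hDpos : 0 < D := by
      have h1 := hmax (fun j => ⟨f₀ j, hf₀V j⟩)
      exact lt_of_lt_of_le hpos.det_pos h1
    have hFinj : Function.Injective F := by
      intro a b hab
      by_contra hne
      have hrows : G a = G b := by
        funext c
        have h1 : G a c = F a ⬝ᵥ F c := S9.gram_apply F a c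
        have h2 : G b c = F b ⬝ᵥ F c := S9.gram_apply F b c
        rw [h1, h2, hab]
      have : D = 0 := Matrix.det_zero_of_row_eq hne hrows
      exact hDpos.ne' this
    set U : Finset (Fin d → ℝ) := Finset.image F Finset.univ with hU
    have hUV : U ⊆ V := by
      intro u hu
      obtain ⟨j, -, rfl⟩ := Finset.mem_image.mp hu
      exact (g₀ j).2
    have hUcard : U.card = m' + 1 := by
      rw [hU, Finset.card_image_of_injective _ hFinj, Finset.card_univ, Fintype.card_fin]
    have hUne : U.Nonempty := ⟨F 0, Finset.mem_image_of_mem F (Finset.mem_univ 0)⟩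
    have hUspan : (U : Set (Fin d → ℝ)) = Set.range F := by
      rw [hU, Finset.coe_image, Finset.coe_univ, Set.image_univ]
    refine ⟨U, hUV, hUne, le_of_eq hUcard, ?_⟩
    intro v hv w hvw hworth P hPherm hPP hrank
    have hsym : Pᵀ = P := by rw [← conjT P]; exact hPherm
    set Q : Matrix (Fin d) (Fin d) ℝ := 1 - P with hQ
    have hQsym : Qᵀ = Q := by rw [hQ, Matrix.transpose_sub, Matrix.transpose_one, hsym]
    have hQQ : Q * Q = Q := by
      have e1 : (1 - P) * (1 - P) = 1 - P - P + P * P := by noncomm_ring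
      rw [hQ, e1, hPP]; abel
    set A : Matrix (Fin (m'+1)) (Fin (m'+1)) ℝ := Fm * P * Fmᵀ with hA
    set B : Matrix (Fin (m'+1)) (Fin (m'+1)) ℝ := Fm * Q * Fmᵀ with hB
    have hPQ1 : P + Q = 1 := by rw [hQ]; abel
    have hGAB : G = A + B := by
      rw [hA, hB, ← Matrix.add_mul, ← Matrix.mul_add, hPQ1, Matrix.mul_one, hG]
    have hDunit : IsUnit G.det := isUnit_iff_ne_zero.mpr hDpos.ne'
    set R : Matrix (Fin (m'+1)) (Fin (m'+1)) ℝ := G⁻¹ with hR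
    have hGR : G * R = 1 := Matrix.mul_nonsing_inv _ hDunit
    have hRG : R * G = 1 := Matrix.nonsing_inv_mul _ hDunit
    have hGsym : Gᵀ = G := by
      ext a b
      rw [Matrix.transpose_apply]
      rw [show G b a = F b ⬝ᵥ F a from S9.gram_apply F b a,
        show G a b = F a ⬝ᵥ F b from S9.gram_apply F a b]
      exact dotProduct_comm _ _
    have hRsym : Rᵀ = R := by rw [hR, Matrix.transpose_nonsing_inv, hGsym]
    -- A is PSD
    have hAPSD' : A = (Fm * P) * (Fm * P)ᵀ := by
      have e : (Fm * P) * (Fm * P)ᵀ = Fm * (P * P) * Fmᵀ := by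
        rw [Matrix.transpose_mul, hsym]
        simp only [Matrix.mul_assoc]
      rw [e, hPP, hA]
    have htrA_nonneg : 0 ≤ Matrix.trace A := by
      rw [hAPSD']; exact trace_self_transpose_nonneg _
    have htrA_sum : Matrix.trace A = ∑ j, F j ⬝ᵥ (P *ᵥ F j) := by
      simp only [hA, hFm, Matrix.trace, Matrix.diag_apply, Matrix.mul_apply,
        Matrix.transpose_apply, dotProduct, Matrix.mulVec, Matrix.of_apply,
        Finset.sum_mul, Finset.mul_sum]
      rw [Finset.sum_congr rfl (fun j _ => Finset.sum_comm)]
      refine Finset.sum_congr rfl fun j _ => Finset.sum_congr rfl fun s _ =>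
        Finset.sum_congr rfl fun a _ => by ring
    -- the diagonal-maximizing index of R
    obtain ⟨istar, -, histar⟩ := Finset.exists_max_image
      (Finset.univ : Finset (Fin (m'+1))) (fun i => R i i) Finset.univ_nonempty
    -- orthogonal projection of v on the span of the other rows
    obtain ⟨w', hw'mem, hw'orth⟩ := S9.exists_proj m' (F ∘ istar.succAbove) v
    -- exchange (volume maximality)
    have hcomp : (fun j => ((Function.update g₀ istar ⟨v, hv⟩ j : (Fin d → ℝ))))
        = Function.update F istar v := by
      funext j
      rcases eq_or_ne j istar with rfl | hj
      · rw [Function.update_self, Function.update_self]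
      · rw [Function.update_of_ne hj, Function.update_of_ne hj]
    have hswap : det (Matrix.of (Function.update F istar v) *
        (Matrix.of (Function.update F istar v))ᵀ) ≤ D := by
      have h1 := hmax (Function.update g₀ istar ⟨v, hv⟩)
      rwa [hcomp] at h1
    have hHsA : (Function.update F istar v) ∘ istar.succAbove = F ∘ istar.succAbove := by
      funext j
      exact Function.update_of_ne (Fin.succAbove_ne istar j) v F
    have hmaster : det (Matrix.of (Function.update F istar v) *
          (Matrix.of (Function.update F istar v))ᵀ)
        = (w' ⬝ᵥ w') * det ((Matrix.of (Function.update F istar v) *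
            (Matrix.of (Function.update F istar v))ᵀ).submatrix istar.succAbove
            istar.succAbove) := by
      apply S9.master
      · rw [Function.update_self, hHsA]
        exact hw'mem
      · intro j
        rw [Function.update_of_ne (Fin.succAbove_ne istar j)]
        exact hw'orth j
    set dM : ℝ := det (G.submatrix istar.succAbove istar.succAbove) with hdM
    have hminor : ((Matrix.of (Function.update F istar v)) *
          (Matrix.of (Function.update F istar v))ᵀ).submatrix istar.succAbove istar.succAbove
        = G.submatrix istar.succAbove istar.succAbove := by
      ext a b
      rw [Matrix.submatrix_apply, Matrix.submatrix_apply, S9.gram_apply]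
      rw [show G (istar.succAbove a) (istar.succAbove b)
          = F (istar.succAbove a) ⬝ᵥ F (istar.succAbove b) from S9.gram_apply F _ _]
      rw [Function.update_of_ne (Fin.succAbove_ne istar a),
        Function.update_of_ne (Fin.succAbove_ne istar b)]
    have hswap2 : (w' ⬝ᵥ w') * dM ≤ D := by
      rw [hdM, ← hminor, ← hmaster]
      exact hswap
    have hdM0 : 0 ≤ dM := by
      have hsub : G.submatrix istar.succAbove istar.succAbove
          = Matrix.of (F ∘ istar.succAbove) * (Matrix.of (F ∘ istar.succAbove))ᵀ := by
        ext a b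
        rw [Matrix.submatrix_apply, S9.gram_apply,
          show G (istar.succAbove a) (istar.succAbove b)
            = F (istar.succAbove a) ⬝ᵥ F (istar.succAbove b) from S9.gram_apply F _ _]
        rfl
      rw [hdM, hsub]
      exact S9.det_gram_nonneg _
    have hadj : G.adjugate istar istar = dM := by
      rw [Matrix.adjugate_apply]
      rw [S9.det_single_row (G.updateRow istar (Pi.single istar 1)) istar 1 ?_]
      · rw [one_mul, hdM]
        congr 1
        ext a b
        rw [Matrix.submatrix_apply, Matrix.updateRow_ne (Fin.succAbove_ne istar a),
          Matrix.submatrix_apply]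
      · intro j
        rw [Matrix.updateRow_self]
        simp [Pi.single_apply]
    have hRdiag : R istar istar = dM / D := by
      rw [hR, Matrix.inv_def, Matrix.smul_apply, hadj, Ring.inverse_eq_inv, smul_eq_mul, hD]
      rw [div_eq_inv_mul]
    have htrR : Matrix.trace R ≤ ((m' + 1 : ℕ) : ℝ) * R istar istar := by
      have h1 : Matrix.trace R = ∑ i, R i i := rfl
      have h2 : ∑ i : Fin (m'+1), R i i ≤ ∑ _i : Fin (m'+1), R istar istar :=
        Finset.sum_le_sum fun i _ => histar i (Finset.mem_univ i)
      rw [h1]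
      refine le_trans h2 ?_
      rw [Finset.sum_const, Finset.card_univ, Fintype.card_fin, nsmul_eq_mul]
    have hspanU : Submodule.span ℝ (U : Set (Fin d → ℝ)) = Submodule.span ℝ (Set.range F) := by
      rw [hUspan]
    have hWq : w ⬝ᵥ w ≤ w' ⬝ᵥ w' := by
      have hx : v - w' ∈ Submodule.span ℝ (U : Set (Fin d → ℝ)) := by
        rw [hspanU]
        exact Submodule.span_mono (Set.range_comp_subset_range _ _) hw'mem
      have h1 := S9.residual_min _ v w (v - w') hvw hworth hx
      have h2 : v - (v - w') = w' := by abel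
      rwa [h2] at h1
    have hLHS1 : w ⬝ᵥ (P *ᵥ w) = (P *ᵥ w) ⬝ᵥ (P *ᵥ w) := S9.dot_P_self P hsym hPP w
    have hLHS_nonneg : 0 ≤ w ⬝ᵥ (P *ᵥ w) := by rw [hLHS1]; exact S9.dot_nonneg _
    have hLHS2 : w ⬝ᵥ (P *ᵥ w) ≤ w ⬝ᵥ w := by
      have hcs := S9.dot_sq_le (P *ᵥ w) w
      have hid : (P *ᵥ w) ⬝ᵥ w = (P *ᵥ w) ⬝ᵥ (P *ᵥ w) := by
        rw [dotProduct_comm, hLHS1]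
      rw [hid] at hcs
      have ha : 0 ≤ (P *ᵥ w) ⬝ᵥ (P *ᵥ w) := S9.dot_nonneg _
      have hw2 : 0 ≤ w ⬝ᵥ w := S9.dot_nonneg _
      rw [hLHS1]
      nlinarith [hcs, ha, hw2]
    have hWα : (w ⬝ᵥ w) * R istar istar ≤ 1 := by
      rw [hRdiag]
      have h6 : (w ⬝ᵥ w) * dM ≤ D :=
        le_trans (mul_le_mul_of_nonneg_right hWq hdM0) hswap2
      rw [mul_div_assoc']
      exact (div_le_one hDpos).mpr h6
    -- trace of B * R is at most k - 1
    set M₀ : Matrix (Fin d) (Fin d) ℝ := Fmᵀ * (R * Fm) with hM₀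
    have hM₀idem : M₀ * M₀ = M₀ := by
      have e1 : M₀ * M₀ = Fmᵀ * ((R * (Fm * Fmᵀ)) * (R * Fm)) := by
        rw [hM₀]; simp only [Matrix.mul_assoc]
      rw [e1, ← hG]
      rw [show R * G * (R * Fm) = (R * G) * R * Fm from by simp only [Matrix.mul_assoc]]
      rw [hRG, Matrix.one_mul, hM₀]
    have hM₀sym : M₀ᵀ = M₀ := by
      rw [hM₀, Matrix.transpose_mul, Matrix.transpose_mul, Matrix.transpose_transpose, hRsym]
      simp only [Matrix.mul_assoc]
    have htrQ : Matrix.trace Q = (k : ℝ) - 1 := by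
      rw [hQ, Matrix.trace_sub, Matrix.trace_one, trace_idem P hPherm hPP, hrank]
      have hcast : ((d - k + 1 : ℕ) : ℝ) = (d : ℝ) - k + 1 := by
        rw [Nat.cast_add, Nat.cast_sub hkd.le, Nat.cast_one]
      rw [hcast]
      simp [Fintype.card_fin]
      ring
    have htrBR : Matrix.trace (B * R) ≤ (k : ℝ) - 1 := by
      have e2 : Matrix.trace (B * R) = Matrix.trace (M₀ * Q) := by
        rw [hB, hM₀]
        calc Matrix.trace (Fm * Q * Fmᵀ * R) = Matrix.trace ((Fm * Q) * (Fmᵀ * R)) := by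
              simp only [Matrix.mul_assoc]
          _ = Matrix.trace ((Fmᵀ * R) * (Fm * Q)) := Matrix.trace_mul_comm _ _
          _ = Matrix.trace ((Fmᵀ * (R * Fm)) * Q) := by simp only [Matrix.mul_assoc]
      have e3 : Matrix.trace (M₀ * Q) ≤ Matrix.trace Q := by
        have hsplit : Matrix.trace ((1 - M₀) * Q) = Matrix.trace Q - Matrix.trace (M₀ * Q) := by
          rw [Matrix.sub_mul, Matrix.one_mul]
          exact Matrix.trace_sub _ _
        set N : Matrix (Fin d) (Fin d) ℝ := 1 - M₀ with hN
        have hNidem : N * N = N := by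
          have e4 : (1 - M₀) * (1 - M₀) = 1 - M₀ - M₀ + M₀ * M₀ := by noncomm_ring
          rw [hN, e4, hM₀idem]; abel
        have hNsym : Nᵀ = N := by
          rw [hN, Matrix.transpose_sub, Matrix.transpose_one, hM₀sym]
        have key : Matrix.trace (N * Q) = Matrix.trace ((N * Q) * (N * Q)ᵀ) := by
          rw [Matrix.transpose_mul, hNsym, hQsym]
          calc Matrix.trace (N * Q) = Matrix.trace ((N * N) * (Q * Q)) := by rw [hNidem, hQQ]
            _ = Matrix.trace ((N * Q * Q) * N) := by
                rw [show (N * N) * (Q * Q) = N * (N * Q * Q) from by simp only [Matrix.mul_assoc]]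
                exact Matrix.trace_mul_comm _ _
            _ = Matrix.trace (N * Q * (Q * N)) := by simp only [Matrix.mul_assoc]
        have hpos2 : 0 ≤ Matrix.trace ((1 - M₀) * Q) := by
          rw [show ((1 : Matrix (Fin d) (Fin d) ℝ) - M₀) * Q = N * Q from by rw [hN]]
          rw [key]
          exact trace_self_transpose_nonneg _
        linarith
      rw [e2]
      linarith [e3, le_of_eq htrQ]
    have htrGR : Matrix.trace (G * R) = ((m' + 1 : ℕ) : ℝ) := by
      rw [hGR, Matrix.trace_one]
      simp
    have htrAR : ((m' + 1 : ℕ) : ℝ) - ((k : ℝ) - 1) ≤ Matrix.trace (A * R) := by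
      have hArw : A * R = G * R - B * R := by
        rw [hGAB]; noncomm_ring
      rw [hArw, Matrix.trace_sub, htrGR]
      linarith
    -- Cauchy–Schwarz chain
    have hApsd : A.PosSemidef := by
      rw [hAPSD', ← conjT]
      exact Matrix.posSemidef_self_mul_conjTranspose _
    set Y := (open scoped MatrixOrder in CFC.sqrt A) with hY
    have hYY : Y * Y = A := open scoped MatrixOrder in CFC.sqrt_mul_sqrt_self A hApsd.nonneg
    have hYsym : Yᵀ = Y := by rw [← conjT]; exact open scoped MatrixOrder in (CFC.sqrt_nonneg A).posSemidef.1
    have hCS := trace_CS Y (Y * R)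
    have c1 : Matrix.trace (Y * (Y * R)) = Matrix.trace (A * R) := by
      rw [← Matrix.mul_assoc, hYY]
    have c2eq : Matrix.trace (Y * Yᵀ) = Matrix.trace A := by rw [hYsym, hYY]
    have c3 : Matrix.trace ((Y * R) * (Y * R)ᵀ) = Matrix.trace (A * (R * R)) := by
      rw [Matrix.transpose_mul, hYsym, hRsym]
      calc Matrix.trace (Y * R * (R * Y)) = Matrix.trace ((Y * R * R) * Y) := by
            simp only [Matrix.mul_assoc]
        _ = Matrix.trace (Y * (Y * R * R)) := Matrix.trace_mul_comm _ _
        _ = Matrix.trace (A * (R * R)) := by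
            rw [show Y * (Y * R * R) = (Y * Y) * (R * R) from by simp only [Matrix.mul_assoc], hYY]
    rw [c1, c2eq, c3] at hCS
    have hARR : Matrix.trace (A * (R * R)) ≤ Matrix.trace R := by
      have hsplit : A * (R * R) = G * (R * R) - B * (R * R) := by rw [hGAB]; noncomm_ring
      have h4 : Matrix.trace (G * (R * R)) = Matrix.trace R := by
        rw [show G * (R * R) = (G * R) * R from by simp only [Matrix.mul_assoc], hGR,
          Matrix.one_mul]
      have hBmul : (Fm * Q) * (Q * Fmᵀ) = B := by
        rw [show (Fm * Q) * (Q * Fmᵀ) = Fm * (Q * Q) * Fmᵀ from by simp only [Matrix.mul_assoc],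
          hQQ, hB]
      have h5 : 0 ≤ Matrix.trace (B * (R * R)) := by
        have hZ : Matrix.trace (B * (R * R))
            = Matrix.trace ((R * (Fm * Q)) * (R * (Fm * Q))ᵀ) := by
          rw [Matrix.transpose_mul, Matrix.transpose_mul, hQsym, hRsym]
          calc Matrix.trace (B * (R * R)) = Matrix.trace ((B * R) * R) := by
                simp only [Matrix.mul_assoc]
            _ = Matrix.trace (R * (B * R)) := Matrix.trace_mul_comm _ _
            _ = Matrix.trace ((R * (Fm * Q)) * ((Q * Fmᵀ) * R)) := by
                rw [← hBmul]; simp only [Matrix.mul_assoc]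
        rw [hZ]
        exact trace_self_transpose_nonneg _
      rw [hsplit, Matrix.trace_sub, h4]
      linarith
    -- final combination
    have hkr : (1:ℝ) ≤ (k:ℝ) := by exact_mod_cast hk1
    have hmk : 2*(k:ℝ) + 1 ≤ ((m'+1:ℕ):ℝ) := by exact_mod_cast hm
    set mr : ℝ := ((m'+1:ℕ):ℝ) with hmrdef
    have hmkpos : (0:ℝ) < mr - k + 1 := by rw [hmrdef]; linarith
    have step1 : (mr - k + 1)^2 ≤ (Matrix.trace (A*R))^2 := by
      have h7 : mr - k + 1 ≤ Matrix.trace (A*R) := by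
        rw [hmrdef]; linarith [htrAR]
      nlinarith [h7, hmkpos]
    have step13 : (mr - k + 1)^2 ≤ Matrix.trace A * Matrix.trace R := by
      calc (mr - k + 1)^2 ≤ (Matrix.trace (A*R))^2 := step1
        _ ≤ Matrix.trace A * Matrix.trace (A * (R*R)) := hCS
        _ ≤ Matrix.trace A * Matrix.trace R := mul_le_mul_of_nonneg_left hARR htrA_nonneg
    have hαnn : 0 ≤ R istar istar := by
      rw [hRdiag]
      exact div_nonneg hdM0 hDpos.le
    have main : (w ⬝ᵥ (P *ᵥ w)) * (mr - k + 1)^2 ≤ mr * Matrix.trace A := by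
      have s1 : (w ⬝ᵥ (P *ᵥ w)) * (mr - k + 1)^2 ≤ (w ⬝ᵥ w) * (mr - k + 1)^2 :=
        mul_le_mul_of_nonneg_right hLHS2 (by positivity)
      have s2 : (w ⬝ᵥ w) * (mr - k + 1)^2 ≤ (w ⬝ᵥ w) * (Matrix.trace A * Matrix.trace R) :=
        mul_le_mul_of_nonneg_left step13 (S9.dot_nonneg w)
      have s3 : Matrix.trace A * Matrix.trace R ≤ Matrix.trace A * (mr * R istar istar) := by
        refine mul_le_mul_of_nonneg_left ?_ htrA_nonneg
        rw [hmrdef]; exact htrR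
      have s4 : (w ⬝ᵥ w) * (Matrix.trace A * Matrix.trace R)
          ≤ (w ⬝ᵥ w) * (Matrix.trace A * (mr * R istar istar)) :=
        mul_le_mul_of_nonneg_left s3 (S9.dot_nonneg w)
      have s5 : (w ⬝ᵥ w) * (Matrix.trace A * (mr * R istar istar))
          = (mr * Matrix.trace A) * ((w ⬝ᵥ w) * R istar istar) := by ring
      have s6 : (mr * Matrix.trace A) * ((w ⬝ᵥ w) * R istar istar)
          ≤ (mr * Matrix.trace A) * 1 := by
        refine mul_le_mul_of_nonneg_left hWα ?_
        refine mul_nonneg ?_ htrA_nonneg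
        rw [hmrdef]; positivity
      have s7 := s5.le
      have s8 := s5.ge
      linarith [s1, s2, s4, s6]
    have harith := arith k (m'+1) hk1 hm
    rw [frob_outer, frob_smul, frob_sum]
    simp only [frob_outer]
    have hsum : ∑ u ∈ U, u ⬝ᵥ (P *ᵥ u) = Matrix.trace A := by
      rw [htrA_sum, hU]
      rw [Finset.sum_image (fun x _ y _ h => hFinj h)]
    rw [hsum, hUcard]
    set c2 : ℝ := ((m'+1:ℕ):ℝ) ^ ((2*(k:ℝ))/((m'+1:ℕ):ℝ)) with hc2def
    have hc2nn : (0:ℝ) ≤ c2 := by rw [hc2def]; positivity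
    have hmrpos : (0:ℝ) < mr := by rw [hmrdef]; positivity
    have harith' : mr^2 ≤ 2 * c2 * (mr - k + 1)^2 := by
      rw [hmrdef, hc2def]; exact harith
    have final1 : (w ⬝ᵥ (P *ᵥ w)) * mr^2 ≤ 2 * c2 * (mr * Matrix.trace A) := by
      calc (w ⬝ᵥ (P *ᵥ w)) * mr^2 ≤ (w ⬝ᵥ (P *ᵥ w)) * (2 * c2 * (mr - k + 1)^2) :=
            mul_le_mul_of_nonneg_left harith' hLHS_nonneg
        _ = 2 * c2 * ((w ⬝ᵥ (P *ᵥ w)) * (mr - k + 1)^2) := by ring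
        _ ≤ 2 * c2 * (mr * Matrix.trace A) :=
            mul_le_mul_of_nonneg_left main (by positivity)
    have goal' : w ⬝ᵥ (P *ᵥ w) ≤ 2 * c2 * mr⁻¹ * Matrix.trace A := by
      rw [show 2 * c2 * mr⁻¹ * Matrix.trace A = (2 * c2 * (mr * Matrix.trace A)) / mr^2 from by
        field_simp]
      rw [le_div_iff₀ (by positivity)]
      exact final1
    exact goal'
end
end

section
/- Let M ∈ ℝ^{m×m} be an upper triangular matrix (M_{ℓ,j} = 0 for ℓ > j) satisfying Σ_{ℓ=i}^{j} M_{ℓ,j}² ≤ M_{i,i}² for all 1 ≤ i ≤ j ≤ m. Then for every integer k with 1 ≤ k < m/2, one has M_{m,m}² ≤ 2·m^{2k/m} · (1/m)·Σ_{i=k}^{m} σ_i(M)². -/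
/-!
STATEMENT 10: Let M ∈ ℝ^{m×m} be upper triangular (M_{ℓ,j} = 0 for ℓ > j) with
Σ_{ℓ=i}^{j} M_{ℓ,j}² ≤ M_{i,i}² for all 1 ≤ i ≤ j ≤ m. Then for every integer k
with 1 ≤ k < m/2, M_{m,m}² ≤ 2·m^{2k/m} · (1/m)·Σ_{i=k}^{m} σ_i(M)².

The singular values σ_1 ≥ … ≥ σ_m ≥ 0 are encoded as a nonnegative antitone family
`σ` whose squares enumerate (via a permutation) the eigenvalues of `Mᴴ * M = Mᵀ M`.
The 1-indexed sum Σ_{i=k}^{m} is over 0-indexed positions with `k - 1 ≤ position`.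
-/

open Matrix Finset

noncomputable section

lemma sigma_bound (m : ℕ) (M : Matrix (Fin m) (Fin m) ℝ)
    (σ : Fin m → ℝ) (hσ0 : ∀ i, 0 ≤ σ i) (hσanti : Antitone σ)
    (e : Equiv.Perm (Fin m))
    (hσ : ∀ i, (σ i) ^ 2 = (Matrix.isHermitian_conjTranspose_mul_self M).eigenvalues (e i))
    (i : Fin m) :
    σ i ^ 2 ≤ ∑ l ∈ Finset.univ.filter (fun l : Fin m => (i:ℕ) ≤ (l:ℕ)), ∑ j, M l j ^ 2 := by
  classical
  set hH := Matrix.isHermitian_conjTranspose_mul_self M with hHdef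
  set V : Fin m → (Fin m → ℝ) := fun j => ⇑(hH.eigenvectorBasis (e j)) with hV
  have hmV : ∀ j, (Mᴴ * M) *ᵥ V j = (σ j ^ 2) • V j := by
    intro j; rw [hσ j]; exact hH.mulVec_eigenvectorBasis (e j)
  have hortho : ∀ a b, (V a) ⬝ᵥ (V b) = if a = b then 1 else 0 := by
    intro a b
    have := orthonormal_iff_ite.mp hH.eigenvectorBasis.orthonormal (e a) (e b)
    rw [EuclideanSpace.inner_eq_star_dotProduct] at this
    simp [EquivLike.apply_eq_iff_eq] at this
    rw [dotProduct_comm]; exact this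
  have hi1 : (i:ℕ) + 1 ≤ m := i.2
  let a : Fin ((i:ℕ)+1) → (Fin m → ℝ) := fun j => M *ᵥ V (Fin.castLE hi1 j)
  let g : (Fin ((i:ℕ)+1) → ℝ) →ₗ[ℝ] (Fin (i:ℕ) → ℝ) :=
    { toFun := fun c l => ∑ j, c j * a j (Fin.castLE (le_of_lt i.2) l)
      map_add' := by
        intro c d; funext l; simp [add_mul, Finset.sum_add_distrib]
      map_smul' := by
        intro r c; funext l; simp [Finset.mul_sum, mul_assoc] }
  have hker : LinearMap.ker g ≠ ⊥ := by
    apply LinearMap.ker_ne_bot_of_finrank_lt (K := ℝ)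
    simp [Module.finrank_pi]
  obtain ⟨c, hcker, hc0⟩ := (Submodule.ne_bot_iff _).mp hker
  have hgc : ∀ l : Fin (i:ℕ), ∑ j, c j * a j (Fin.castLE (le_of_lt i.2) l) = 0 := by
    intro l
    have h2 := LinearMap.mem_ker.mp hcker
    exact congrFun h2 l
  set x : Fin m → ℝ := ∑ j, c j • V (Fin.castLE hi1 j) with hx
  have hxapp : ∀ t, x t = ∑ j, c j * V (Fin.castLE hi1 j) t := by
    intro t; rw [hx]; simp [Finset.sum_apply]
  have hMx : ∀ l, (M *ᵥ x) l = ∑ j, c j * a j l := by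
    intro l
    simp only [Matrix.mulVec, dotProduct]
    calc ∑ t, M l t * x t = ∑ t, ∑ j, M l t * (c j * V (Fin.castLE hi1 j) t) := by
          refine Finset.sum_congr rfl fun t _ => ?_
          rw [hxapp t, Finset.mul_sum]
        _ = ∑ j, ∑ t, M l t * (c j * V (Fin.castLE hi1 j) t) := Finset.sum_comm
        _ = ∑ j, c j * ∑ t, M l t * V (Fin.castLE hi1 j) t := by
          refine Finset.sum_congr rfl fun j _ => ?_
          rw [Finset.mul_sum]; exact Finset.sum_congr rfl fun t _ => by ring
        _ = _ := rfl
  have hzero : ∀ l : Fin m, (l:ℕ) < (i:ℕ) → (M *ᵥ x) l = 0 := by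
    intro l hl
    have h3 := hgc ⟨(l:ℕ), hl⟩
    have hcast : Fin.castLE (le_of_lt i.2) (⟨(l:ℕ), hl⟩ : Fin (i:ℕ)) = l := by
      apply Fin.ext; rfl
    rw [hMx l, ← hcast]
    exact h3
  have hquad : ∑ l, ((M *ᵥ x) l)^2 = x ⬝ᵥ ((Mᴴ * M) *ᵥ x) := by
    have hMH : Mᴴ = Mᵀ := by ext p q; simp [Matrix.conjTranspose_apply]
    rw [← Matrix.mulVec_mulVec, hMH, dotProduct_mulVec, Matrix.vecMul_transpose]
    simp [dotProduct, pow_two]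
  have hdot : ∀ u w : Fin ((i:ℕ)+1) → ℝ,
      (∑ j, u j • V (Fin.castLE hi1 j)) ⬝ᵥ (∑ j, w j • V (Fin.castLE hi1 j)) = ∑ j, u j * w j := by
    intro u w
    simp only [dotProduct, Finset.sum_apply, Pi.smul_apply, smul_eq_mul]
    have h8 : ∀ t : Fin m, (∑ a, u a * V (Fin.castLE hi1 a) t) * (∑ b, w b * V (Fin.castLE hi1 b) t)
        = ∑ a, ∑ b, (u a * w b) * (V (Fin.castLE hi1 a) t * V (Fin.castLE hi1 b) t) := by
      intro t; rw [Finset.sum_mul_sum]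
      exact Finset.sum_congr rfl fun p _ => Finset.sum_congr rfl fun q _ => by ring
    calc ∑ t, (∑ a, u a * V (Fin.castLE hi1 a) t) * (∑ b, w b * V (Fin.castLE hi1 b) t)
        = ∑ t, ∑ p, ∑ q, (u p * w q) * (V (Fin.castLE hi1 p) t * V (Fin.castLE hi1 q) t) :=
          Finset.sum_congr rfl fun t _ => h8 t
      _ = ∑ p, ∑ q, ∑ t, (u p * w q) * (V (Fin.castLE hi1 p) t * V (Fin.castLE hi1 q) t) := by
          rw [Finset.sum_comm]
          exact Finset.sum_congr rfl fun p _ => Finset.sum_comm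
      _ = ∑ p, ∑ q, (u p * w q) * ((V (Fin.castLE hi1 p)) ⬝ᵥ (V (Fin.castLE hi1 q))) := by
          refine Finset.sum_congr rfl fun p _ => Finset.sum_congr rfl fun q _ => ?_
          rw [dotProduct, Finset.mul_sum]
      _ = ∑ p, u p * w p := by
          refine Finset.sum_congr rfl fun p _ => ?_
          rw [Finset.sum_eq_single p]
          · rw [hortho]; simp
          · intro q _ hq
            rw [hortho]
            have hnq : ¬ (Fin.castLE hi1 p = Fin.castLE hi1 q) :=
              fun h => hq (Fin.castLE_inj.mp h).symm
            rw [if_neg hnq, mul_zero]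
          · simp
  have hHx : (Mᴴ * M) *ᵥ x = ∑ j, (c j * σ (Fin.castLE hi1 j) ^ 2) • V (Fin.castLE hi1 j) := by
    rw [hx, ← Matrix.mulVecLin_apply, map_sum]
    refine Finset.sum_congr rfl fun j _ => ?_
    rw [_root_.map_smul, Matrix.mulVecLin_apply, hmV, smul_smul]
  have hxHx : x ⬝ᵥ ((Mᴴ * M) *ᵥ x) = ∑ j, c j^2 * σ (Fin.castLE hi1 j) ^ 2 := by
    rw [hHx, hx, hdot]
    exact Finset.sum_congr rfl fun j _ => by ring
  have hxx : ∑ t, x t ^ 2 = ∑ j, c j ^2 := by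
    have h6 : x ⬝ᵥ x = ∑ j, c j * c j := by rw [hx, hdot]
    calc ∑ t, x t^2 = x ⬝ᵥ x := by simp [dotProduct, pow_two]
      _ = ∑ j, c j ^2 := by rw [h6]; exact Finset.sum_congr rfl fun j _ => (pow_two _).symm
  have hs : 0 < ∑ j, c j ^ 2 := by
    have ⟨j, hj⟩ := Function.ne_iff.mp hc0
    exact Finset.sum_pos' (fun t _ => sq_nonneg _)
      ⟨j, Finset.mem_univ j, (sq_nonneg (c j)).lt_of_ne' (pow_ne_zero 2 hj)⟩
  have hlow : σ i ^2 * (∑ j, c j^2) ≤ x ⬝ᵥ ((Mᴴ * M) *ᵥ x) := by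
    rw [hxHx, Finset.mul_sum]
    refine Finset.sum_le_sum fun j _ => ?_
    have hle : σ i ≤ σ (Fin.castLE hi1 j) := by
      apply hσanti
      rw [Fin.le_def]
      exact Nat.lt_succ_iff.mp j.2
    have h4 : σ i ^ 2 ≤ σ (Fin.castLE hi1 j) ^ 2 := by nlinarith [hσ0 i]
    nlinarith [sq_nonneg (c j)]
  have hup : x ⬝ᵥ ((Mᴴ * M) *ᵥ x) ≤
      (∑ l ∈ Finset.univ.filter (fun l : Fin m => (i:ℕ) ≤ (l:ℕ)), ∑ t, M l t ^ 2) * (∑ j, c j ^2) := by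
    rw [← hquad]
    have hsplit : ∑ l, ((M *ᵥ x) l)^2
        = ∑ l ∈ Finset.univ.filter (fun l : Fin m => (i:ℕ) ≤ (l:ℕ)), ((M *ᵥ x) l)^2 := by
      rw [← Finset.sum_filter_add_sum_filter_not Finset.univ (fun l : Fin m => (i:ℕ) ≤ (l:ℕ))]
      have h5 : ∑ l ∈ Finset.univ.filter (fun l : Fin m => ¬ ((i:ℕ) ≤ (l:ℕ))), ((M *ᵥ x) l)^2 = 0 := by
        refine Finset.sum_eq_zero fun l hl => ?_
        simp only [Finset.mem_filter, not_le] at hl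
        rw [hzero l hl.2]; ring
      rw [h5, add_zero]
    rw [hsplit, Finset.sum_mul]
    refine Finset.sum_le_sum fun l _ => ?_
    have hcs := Finset.sum_mul_sq_le_sq_mul_sq Finset.univ (fun t => M l t) x
    have h7 : (M *ᵥ x) l = ∑ t, M l t * x t := rfl
    rw [h7, ← hxx]
    exact hcs
  exact le_of_mul_le_mul_right (hlow.trans hup) hs

lemma frob_bound (m : ℕ) (M : Matrix (Fin m) (Fin m) ℝ)
    (hupper : ∀ l j : Fin m, j < l → M l j = 0)
    (hcol : ∀ i j : Fin m, i ≤ j → (∑ l ∈ Finset.Icc i j, (M l j) ^ 2) ≤ (M i i) ^ 2)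
    (i : Fin m) :
    (∑ l ∈ Finset.univ.filter (fun l : Fin m => (i:ℕ) ≤ (l:ℕ)), ∑ j, M l j ^ 2)
      ≤ (m:ℝ) * (M i i)^2 := by
  rw [Finset.sum_comm]
  have hcount : ∀ j : Fin m, (∑ l ∈ Finset.univ.filter (fun l : Fin m => (i:ℕ) ≤ (l:ℕ)), M l j ^ 2)
      ≤ (M i i)^2 := by
    intro j
    by_cases hij : i ≤ j
    · have hsub : Finset.Icc i j ⊆ Finset.univ.filter (fun l : Fin m => (i:ℕ) ≤ (l:ℕ)) := by
        intro l hl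
        simp only [Finset.mem_filter, Finset.mem_univ, true_and]
        exact (Finset.mem_Icc.mp hl).1
      have heq : (∑ l ∈ Finset.univ.filter (fun l : Fin m => (i:ℕ) ≤ (l:ℕ)), M l j ^ 2)
          = ∑ l ∈ Finset.Icc i j, M l j ^ 2 := by
        refine (Finset.sum_subset hsub fun l hlu hl => ?_).symm
        have : j < l := by
          simp only [Finset.mem_filter, Finset.mem_univ, true_and] at hlu
          rw [Finset.mem_Icc, not_and] at hl
          exact lt_of_not_ge (hl hlu)
        rw [hupper l j this]; ring
      rw [heq]; exact hcol i j hij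
    · have heq : (∑ l ∈ Finset.univ.filter (fun l : Fin m => (i:ℕ) ≤ (l:ℕ)), M l j ^ 2) = 0 := by
        refine Finset.sum_eq_zero fun l hl => ?_
        simp only [Finset.mem_filter, Finset.mem_univ, true_and] at hl
        have : j < l := lt_of_lt_of_le (lt_of_not_ge hij) hl
        rw [hupper l j this]; ring
      rw [heq]; exact sq_nonneg _
  calc (∑ j : Fin m, ∑ l ∈ Finset.univ.filter (fun l : Fin m => (i:ℕ) ≤ (l:ℕ)), M l j ^ 2)
      ≤ ∑ _j : Fin m, (M i i)^2 := Finset.sum_le_sum fun j _ => hcount j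
    _ = (m:ℝ) * (M i i)^2 := by
        rw [Finset.sum_const, Finset.card_univ, Fintype.card_fin, nsmul_eq_mul]

lemma diag_mono (m : ℕ) (M : Matrix (Fin m) (Fin m) ℝ)
    (hcol : ∀ i j : Fin m, i ≤ j → (∑ l ∈ Finset.Icc i j, (M l j) ^ 2) ≤ (M i i) ^ 2)
    (i j : Fin m) (hij : i ≤ j) : (M j j)^2 ≤ (M i i)^2 :=
  le_trans (Finset.single_le_sum (f := fun l => M l j ^2) (fun l _ => sq_nonneg _)
    (Finset.mem_Icc.mpr ⟨hij, le_refl j⟩)) (hcol i j hij)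

lemma prod_sigma_sq (m : ℕ) (M : Matrix (Fin m) (Fin m) ℝ)
    (hupper : ∀ l j : Fin m, j < l → M l j = 0)
    (σ : Fin m → ℝ) (e : Equiv.Perm (Fin m))
    (hσ : ∀ i, (σ i) ^ 2 = (Matrix.isHermitian_conjTranspose_mul_self M).eigenvalues (e i)) :
    ∏ i, σ i ^ 2 = ∏ i, (M i i)^2 := by
  have h1 : ∏ i, σ i ^2 = ∏ i, (Matrix.isHermitian_conjTranspose_mul_self M).eigenvalues i := by
    rw [Finset.prod_congr rfl (fun i _ => hσ i)]
    exact Equiv.prod_comp e _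
  have h2 := (Matrix.isHermitian_conjTranspose_mul_self M).det_eq_prod_eigenvalues
  have hdet : det M = ∏ i, M i i :=
    Matrix.det_of_upperTriangular (fun p q h => hupper p q h)
  have h3 : det (Mᴴ * M) = (∏ i, M i i) * (∏ i, M i i) := by
    rw [Matrix.det_mul, Matrix.det_conjTranspose, hdet]
    simp
  norm_cast at h2
  simp only [RCLike.ofReal_real_eq_id, id_eq] at h2
  rw [h1, ← h2]
  rw [h3, ← Finset.prod_mul_distrib]
  exact Finset.prod_congr rfl fun i _ => (pow_two _).symm

theorem upper_triangular_last_diagonal_entry_bound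
    (m : ℕ) (M : Matrix (Fin m) (Fin m) ℝ)
    (hupper : ∀ l j : Fin m, j < l → M l j = 0)
    (hcol : ∀ i j : Fin m, i ≤ j → (∑ l ∈ Finset.Icc i j, (M l j) ^ 2) ≤ (M i i) ^ 2)
    (σ : Fin m → ℝ) (hσ0 : ∀ i, 0 ≤ σ i) (hσanti : Antitone σ)
    (e : Equiv.Perm (Fin m))
    (hσ : ∀ i, (σ i) ^ 2 = (Matrix.isHermitian_conjTranspose_mul_self M).eigenvalues (e i))
    (k : ℕ) (hk1 : 1 ≤ k) (hkm : 2 * k < m) :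
    (M ⟨m - 1, by omega⟩ ⟨m - 1, by omega⟩) ^ 2 ≤
      2 * (m:ℝ) ^ ((2 * (k:ℝ)) / (m:ℝ)) * ((1:ℝ) / m) *
        ∑ i ∈ Finset.univ.filter (fun i : Fin m => k - 1 ≤ (i:ℕ)), (σ i) ^ 2 := by
  classical
  have hm : 0 < m := by omega
  have hm1 : (1:ℝ) < (m:ℝ) := by exact_mod_cast (by omega : 1 < m)
  set last : Fin m := ⟨m - 1, by omega⟩ with hlastdef
  show (M last last) ^ 2 ≤ _
  set F := Finset.univ.filter (fun i : Fin m => k - 1 ≤ (i:ℕ)) with hF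
  set S := ∑ i ∈ F, (σ i) ^ 2 with hSdef
  have hS0 : 0 ≤ S := Finset.sum_nonneg fun i _ => sq_nonneg _
  -- cardinalities
  have hFcard : F.card = m - k + 1 := by
    have : F = Finset.Ici (⟨k - 1, by omega⟩ : Fin m) := by
      ext i
      simp [hF, Fin.le_def]
    rw [this, Fin.card_Ici]
    show m - (k-1) = m - k + 1
    omega
  set n : ℕ := m - k + 1 with hn
  have hnpos : 0 < n := by omega
  have hnR : (0:ℝ) < (n:ℝ) := by exact_mod_cast hnpos
  -- trivial case
  rcases eq_or_lt_of_le (sq_nonneg (M last last)) with ht | ht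
  · rw [← ht]
    have h2 : (0:ℝ) ≤ 2 * (m:ℝ) ^ ((2 * (k:ℝ)) / (m:ℝ)) * ((1:ℝ) / m) := by positivity
    exact mul_nonneg h2 hS0
  -- main case
  set t2 : ℝ := (M last last)^2 with ht2
  have hdge : ∀ i : Fin m, t2 ≤ (M i i)^2 := by
    intro i
    refine diag_mono m M hcol i last ?_
    rw [Fin.le_def]
    exact Nat.le_sub_one_of_lt i.2
  have hdpos : ∀ i : Fin m, 0 < (M i i)^2 := fun i => lt_of_lt_of_le ht (hdge i)
  set G := Finset.univ.filter (fun i : Fin m => ¬ (k - 1 ≤ (i:ℕ))) with hG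
  have hGcard : G.card = k - 1 := by
    have := Finset.card_filter_add_card_filter_not
      (s := (Finset.univ : Finset (Fin m))) (p := fun i : Fin m => k - 1 ≤ (i:ℕ))
    rw [Finset.card_univ, Fintype.card_fin] at this
    have h9 : F.card + G.card = m := this
    omega
  set P := ∏ i ∈ F, σ i ^ 2 with hP
  have hP0 : 0 ≤ P := Finset.prod_nonneg fun i _ => sq_nonneg _
  have hGd : 0 < ∏ i ∈ G, (M i i)^2 := Finset.prod_pos fun i _ => hdpos i
  -- key product inequality : t2 ^ n ≤ P * m ^ (k-1)
  have hkey : t2 ^ n ≤ P * (m:ℝ) ^ (k - 1) := by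
    have hsplit : P * ∏ i ∈ G, σ i ^2 = ∏ i, σ i ^2 :=
      Finset.prod_filter_mul_prod_filter_not Finset.univ _ _
    have hGle : ∏ i ∈ G, σ i ^2 ≤ ∏ i ∈ G, ((m:ℝ) * (M i i)^2) := by
      refine Finset.prod_le_prod (fun i _ => sq_nonneg _) fun i _ => ?_
      exact le_trans (sigma_bound m M σ hσ0 hσanti e hσ i) (frob_bound m M hupper hcol i)
    have hall : ∏ i, σ i ^2 = (∏ i ∈ G, (M i i)^2) * ∏ i ∈ F, (M i i)^2 := by
      rw [prod_sigma_sq m M hupper σ e hσ,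
        ← Finset.prod_filter_mul_prod_filter_not Finset.univ
          (fun i : Fin m => k - 1 ≤ (i:ℕ)) (fun i => (M i i)^2)]
      rw [mul_comm]
    have hFt : (∏ i ∈ G, (M i i)^2) * t2 ^ n ≤ ∏ i, σ i ^2 := by
      rw [hall]
      refine mul_le_mul_of_nonneg_left ?_ (le_of_lt hGd)
      calc t2 ^ n = ∏ _i ∈ F, t2 := by rw [Finset.prod_const, hFcard]
        _ ≤ ∏ i ∈ F, (M i i)^2 :=
            Finset.prod_le_prod (fun _ _ => le_of_lt ht) (fun i _ => hdge i)
    have hGmul : ∏ i ∈ G, ((m:ℝ) * (M i i)^2) = (m:ℝ)^(k-1) * ∏ i ∈ G, (M i i)^2 := by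
      rw [Finset.prod_mul_distrib, Finset.prod_const, hGcard]
    have hchain : (∏ i ∈ G, (M i i)^2) * t2 ^ n ≤ (P * (m:ℝ)^(k-1)) * ∏ i ∈ G, (M i i)^2 := by
      calc (∏ i ∈ G, (M i i)^2) * t2 ^ n ≤ ∏ i, σ i ^2 := hFt
        _ = P * ∏ i ∈ G, σ i ^2 := hsplit.symm
        _ ≤ P * ((m:ℝ)^(k-1) * ∏ i ∈ G, (M i i)^2) := by
            rw [← hGmul]; exact mul_le_mul_of_nonneg_left hGle hP0
        _ = (P * (m:ℝ)^(k-1)) * ∏ i ∈ G, (M i i)^2 := by ring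
    have hchain' : t2 ^ n * (∏ i ∈ G, (M i i)^2)
        ≤ (P * (m:ℝ)^(k-1)) * (∏ i ∈ G, (M i i)^2) := by
      calc t2 ^ n * (∏ i ∈ G, (M i i)^2) = (∏ i ∈ G, (M i i)^2) * t2 ^ n := by ring
        _ ≤ (P * (m:ℝ)^(k-1)) * (∏ i ∈ G, (M i i)^2) := hchain
    exact le_of_mul_le_mul_right hchain' hGd
  -- AM-GM
  have hAMGM : P ^ ((1:ℝ)/(n:ℝ)) ≤ S / (n:ℝ) := by
    have h1 := Real.geom_mean_le_arith_mean_weighted F (fun _ => 1/(n:ℝ)) (fun i => σ i ^2)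
      (fun i _ => by positivity) (by rw [Finset.sum_const, hFcard, nsmul_eq_mul]; field_simp) (fun i _ => sq_nonneg _)
    rw [Real.finset_prod_rpow F _ (fun i _ => sq_nonneg _) _] at h1
    calc P ^ ((1:ℝ)/(n:ℝ)) ≤ ∑ i ∈ F, (1/(n:ℝ)) * σ i ^2 := h1
      _ = S / (n:ℝ) := by rw [← Finset.mul_sum]; ring
  -- t2 ≤ (S/n) * m^((k-1)/n)
  have hstep : t2 ≤ (S / (n:ℝ)) * (m:ℝ) ^ (((k-1:ℕ):ℝ)/(n:ℝ)) := by
    have h1 : t2 = (t2 ^ n) ^ ((1:ℝ)/(n:ℝ)) := by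
      rw [← Real.rpow_natCast t2 n, ← Real.rpow_mul (le_of_lt ht)]
      rw [mul_one_div, div_self (ne_of_gt hnR), Real.rpow_one]
    have h2 : (t2 ^ n) ^ ((1:ℝ)/(n:ℝ)) ≤ (P * (m:ℝ)^(k-1)) ^ ((1:ℝ)/(n:ℝ)) :=
      Real.rpow_le_rpow (by positivity) hkey (by positivity)
    have h3 : (P * (m:ℝ)^(k-1)) ^ ((1:ℝ)/(n:ℝ))
        = P ^ ((1:ℝ)/(n:ℝ)) * ((m:ℝ)^(k-1)) ^ ((1:ℝ)/(n:ℝ)) :=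
      Real.mul_rpow hP0 (by positivity)
    have h4 : ((m:ℝ)^(k-1)) ^ ((1:ℝ)/(n:ℝ)) = (m:ℝ) ^ (((k-1:ℕ):ℝ)/(n:ℝ)) := by
      rw [← Real.rpow_natCast (m:ℝ) (k-1), ← Real.rpow_mul (by positivity)]
      ring_nf
    have h5 : 0 ≤ (m:ℝ) ^ (((k-1:ℕ):ℝ)/(n:ℝ)) := by positivity
    calc t2 = (t2 ^ n) ^ ((1:ℝ)/(n:ℝ)) := h1
      _ ≤ (P * (m:ℝ)^(k-1)) ^ ((1:ℝ)/(n:ℝ)) := h2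
      _ = P ^ ((1:ℝ)/(n:ℝ)) * (m:ℝ) ^ (((k-1:ℕ):ℝ)/(n:ℝ)) := by rw [h3, h4]
      _ ≤ (S / (n:ℝ)) * (m:ℝ) ^ (((k-1:ℕ):ℝ)/(n:ℝ)) := mul_le_mul_of_nonneg_right hAMGM h5
  -- final comparison
  have hexp : ((k-1:ℕ):ℝ)/(n:ℝ) ≤ (2*(k:ℝ))/(m:ℝ) := by
    rw [div_le_div_iff₀ hnR (by positivity)]
    have hnat : (k-1) * m ≤ 2*k*n := by
      have h1 : (k-1) * m ≤ k * m := Nat.mul_le_mul_right m (by omega)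
      have h2 : k * m ≤ 2 * k * n := by
        have : m ≤ 2 * n := by omega
        calc k * m ≤ k * (2*n) := Nat.mul_le_mul_left k this
          _ = 2 * k * n := by ring
      omega
    calc ((k-1:ℕ):ℝ) * m = (((k-1)*m : ℕ) : ℝ) := by push_cast; ring
      _ ≤ ((2*k*n : ℕ) : ℝ) := by exact_mod_cast hnat
      _ = 2*(k:ℝ)*(n:ℝ) := by push_cast; ring
  have hrpow : (m:ℝ) ^ (((k-1:ℕ):ℝ)/(n:ℝ)) ≤ (m:ℝ) ^ ((2*(k:ℝ))/(m:ℝ)) :=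
    Real.rpow_le_rpow_of_exponent_le (le_of_lt hm1) hexp
  have hm2n : (m:ℝ) ≤ 2 * (n:ℝ) := by
    have : m ≤ 2 * n := by omega
    exact_mod_cast this
  have hfac : (m:ℝ) ^ (((k-1:ℕ):ℝ)/(n:ℝ)) / (n:ℝ) ≤ 2 * (m:ℝ) ^ ((2*(k:ℝ))/(m:ℝ)) * ((1:ℝ)/m) := by
    rw [div_le_iff₀ hnR]
    have hmpos : (0:ℝ) < m := by positivity
    have hA : (0:ℝ) ≤ (m:ℝ) ^ ((2*(k:ℝ))/(m:ℝ)) := by positivity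
    have hB : (0:ℝ) ≤ (m:ℝ) ^ (((k-1:ℕ):ℝ)/(n:ℝ)) := by positivity
    rw [mul_comm (2 * (m:ℝ) ^ ((2*(k:ℝ))/(m:ℝ))) ((1:ℝ)/m)]
    rw [show ((1:ℝ)/m) * (2 * (m:ℝ) ^ ((2*(k:ℝ))/(m:ℝ))) * (n:ℝ)
        = (2*(n:ℝ)/(m:ℝ)) * (m:ℝ) ^ ((2*(k:ℝ))/(m:ℝ)) by ring]
    calc (m:ℝ) ^ (((k-1:ℕ):ℝ)/(n:ℝ)) ≤ (m:ℝ) ^ ((2*(k:ℝ))/(m:ℝ)) := hrpow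
      _ = 1 * (m:ℝ) ^ ((2*(k:ℝ))/(m:ℝ)) := by ring
      _ ≤ (2*(n:ℝ)/(m:ℝ)) * (m:ℝ) ^ ((2*(k:ℝ))/(m:ℝ)) := by
          refine mul_le_mul_of_nonneg_right ?_ hA
          rw [le_div_iff₀ hmpos]
          linarith
  calc t2 ≤ (S / (n:ℝ)) * (m:ℝ) ^ (((k-1:ℕ):ℝ)/(n:ℝ)) := hstep
    _ = ((m:ℝ) ^ (((k-1:ℕ):ℝ)/(n:ℝ)) / (n:ℝ)) * S := by ring
    _ ≤ (2 * (m:ℝ) ^ ((2*(k:ℝ))/(m:ℝ)) * ((1:ℝ)/m)) * S := mul_le_mul_of_nonneg_right hfac hS0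
    _ = 2 * (m:ℝ) ^ ((2*(k:ℝ))/(m:ℝ)) * ((1:ℝ)/m) * S := by ring
end
end

section
/- Let M ∈ ℝ^{m×m} be an upper triangular matrix (M_{ℓ,j} = 0 for ℓ > j) satisfying Σ_{ℓ=i}^{j} M_{ℓ,j}² ≤ M_{i,i}² for all 1 ≤ i ≤ j ≤ m. Then for every 1 ≤ i ≤ m one has σ_i(M)² ≤ (m−i+1)·M_{i,i}². -/
/-!
STATEMENT 11: Let M ∈ ℝ^{m×m} be upper triangular (M_{ℓ,j} = 0 for ℓ > j) with
Σ_{ℓ=i}^{j} M_{ℓ,j}² ≤ M_{i,i}² for all 1 ≤ i ≤ j ≤ m. Then for every 1 ≤ i ≤ m,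
σ_i(M)² ≤ (m−i+1)·M_{i,i}².

The singular values σ_1 ≥ … ≥ σ_m ≥ 0 are encoded as a nonnegative antitone family
`σ` whose squares enumerate (via a permutation) the eigenvalues of `Mᴴ * M = Mᵀ M`.
With 0-indexed `i : Fin m` (so the 1-indexed index is `i + 1`), the bound
`(m − (i+1) + 1)·M_{i,i}²` reads `(m − i)·M_{i,i}²`.
-/

open Matrix Finset

noncomputable section

theorem upper_triangular_singular_value_upper_bound
    (m : ℕ) (M : Matrix (Fin m) (Fin m) ℝ)
    (hupper : ∀ l j : Fin m, j < l → M l j = 0)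
    (hcol : ∀ i j : Fin m, i ≤ j → (∑ l ∈ Finset.Icc i j, (M l j) ^ 2) ≤ (M i i) ^ 2)
    (σ : Fin m → ℝ) (hσ0 : ∀ i, 0 ≤ σ i) (hσanti : Antitone σ)
    (e : Equiv.Perm (Fin m))
    (hσ : ∀ i, (σ i) ^ 2 = (Matrix.isHermitian_conjTranspose_mul_self M).eigenvalues (e i)) :
    ∀ i : Fin m, (σ i) ^ 2 ≤ ((m : ℝ) - (i : ℕ)) * (M i i) ^ 2 := by
  intro i
  classical
  have hA := Matrix.isHermitian_conjTranspose_mul_self M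
  have hmi : (i : ℕ) < m := i.isLt
  have hmiR : ((i : ℕ) : ℝ) < (m : ℝ) := by exact_mod_cast hmi
  have hRHS0 : 0 ≤ ((m : ℝ) - (i : ℕ)) * (M i i) ^ 2 :=
    mul_nonneg (by linarith) (sq_nonneg _)
  rcases (hσ0 i).eq_or_lt with h0 | hσi
  · rw [← h0]; simpa using hRHS0
  -- bridge between inner product on EuclideanSpace and dotProduct
  have hbridge : ∀ x y : EuclideanSpace ℝ (Fin m),
      (inner ℝ x y : ℝ) = (x : Fin m → ℝ) ⬝ᵥ (y : Fin m → ℝ) := by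
    intro x y
    simp [PiLp.inner_apply, dotProduct, RCLike.inner_apply, mul_comm]
  -- generic adjoint identity
  have hgen : ∀ (N : Matrix (Fin m) (Fin m) ℝ) (x y : Fin m → ℝ),
      (N *ᵥ x) ⬝ᵥ (N *ᵥ y) = x ⬝ᵥ ((Nᴴ * N) *ᵥ y) := by
    intro N x y
    rw [dotProduct_mulVec, dotProduct_mulVec, ← vecMul_vecMul]
    congr 1
    rw [show Nᴴ = Nᵀ from Matrix.conjTranspose_eq_transpose_of_trivial N, vecMul_transpose]
  have hdotMT : ∀ x y : Fin m → ℝ,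
      (Mᴴ *ᵥ x) ⬝ᵥ (Mᴴ *ᵥ y) = x ⬝ᵥ ((M * Mᴴ) *ᵥ y) := by
    intro x y
    have := hgen Mᴴ x y
    rwa [conjTranspose_conjTranspose] at this
  -- eigenvectors
  set u : Fin m → (Fin m → ℝ) := fun j => hA.eigenvectorBasis (e j) with hu
  have horthu : ∀ a b : Fin m, u a ⬝ᵥ u b = if a = b then 1 else 0 := by
    intro a b
    have h := orthonormal_iff_ite.mp (hA.eigenvectorBasis.orthonormal) (e a) (e b)
    rw [hbridge] at h
    simpa [hu, Equiv.apply_eq_iff_eq] using h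
  have heig : ∀ j : Fin m, (Mᴴ * M) *ᵥ u j = σ j ^ 2 • u j := by
    intro j
    have h := hA.mulVec_eigenvectorBasis (e j)
    rw [← hσ j] at h
    exact h
  -- normalized images
  set w : Fin m → (Fin m → ℝ) := fun j => (σ j)⁻¹ • (M *ᵥ u j) with hw
  have hwdot : ∀ a b : Fin m, a ≤ i → b ≤ i →
      w a ⬝ᵥ w b = if a = b then 1 else 0 := by
    intro a b ha hb
    have hσa : 0 < σ a := lt_of_lt_of_le hσi (hσanti ha)
    have hσb : 0 < σ b := lt_of_lt_of_le hσi (hσanti hb)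
    have h1 : w a ⬝ᵥ w b = (σ a)⁻¹ * ((σ b)⁻¹ * ((M *ᵥ u a) ⬝ᵥ (M *ᵥ u b))) := by
      simp only [hw, smul_dotProduct, dotProduct_smul, smul_eq_mul]
      ring
    rw [h1, hgen M (u a) (u b), heig b, dotProduct_smul, smul_eq_mul, horthu a b]
    rcases eq_or_ne a b with rfl | hab
    · simp only [if_pos rfl]
      field_simp
    · simp [hab]
  have hweig : ∀ j : Fin m, (M * Mᴴ) *ᵥ w j = σ j ^ 2 • w j := by
    intro j
    have h1 : (M * Mᴴ) *ᵥ (M *ᵥ u j) = M *ᵥ ((Mᴴ * M) *ᵥ u j) := by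
      rw [mulVec_mulVec, mulVec_mulVec, mul_assoc]
    rw [hw]
    simp only [mulVec_smul, h1, heig j, mulVec_smul]
    rw [smul_comm]
  -- the two subspaces
  set wE : Fin m → EuclideanSpace ℝ (Fin m) :=
    (fun j => (WithLp.equiv 2 (Fin m → ℝ)).symm (w j)) with hwE
  set V : Submodule ℝ (EuclideanSpace ℝ (Fin m)) :=
    Submodule.span ℝ (Set.range (fun j : Set.Ici i =>
      (EuclideanSpace.single (j : Fin m) (1 : ℝ)))) with hV
  set W : Submodule ℝ (EuclideanSpace ℝ (Fin m)) :=
    Submodule.span ℝ (Set.range (fun j : Set.Iic i => wE (j : Fin m))) with hW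
  have horthw : Orthonormal ℝ (fun j : Set.Iic i => wE (j : Fin m)) := by
    rw [orthonormal_iff_ite]
    intro a b
    rw [hbridge]
    by_cases hab : a = b
    · subst hab
      rw [if_pos rfl]
      have h := hwdot a a a.2 a.2
      rw [if_pos rfl] at h
      exact h
    · rw [if_neg hab]
      have hne : (a : Fin m) ≠ (b : Fin m) := fun h => hab (Subtype.ext h)
      have h := hwdot a b a.2 b.2
      rw [if_neg hne] at h
      exact h
  have hrankV : Module.finrank ℝ V = m - (i : ℕ) := by
    have h := (EuclideanSpace.orthonormal_single (𝕜 := ℝ) (ι := Fin m)).comp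
      (Subtype.val : Set.Ici i → Fin m) Subtype.val_injective
    have h2 := finrank_span_eq_card h.linearIndependent
    rw [Function.comp_def] at h2
    rw [hV, h2, Fintype.card_Ici, Fin.card_Ici]
  have hrankW : Module.finrank ℝ W = (i : ℕ) + 1 := by
    have h2 := finrank_span_eq_card horthw.linearIndependent
    rw [hW, h2, Fintype.card_Iic, Fin.card_Iic]
  -- V ∩ W contains a nonzero vector
  have hdim : 0 < Module.finrank ℝ ↥(V ⊓ W) := by
    have hsup : Module.finrank ℝ ↥(V ⊔ W) ≤ m := by
      refine le_trans (Submodule.finrank_le _) ?_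
      simp [finrank_euclideanSpace]
    have heq := Submodule.finrank_sup_add_finrank_inf_eq V W
    rw [hrankV, hrankW] at heq
    omega
  have : Nontrivial ↥(V ⊓ W) := Module.nontrivial_of_finrank_pos hdim
  obtain ⟨x, hx0⟩ := exists_ne (0 : ↥(V ⊓ W))
  have hxV : (x : EuclideanSpace ℝ (Fin m)) ∈ V := x.2.1
  have hxW : (x : EuclideanSpace ℝ (Fin m)) ∈ W := x.2.2
  have hxne : (x : EuclideanSpace ℝ (Fin m)) ≠ 0 := by
    simpa [Submodule.coe_eq_zero] using hx0
  set xv : Fin m → ℝ := (x : EuclideanSpace ℝ (Fin m)).ofLp with hxv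
  -- positivity of the norm
  have hSpos : 0 < xv ⬝ᵥ xv := by
    have hnn : 0 ≤ xv ⬝ᵥ xv := Finset.sum_nonneg fun l _ => mul_self_nonneg _
    rcases hnn.eq_or_lt with h | h
    · exfalso
      exact hxne (by have h' := (dotProduct_self_eq_zero).mp h.symm; ext l; simpa using congrFun h' l)
    · exact h
  -- representation of x in W
  obtain ⟨c, hc⟩ := (Submodule.mem_span_range_iff_exists_fun ℝ).mp hxW
  -- lower bound : σ i ^ 2 * ⟪x,x⟫ ≤ ⟪x, (M Mᴴ) x⟫
  have hxfun : xv = ∑ j : Set.Iic i, c j • w (j : Fin m) := by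
    rw [hxv, ← hc]; simp [hwE]
  have hmulsum : (M * Mᴴ) *ᵥ xv = ∑ j : Set.Iic i, (c j * σ (j : Fin m) ^ 2) • w (j : Fin m) := by
    rw [hxfun]
    have hms := map_sum (M * Mᴴ).mulVecLin (fun j : Set.Iic i => c j • w (j : Fin m)) Finset.univ
    simp only [mulVecLin_apply] at hms
    rw [hms]
    refine Finset.sum_congr rfl fun j _ => ?_
    rw [mulVec_smul, hweig, smul_smul]
  have hinner_xx : (inner ℝ (x : EuclideanSpace ℝ (Fin m)) (x : EuclideanSpace ℝ (Fin m)) : ℝ)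
      = ∑ j : Set.Iic i, c j * c j := by
    have h := horthw.inner_sum c c Finset.univ
    rw [hc] at h
    simpa using h
  have hinner_xy : (inner ℝ (x : EuclideanSpace ℝ (Fin m))
      (WithLp.toLp 2 ((M * Mᴴ) *ᵥ xv : Fin m → ℝ) : EuclideanSpace ℝ (Fin m)) : ℝ)
      = ∑ j : Set.Iic i, c j * (c j * σ (j : Fin m) ^ 2) := by
    have h2 := horthw.inner_sum c (fun j => c j * σ (j : Fin m) ^ 2) Finset.univ
    rw [hc] at h2
    have h3 : (WithLp.toLp 2 ((M * Mᴴ) *ᵥ xv : Fin m → ℝ) : EuclideanSpace ℝ (Fin m))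
        = ∑ j : Set.Iic i, (c j * σ (j : Fin m) ^ 2) • wE (j : Fin m) :=
      by rw [hmulsum, hwE]; simp [WithLp.toLp_sum]
    rw [h3]
    simpa using h2
  have hlower : σ i ^ 2 * (xv ⬝ᵥ xv) ≤ xv ⬝ᵥ ((M * Mᴴ) *ᵥ xv) := by
    have h1 : xv ⬝ᵥ xv = ∑ j : Set.Iic i, c j * c j := by
      exact (hbridge _ _).symm.trans hinner_xx
    have h2 : xv ⬝ᵥ ((M * Mᴴ) *ᵥ xv) = ∑ j : Set.Iic i, c j * (c j * σ (j : Fin m) ^ 2) := by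
      exact (hbridge _ (WithLp.toLp 2 ((M * Mᴴ) *ᵥ xv))).symm.trans hinner_xy
    rw [h1, h2, Finset.mul_sum]
    refine Finset.sum_le_sum fun j _ => ?_
    have hji : σ i ≤ σ (j : Fin m) := hσanti j.2
    have : σ i ^ 2 ≤ σ (j : Fin m) ^ 2 := by
      apply pow_le_pow_left₀ (hσ0 i) hji
    nlinarith [mul_self_nonneg (c j)]
  -- vanishing of low coordinates
  have hvanish : ∀ l : Fin m, l < i → xv l = 0 := by
    set P : Submodule ℝ (EuclideanSpace ℝ (Fin m)) :=
      { carrier := {z : EuclideanSpace ℝ (Fin m) | ∀ l : Fin m, l < i → z l = 0}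
        add_mem' := by intro a b ha hb l hl; show a l + b l = 0; rw [ha l hl, hb l hl, add_zero]
        zero_mem' := by intro l hl; rfl
        smul_mem' := by intro r a ha l hl; show r * a l = 0; rw [ha l hl, mul_zero] } with hP
    have hVP : V ≤ P := by
      rw [hV, Submodule.span_le]
      rintro z ⟨j, rfl⟩
      intro l hl
      have hne : l ≠ (j : Fin m) := ne_of_lt (lt_of_lt_of_le hl j.2)
      show (EuclideanSpace.single (j : Fin m) (1:ℝ)) l = 0
      rw [EuclideanSpace.single_apply, if_neg hne]
    exact fun l hl => hVP hxV l hl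
  -- coordinatewise upper bound for Mᴴ *ᵥ xv
  have hcoord : ∀ j : Fin m, ((Mᴴ *ᵥ xv) j) ^ 2
      ≤ (if i ≤ j then (M i i) ^ 2 * (xv ⬝ᵥ xv) else 0) := by
    intro j
    have hentry : (Mᴴ *ᵥ xv) j = ∑ l : Fin m, M l j * xv l := by
      simp [mulVec, dotProduct, conjTranspose_apply, mul_comm]
    rcases lt_or_ge j i with hj | hj
    · rw [if_neg (not_le.mpr hj), hentry]
      have : (∑ l : Fin m, M l j * xv l) = 0 := by
        refine Finset.sum_eq_zero fun l _ => ?_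
        rcases lt_or_ge l i with hl | hl
        · rw [hvanish l hl, mul_zero]
        · rw [hupper l j (lt_of_lt_of_le hj hl), zero_mul]
      rw [this]; simp
    · rw [if_pos hj, hentry]
      have hsub : (∑ l : Fin m, M l j * xv l) = ∑ l ∈ Finset.Icc i j, M l j * xv l := by
        symm
        refine Finset.sum_subset (Finset.subset_univ _) fun l _ hl => ?_
        rw [Finset.mem_Icc, not_and_or, not_le, not_le] at hl
        rcases hl with hl | hl
        · rw [hvanish l hl, mul_zero]
        · rw [hupper l j hl, zero_mul]
      rw [hsub]
      calc (∑ l ∈ Finset.Icc i j, M l j * xv l) ^ 2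
          ≤ (∑ l ∈ Finset.Icc i j, (M l j) ^ 2) * (∑ l ∈ Finset.Icc i j, (xv l) ^ 2) :=
            Finset.sum_mul_sq_le_sq_mul_sq _ _ _
        _ ≤ (M i i) ^ 2 * (xv ⬝ᵥ xv) := by
            apply mul_le_mul (hcol i j hj)
            · refine Finset.sum_le_sum_of_subset_of_nonneg (Finset.subset_univ _)
                (fun l _ _ => sq_nonneg _) |>.trans ?_
              apply le_of_eq
              simp [dotProduct, sq]
            · exact Finset.sum_nonneg fun l _ => sq_nonneg _
            · exact sq_nonneg _
  have hupperB : xv ⬝ᵥ ((M * Mᴴ) *ᵥ xv) ≤ ((m : ℝ) - (i : ℕ)) * (M i i) ^ 2 * (xv ⬝ᵥ xv) := by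
    have h1 : xv ⬝ᵥ ((M * Mᴴ) *ᵥ xv) = (Mᴴ *ᵥ xv) ⬝ᵥ (Mᴴ *ᵥ xv) := (hdotMT xv xv).symm
    have h2 : (Mᴴ *ᵥ xv) ⬝ᵥ (Mᴴ *ᵥ xv) = ∑ j : Fin m, ((Mᴴ *ᵥ xv) j) ^ 2 := by
      simp [dotProduct, sq]
    rw [h1, h2]
    calc (∑ j : Fin m, ((Mᴴ *ᵥ xv) j) ^ 2)
        ≤ ∑ j : Fin m, (if i ≤ j then (M i i) ^ 2 * (xv ⬝ᵥ xv) else 0) :=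
          Finset.sum_le_sum fun j _ => hcoord j
      _ = ((m : ℝ) - (i : ℕ)) * (M i i) ^ 2 * (xv ⬝ᵥ xv) := by
          rw [← Finset.sum_filter]
          have hfil : Finset.univ.filter (fun j : Fin m => i ≤ j) = Finset.Ici i := by
            ext l; simp [Finset.mem_Ici]
          rw [hfil, Finset.sum_const, Fin.card_Ici, nsmul_eq_mul]
          rw [Nat.cast_sub hmi.le]
          ring
  -- conclude
  have hfinal : σ i ^ 2 * (xv ⬝ᵥ xv) ≤ ((m : ℝ) - (i : ℕ)) * (M i i) ^ 2 * (xv ⬝ᵥ xv) :=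
    le_trans hlower hupperB
  exact le_of_mul_le_mul_right (by linarith) hSpos
end
end

section
/- Let 1 ≤ k ≤ d be integers, let α > 0, and let f be a vector k-monotone function from the positive semidefinite d×d real matrices to the nonnegative reals. Let V ⊆ ℝ^d be finite and let U ⊆ V be an α-spectral k-spanner of V. Then for every weight function s : V → [0,∞) there exists a weight function t : U → [0,∞) with Σ_{u∈U} t(u) = Σ_{v∈V} s(v) such that f( α · Σ_{u∈U} t(u) u uᵀ ) ≤ f( Σ_{v∈V} s(v) v vᵀ ). -/
/-!
STATEMENT 12: Let 1 ≤ k ≤ d, α > 0, and let f be a vector k-monotone function from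
PSD d×d real matrices to [0,∞). Let V ⊆ ℝ^d be finite and U ⊆ V an α-spectral
k-spanner of V. Then for every weight function s : V → [0,∞) there is a weight
function t : U → [0,∞) with Σ_{u∈U} t(u) = Σ_{v∈V} s(v) and
f( α · Σ_{u∈U} t(u) u uᵀ ) ≤ f( Σ_{v∈V} s(v) v vᵀ ).
-/

open Matrix Finset

noncomputable section

/-- `U` is an `α`-spectral `k`-spanner of `V`. -/
def IsSpectralKSpanner {d : ℕ} (k : ℕ) (α : ℝ) (V U : Finset (Fin d → ℝ)) : Prop :=
  U ⊆ V ∧ ∀ v ∈ V, ∃ μ : (Fin d → ℝ) → ℝ,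
    (∀ u, 0 ≤ μ u) ∧ (∑ u ∈ U, μ u) = 1 ∧
    PrecK k (outer v) (α • ∑ u ∈ U, μ u • outer u)

/-- `f` is vector `k`-monotone: for PSD `A`, `B` and `v` with `v vᵀ ⪯_k B`,
`f(A + v vᵀ) ≥ f(A + B)`. -/
def VectorKMonotone {d : ℕ} (k : ℕ) (f : Matrix (Fin d) (Fin d) ℝ → ℝ) : Prop :=
  ∀ A B : Matrix (Fin d) (Fin d) ℝ, A.PosSemidef → B.PosSemidef →
    ∀ v : Fin d → ℝ, PrecK k (outer v) B → f (A + B) ≤ f (A + outer v)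

lemma outer_posSemidef {d : ℕ} (v : Fin d → ℝ) : (outer v).PosSemidef := by
  rw [posSemidef_iff_dotProduct_mulVec]
  constructor
  · ext i j; simp [outer, vecMulVec, Matrix.IsHermitian, mul_comm]
  · intro x
    have h : (outer v).mulVec x = (v ⬝ᵥ x) • v := by
      ext i
      simp only [outer, vecMulVec, mulVec, dotProduct, Pi.smul_apply, smul_eq_mul,
        Matrix.of_apply, Finset.sum_mul]
      exact Finset.sum_congr rfl fun j _ => by ring
    rw [h]
    have : x ⬝ᵥ ((v ⬝ᵥ x) • v) = (v ⬝ᵥ x) * (v ⬝ᵥ x) := by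
      simp [dotProduct_smul, dotProduct_comm]
    simpa [this] using mul_self_nonneg (v ⬝ᵥ x)

lemma outer_smul {d : ℕ} (c : ℝ) (v : Fin d → ℝ) : outer (c • v) = (c * c) • outer v := by
  ext i j; simp [outer, vecMulVec]; ring

lemma frob_smul {d : ℕ} (c : ℝ) (A B : Matrix (Fin d) (Fin d) ℝ) :
    frob (c • A) B = c * frob A B := by
  simp [frob, Finset.mul_sum, mul_assoc]

lemma psd_smul {d : ℕ} {c : ℝ} (hc : 0 ≤ c) {A : Matrix (Fin d) (Fin d) ℝ}
    (hA : A.PosSemidef) : (c • A).PosSemidef := by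
  rw [posSemidef_iff_dotProduct_mulVec]
  refine ⟨by rw [Matrix.IsHermitian, conjTranspose_smul, star_trivial, hA.1.eq], fun x => ?_⟩
  rw [smul_mulVec, dotProduct_smul, smul_eq_mul]
  exact mul_nonneg hc (hA.dotProduct_mulVec_nonneg x)

lemma psd_sum {d : ℕ} {ι : Type*} (s : Finset ι) (g : ι → Matrix (Fin d) (Fin d) ℝ)
    (hg : ∀ u ∈ s, (g u).PosSemidef) : (∑ u ∈ s, g u).PosSemidef := by
  classical
  induction s using Finset.induction with
  | empty => simpa using Matrix.PosSemidef.zero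
  | insert _ _ hx ih =>
    rw [Finset.sum_insert hx]
    exact (hg _ (Finset.mem_insert_self _ _)).add
      (ih fun u hu => hg u (Finset.mem_insert_of_mem hu))

lemma key {d k : ℕ} {f : Matrix (Fin d) (Fin d) ℝ → ℝ} (hfmono : VectorKMonotone k f)
    {α : ℝ} (hα : 0 < α) (U : Finset (Fin d → ℝ)) (s : (Fin d → ℝ) → ℝ)
    (hs : ∀ v, 0 ≤ s v) (μ : (Fin d → ℝ) → (Fin d → ℝ) → ℝ)
    (W : Finset (Fin d → ℝ))
    (hμ : ∀ v ∈ W, (∀ u, 0 ≤ μ v u) ∧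
      PrecK k (outer v) (α • ∑ u ∈ U, μ v u • outer u)) :
    ∀ A : Matrix (Fin d) (Fin d) ℝ, A.PosSemidef →
      f (A + ∑ v ∈ W, s v • (α • ∑ u ∈ U, μ v u • outer u)) ≤
      f (A + ∑ v ∈ W, s v • outer v) := by
  classical
  induction W using Finset.induction with
  | empty => intro A hA; simp
  | @insert v W' hv ih =>
    intro A hA
    have hμv := hμ v (Finset.mem_insert_self _ _)
    have hμ' : ∀ w ∈ W', (∀ u, 0 ≤ μ w u) ∧
        PrecK k (outer w) (α • ∑ u ∈ U, μ w u • outer u) :=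
      fun w hw => hμ w (Finset.mem_insert_of_mem hw)
    set M : Matrix (Fin d) (Fin d) ℝ := α • ∑ u ∈ U, μ v u • outer u with hM
    have hMpsd : M.PosSemidef :=
      psd_smul hα.le (psd_sum _ _ fun u _ => psd_smul (hμv.1 u) (outer_posSemidef u))
    have hSpsd : (∑ w ∈ W', s w • (α • ∑ u ∈ U, μ w u • outer u)).PosSemidef := by
      refine psd_sum _ _ fun w hw => psd_smul (hs w) (psd_smul hα.le (psd_sum _ _ ?_))
      exact fun u _ => psd_smul ((hμ' w hw).1 u) (outer_posSemidef u)
    -- step 1: replace v's contribution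
    have houter : outer (Real.sqrt (s v) • v) = s v • outer v := by
      rw [outer_smul, Real.mul_self_sqrt (hs v)]
    have hprec : PrecK k (outer (Real.sqrt (s v) • v)) (s v • M) := by
      intro P hP1 hP2 hP3
      rw [houter, frob_smul, frob_smul]
      exact mul_le_mul_of_nonneg_left (hμv.2 P hP1 hP2 hP3) (hs v)
    have step1 :
        f ((A + ∑ w ∈ W', s w • (α • ∑ u ∈ U, μ w u • outer u)) + s v • M) ≤
        f ((A + ∑ w ∈ W', s w • (α • ∑ u ∈ U, μ w u • outer u)) + s v • outer v) := by
      have := hfmono (A + ∑ w ∈ W', s w • (α • ∑ u ∈ U, μ w u • outer u)) (s v • M)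
        (hA.add hSpsd) (psd_smul (hs v) hMpsd) (Real.sqrt (s v) • v) hprec
      rwa [houter] at this
    have step2 :
        f ((A + s v • outer v) + ∑ w ∈ W', s w • (α • ∑ u ∈ U, μ w u • outer u)) ≤
        f ((A + s v • outer v) + ∑ w ∈ W', s w • outer w) :=
      ih hμ' (A + s v • outer v) (hA.add (psd_smul (hs v) (outer_posSemidef v)))
    rw [Finset.sum_insert hv, Finset.sum_insert hv]
    have e1 : A + (s v • M + ∑ w ∈ W', s w • (α • ∑ u ∈ U, μ w u • outer u)) =
        (A + ∑ w ∈ W', s w • (α • ∑ u ∈ U, μ w u • outer u)) + s v • M := by abel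
    have e2 : (A + ∑ w ∈ W', s w • (α • ∑ u ∈ U, μ w u • outer u)) + s v • outer v =
        (A + s v • outer v) + ∑ w ∈ W', s w • (α • ∑ u ∈ U, μ w u • outer u) := by abel
    have e3 : (A + s v • outer v) + ∑ w ∈ W', s w • outer w =
        A + (s v • outer v + ∑ w ∈ W', s w • outer w) := by abel
    rw [e1, ← e3]
    calc f (_ + s v • M) ≤ _ := step1
      _ = _ := by rw [e2]
      _ ≤ _ := step2

theorem spanner_coreset_for_fractional_budgeted_minimization
    {d : ℕ} (k : ℕ) (hk1 : 1 ≤ k) (hkd : k ≤ d) (α : ℝ) (hα : 0 < α)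
    (f : Matrix (Fin d) (Fin d) ℝ → ℝ)
    (hf0 : ∀ A : Matrix (Fin d) (Fin d) ℝ, A.PosSemidef → 0 ≤ f A)
    (hfmono : VectorKMonotone k f)
    (V U : Finset (Fin d → ℝ)) (hUV : IsSpectralKSpanner k α V U)
    (s : (Fin d → ℝ) → ℝ) (hs : ∀ v, 0 ≤ s v) :
    ∃ t : (Fin d → ℝ) → ℝ, (∀ u, 0 ≤ t u) ∧
      (∑ u ∈ U, t u) = (∑ v ∈ V, s v) ∧
      f (α • ∑ u ∈ U, t u • outer u) ≤ f (∑ v ∈ V, s v • outer v) := by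
  classical
  choose! μ hμ0 hμ1 hμ2 using hUV.2
  refine ⟨fun u => ∑ v ∈ V, s v * μ v u, ?_, ?_, ?_⟩
  · exact fun u => Finset.sum_nonneg fun v hv => mul_nonneg (hs v) (hμ0 v hv u)
  · rw [Finset.sum_comm]
    refine Finset.sum_congr rfl fun v hv => ?_
    rw [← Finset.mul_sum, hμ1 v hv, mul_one]
  · have hmat : (α • ∑ u ∈ U, (∑ v ∈ V, s v * μ v u) • outer u) =
        ∑ v ∈ V, s v • (α • ∑ u ∈ U, μ v u • outer u) := by
      simp only [Finset.smul_sum, smul_smul]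
      rw [Finset.sum_comm]
      refine Finset.sum_congr rfl fun u _ => ?_
      rw [← Finset.sum_smul]
      congr 1
      rw [Finset.mul_sum]
      exact Finset.sum_congr rfl fun v _ => by ring
    rw [hmat]
    have := key hfmono hα U s hs μ V (fun v hv => ⟨hμ0 v hv, hμ2 v hv⟩) 0
      Matrix.PosSemidef.zero
    simpa using this
end
end

section
/- Let V ⊆ ℝ^d be a finite set of vectors, let 1 ≤ k ≤ d be an integer, and let x : V → [0,∞) be weights with Σ_{v∈V} x(v) = k. Then there exist vectors w_1, …, w_k ∈ V (not necessarily distinct) such that det_k( Σ_{i=1}^{k} w_i w_iᵀ ) ≥ e^{−k} · det_k( Σ_{v∈V} x(v) v vᵀ ). -/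
/-!
STATEMENT 13: Let V ⊆ ℝ^d be finite, 1 ≤ k ≤ d, and x : V → [0,∞) with
Σ_{v∈V} x(v) = k. Then there exist vectors w_1, …, w_k ∈ V (not necessarily
distinct) with det_k( Σ_{i=1}^{k} w_i w_iᵀ ) ≥ e^{−k} · det_k( Σ_{v∈V} x(v) v vᵀ ).
-/

open Matrix Finset

noncomputable section

/-- `detk k A` is the sum of all `k × k` principal minors of `A`. -/
def detk {d : ℕ} (k : ℕ) (A : Matrix (Fin d) (Fin d) ℝ) : ℝ :=
  ∑ S ∈ Finset.powersetCard k (Finset.univ : Finset (Fin d)),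
    Matrix.det (A.submatrix (fun i : {x // x ∈ S} => (i : Fin d))
      (fun j : {x // x ∈ S} => (j : Fin d)))

namespace RoundAux

variable {d : ℕ}

lemma outer_posSemidef (v : Fin d → ℝ) : (outer v).PosSemidef := by
  have h := Matrix.posSemidef_conjTranspose_mul_self (Matrix.replicateRow Unit v)
  rwa [Matrix.conjTranspose_replicateRow, star_trivial, ← Matrix.vecMulVec_eq] at h

lemma sum_outer_posSemidef {ι : Type*} (s : Finset ι) (g : ι → (Fin d → ℝ)) :
    (∑ i ∈ s, outer (g i)).PosSemidef :=
  Finset.sum_induction _ _ (fun _ _ ha hb => ha.add hb) Matrix.PosSemidef.zero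
    (fun i _ => outer_posSemidef (g i))

lemma det_nonneg' {n : Type*} [Fintype n] [DecidableEq n] {M : Matrix n n ℝ}
    (hM : M.PosSemidef) : 0 ≤ M.det := by
  rw [hM.1.det_eq_prod_eigenvalues]
  exact Finset.prod_nonneg fun i _ => hM.eigenvalues_nonneg i

lemma detk_nonneg {A : Matrix (Fin d) (Fin d) ℝ} (hA : A.PosSemidef) (k : ℕ) :
    0 ≤ detk k A :=
  Finset.sum_nonneg fun _ _ => det_nonneg' (hA.submatrix _)

/-- A single principal minor. -/
def minor (S : Finset (Fin d)) (A : Matrix (Fin d) (Fin d) ℝ) : ℝ :=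
  Matrix.det (A.submatrix (fun i : {x // x ∈ S} => (i : Fin d))
    (fun j : {x // x ∈ S} => (j : Fin d)))

lemma detk_eq_sum_minor (k : ℕ) (A : Matrix (Fin d) (Fin d) ℝ) :
    detk k A = ∑ S ∈ Finset.powersetCard k (Finset.univ : Finset (Fin d)), minor S A := rfl

lemma minor_expand (S : Finset (Fin d)) (W : Finset (Fin d → ℝ)) (c : (Fin d → ℝ) → ℝ) :
    minor S (∑ v ∈ W, c v • outer v)
      = ∑ r ∈ Fintype.piFinset (fun _ : {x // x ∈ S} => W),
          (∏ i : {x // x ∈ S}, (c (r i) * r i (i : Fin d)))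
            * (Matrix.of (fun i j : {x // x ∈ S} => r i (j : Fin d))).det := by
  classical
  have hrow : ((∑ v ∈ W, c v • outer v).submatrix (fun i : {x // x ∈ S} => (i : Fin d))
        (fun j : {x // x ∈ S} => (j : Fin d)))
      = fun i : {x // x ∈ S} => ∑ v ∈ W,
          (c v * v (i : Fin d)) • (fun j : {x // x ∈ S} => v (j : Fin d)) := by
    funext i j
    simp [outer, Matrix.sum_apply, Matrix.vecMulVec_apply, Pi.smul_apply, mul_assoc]
  unfold minor
  rw [hrow]
  show ((Matrix.detRowAlternating :
      ({x // x ∈ S} → ℝ) [⋀^{x // x ∈ S}]→ₗ[ℝ] ℝ).toMultilinearMap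
      fun i : {x // x ∈ S} => ∑ v ∈ W,
        (c v * v (i : Fin d)) • (fun j : {x // x ∈ S} => v (j : Fin d))) = _
  rw [(Matrix.detRowAlternating :
      ({x // x ∈ S} → ℝ) [⋀^{x // x ∈ S}]→ₗ[ℝ] ℝ).toMultilinearMap.map_sum_finset
      (fun (i : {x // x ∈ S}) (v : Fin d → ℝ) =>
        (c v * v (i : Fin d)) • (fun j : {x // x ∈ S} => v (j : Fin d)))
      (fun _ => W)]
  refine Finset.sum_congr rfl fun r _ => ?_
  rw [MultilinearMap.map_smul_univ]
  rfl

lemma det_rows_zero (S : Finset (Fin d)) (r : {x // x ∈ S} → (Fin d → ℝ))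
    (h : ¬ Function.Injective r) :
    (Matrix.of (fun i j : {x // x ∈ S} => r i (j : Fin d))).det = 0 := by
  obtain ⟨i, i', hii', hne⟩ := Function.not_injective_iff.mp h
  exact Matrix.det_zero_of_row_eq hne (by funext j; simp [hii'])

lemma regroup {α β : Type*} [Fintype α] [DecidableEq α] [DecidableEq β]
    (W : Finset β) (k : ℕ) (hk : Fintype.card α = k) (F : (α → β) → ℝ)
    (hF : ∀ r, ¬ Function.Injective r → F r = 0) :
    ∑ r ∈ Fintype.piFinset (fun _ : α => W), F r
      = ∑ T ∈ W.powersetCard k, ∑ r ∈ Fintype.piFinset (fun _ : α => T), F r := by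
  classical
  have key : ∀ (U : Finset β), ∑ r ∈ Fintype.piFinset (fun _ : α => U), F r
      = ∑ r ∈ (Fintype.piFinset (fun _ : α => U)).filter
          (fun r => Function.Injective r), F r := by
    intro U
    rw [← Finset.sum_filter_add_sum_filter_not (Fintype.piFinset (fun _ : α => U))
      (fun r => Function.Injective r) F, add_eq_left]
    exact Finset.sum_eq_zero fun r hr => hF r (Finset.mem_filter.mp hr).2
  rw [key, Finset.sum_congr rfl (fun T _ => key T), Finset.sum_sigma']
  refine (Finset.sum_nbij' (fun p => p.2) (fun r => ⟨Finset.univ.image r, r⟩)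
    ?_ ?_ ?_ ?_ ?_).symm
  · rintro ⟨T, r⟩ hp
    simp only [Finset.mem_sigma, Finset.mem_filter, Fintype.mem_piFinset,
      Finset.mem_powersetCard] at hp ⊢
    exact ⟨fun i => hp.1.1 (hp.2.1 i), hp.2.2⟩
  · intro r hr
    simp only [Finset.mem_filter, Fintype.mem_piFinset] at hr
    simp only [Finset.mem_sigma, Finset.mem_filter, Fintype.mem_piFinset,
      Finset.mem_powersetCard]
    refine ⟨⟨?_, ?_⟩, ?_, ?_⟩
    · intro v hv
      obtain ⟨i, _, rfl⟩ := Finset.mem_image.mp hv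
      exact hr.1 i
    · rw [Finset.card_image_of_injective _ hr.2, Finset.card_univ, hk]
    · exact fun i => Finset.mem_image_of_mem r (Finset.mem_univ i)
    · exact hr.2
  · rintro ⟨T, r⟩ hp
    simp only [Finset.mem_sigma, Finset.mem_filter, Fintype.mem_piFinset,
      Finset.mem_powersetCard] at hp
    have himg : Finset.univ.image r = T := by
      refine Finset.eq_of_subset_of_card_le ?_ ?_
      · intro v hv
        obtain ⟨i, _, rfl⟩ := Finset.mem_image.mp hv
        exact hp.2.1 i
      · rw [Finset.card_image_of_injective _ hp.2.2, Finset.card_univ, hk, hp.1.2]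
    exact Sigma.ext himg (by simp)
  · intro r _; rfl
  · intro p _; rfl

lemma transfer {α β : Type*} [Fintype α] [DecidableEq α] [DecidableEq β]
    (T : Finset β) (hT : T.card = Fintype.card α) (c : β → ℝ) (G : (α → β) → ℝ)
    (hG : ∀ r, ¬ Function.Injective r → G r = 0) :
    ∑ r ∈ Fintype.piFinset (fun _ : α => T), (∏ i, c (r i)) * G r
      = (∏ v ∈ T, c v) * ∑ r ∈ Fintype.piFinset (fun _ : α => T), G r := by
  classical
  rw [Finset.mul_sum]
  refine Finset.sum_congr rfl fun r hr => ?_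
  by_cases h : Function.Injective r
  · have himg : Finset.univ.image r = T := by
      refine Finset.eq_of_subset_of_card_le ?_ ?_
      · intro v hv
        obtain ⟨i, _, rfl⟩ := Finset.mem_image.mp hv
        exact (Fintype.mem_piFinset.mp hr) i
      · rw [Finset.card_image_of_injective _ h, Finset.card_univ, hT]
    have hprod : ∏ v ∈ T, c v = ∏ i : α, c (r i) := by
      rw [← himg, Finset.prod_image (fun a _ b _ hab => h hab)]
    rw [hprod]
  · rw [hG r h, mul_zero, mul_zero]

lemma minor_frac {k : ℕ} (S : Finset (Fin d)) (hS : S.card = k)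
    (V : Finset (Fin d → ℝ)) (x : (Fin d → ℝ) → ℝ) :
    minor S (∑ v ∈ V, x v • outer v)
      = ∑ T ∈ V.powersetCard k, (∏ v ∈ T, x v) * minor S (∑ v ∈ T, outer v) := by
  classical
  have hcard : Fintype.card {y // y ∈ S} = k := by rw [Fintype.card_coe, hS]
  rw [minor_expand]
  rw [regroup V k hcard
    (fun r => (∏ i : {x // x ∈ S}, (x (r i) * r i (i : Fin d)))
      * (Matrix.of (fun i j : {x // x ∈ S} => r i (j : Fin d))).det)
    (fun r hr => by rw [det_rows_zero S r hr, mul_zero])]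
  refine Finset.sum_congr rfl fun T hT => ?_
  have hTcard : T.card = Fintype.card {y // y ∈ S} :=
    ((Finset.mem_powersetCard.mp hT).2).trans hcard.symm
  have step1 : ∑ r ∈ Fintype.piFinset (fun _ : {y // y ∈ S} => T),
      (∏ i : {x // x ∈ S}, (x (r i) * r i (i : Fin d)))
        * (Matrix.of (fun i j : {x // x ∈ S} => r i (j : Fin d))).det
      = ∑ r ∈ Fintype.piFinset (fun _ : {y // y ∈ S} => T),
      (∏ i : {x // x ∈ S}, x (r i)) *
        ((∏ i : {x // x ∈ S}, r i (i : Fin d))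
          * (Matrix.of (fun i j : {x // x ∈ S} => r i (j : Fin d))).det) := by
    refine Finset.sum_congr rfl fun r _ => ?_
    rw [Finset.prod_mul_distrib, mul_assoc]
  rw [step1, transfer T hTcard x
    (fun r => (∏ i : {x // x ∈ S}, r i (i : Fin d))
      * (Matrix.of (fun i j : {x // x ∈ S} => r i (j : Fin d))).det)
    (fun r hr => by rw [det_rows_zero S r hr, mul_zero])]
  congr 1
  have := minor_expand S T (fun _ => (1 : ℝ))
  simp only [one_smul, one_mul] at this
  rw [this]

lemma detk_expand (k : ℕ) (V : Finset (Fin d → ℝ)) (x : (Fin d → ℝ) → ℝ) :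
    detk k (∑ v ∈ V, x v • outer v)
      = ∑ T ∈ V.powersetCard k, (∏ v ∈ T, x v) * detk k (∑ v ∈ T, outer v) := by
  classical
  rw [detk_eq_sum_minor]
  rw [Finset.sum_congr rfl (fun S hS =>
    minor_frac S (Finset.mem_powersetCard_univ.mp hS) V x)]
  rw [Finset.sum_comm]
  refine Finset.sum_congr rfl fun T _ => ?_
  rw [detk_eq_sum_minor, Finset.mul_sum]

lemma esymm_le_exp (V : Finset (Fin d → ℝ)) (x : (Fin d → ℝ) → ℝ) (hx : ∀ v, 0 ≤ x v)
    (k : ℕ) :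
    ∑ T ∈ V.powersetCard k, ∏ v ∈ T, x v ≤ Real.exp (∑ v ∈ V, x v) := by
  classical
  have h1 : ∑ T ∈ V.powersetCard k, ∏ v ∈ T, x v
      ≤ ∑ T ∈ V.powerset, ∏ v ∈ T, x v := by
    refine Finset.sum_le_sum_of_subset_of_nonneg ?_ ?_
    · intro T hT
      exact Finset.mem_powerset.mpr (Finset.mem_powersetCard.mp hT).1
    · exact fun T _ _ => Finset.prod_nonneg fun v _ => hx v
  have h2 : ∑ T ∈ V.powerset, ∏ v ∈ T, x v = ∏ v ∈ V, (x v + 1) := by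
    rw [Finset.prod_add]
    exact Finset.sum_congr rfl fun T _ => by simp
  have h3 : ∏ v ∈ V, (x v + 1) ≤ ∏ v ∈ V, Real.exp (x v) := by
    refine Finset.prod_le_prod (fun v _ => by linarith [hx v]) ?_
    intro v _
    have := Real.add_one_le_exp (x v)
    linarith
  rw [← Real.exp_sum] at h3
  linarith [h1, h2 ▸ h3]

end RoundAux

theorem fractional_detk_rounding
    {d : ℕ} (k : ℕ) (hk1 : 1 ≤ k) (hkd : k ≤ d)
    (V : Finset (Fin d → ℝ)) (x : (Fin d → ℝ) → ℝ) (hx : ∀ v, 0 ≤ x v)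
    (hsum : ∑ v ∈ V, x v = k) :
    ∃ w : Fin k → (Fin d → ℝ), (∀ i, w i ∈ V) ∧
      Real.exp (-(k:ℝ)) * detk k (∑ v ∈ V, x v • outer v) ≤
        detk k (∑ i, outer (w i)) := by
  classical
  have hVne : V.Nonempty := by
    rcases Finset.eq_empty_or_nonempty V with h | h
    · exfalso
      rw [h, Finset.sum_empty] at hsum
      have : (0:ℝ) < (k:ℝ) := by exact_mod_cast hk1
      linarith [hsum]
    · exact h
  have hexpand := RoundAux.detk_expand k V x
  rcases Finset.eq_empty_or_nonempty (V.powersetCard k) with hP | hP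
  · -- no k-subsets: the fractional detk is 0
    obtain ⟨v0, hv0⟩ := hVne
    refine ⟨fun _ => v0, fun _ => hv0, ?_⟩
    rw [hexpand, hP, Finset.sum_empty, mul_zero]
    exact RoundAux.detk_nonneg (RoundAux.sum_outer_posSemidef _ _) k
  · obtain ⟨T0, hT0mem, hT0max⟩ := Finset.exists_max_image (V.powersetCard k)
      (fun T => detk k (∑ v ∈ T, outer v)) hP
    have hT0card : T0.card = k := (Finset.mem_powersetCard.mp hT0mem).2
    have hT0sub : T0 ⊆ V := (Finset.mem_powersetCard.mp hT0mem).1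
    set D0 : ℝ := detk k (∑ v ∈ T0, outer v) with hD0
    have hD0nonneg : 0 ≤ D0 :=
      RoundAux.detk_nonneg (RoundAux.sum_outer_posSemidef T0 id) k
    have hbound : detk k (∑ v ∈ V, x v • outer v) ≤ Real.exp (k:ℝ) * D0 := by
      rw [hexpand]
      calc ∑ T ∈ V.powersetCard k, (∏ v ∈ T, x v) * detk k (∑ v ∈ T, outer v)
          ≤ ∑ T ∈ V.powersetCard k, (∏ v ∈ T, x v) * D0 := by
            refine Finset.sum_le_sum fun T hT => ?_
            exact mul_le_mul_of_nonneg_left (hT0max T hT)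
              (Finset.prod_nonneg fun v _ => hx v)
        _ = (∑ T ∈ V.powersetCard k, ∏ v ∈ T, x v) * D0 := by rw [Finset.sum_mul]
        _ ≤ Real.exp (k:ℝ) * D0 := by
            refine mul_le_mul_of_nonneg_right ?_ hD0nonneg
            have := RoundAux.esymm_le_exp V x hx k
            rwa [hsum] at this
    -- enumerate T0
    let e : {y // y ∈ T0} ≃ Fin k := T0.equivFinOfCardEq hT0card
    refine ⟨fun i => (e.symm i : Fin d → ℝ), fun i => hT0sub (e.symm i).2, ?_⟩
    have hsum_eq : ∑ i : Fin k, outer ((e.symm i : {y // y ∈ T0}) : Fin d → ℝ)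
        = ∑ v ∈ T0, outer v := by
      rw [← Finset.sum_coe_sort T0 (fun v => outer v)]
      exact Equiv.sum_comp e.symm (fun a : {y // y ∈ T0} => outer (a : Fin d → ℝ))
    rw [hsum_eq]
    rw [Real.exp_neg]
    rw [inv_mul_le_iff₀ (Real.exp_pos _)]
    exact hbound
end
end
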